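/- arXiv:1210.6900 — 7 statements merged into one kernel-verified Lean document; each statement's English description precedes it below -/
import Mathlib

section
/- Let R be a ring, d ≥ 1 an integer, U an R-module, and V an R-module admitting a descending chain of submodules V = V₀ ⊇ V₁ ⊇ V₂ ⊇ ⋯ such that every quotient V/V_r has finite length and the canonical map from V to the inverse limit lim_r V/V_r is an isomorphism. If Ext^d_R(U, L) = 0 for every simple R-module L isomorphic to a subquotient of V (i.e., isomorphic to S/T for submodules T ⊆ S ⊆ V), then Ext^d_R(U, V) = 0. -/
open CategoryTheory
noncomputable section
universe u
variable {R : Type u} [Ring R]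

lemma modcat_subsingleton_iff_isZero (K : ModuleCat.{u} ℤ) :
    Subsingleton K ↔ Limits.IsZero K := by
  constructor
  · intro h; exact ModuleCat.isZero_of_subsingleton K
  · intro h
    refine ⟨fun a b => ?_⟩
    have : (𝟙 K : K ⟶ K) = 0 := h.eq_of_src _ _
    calc a = (𝟙 K : K ⟶ K) a := rfl
    _ = (0 : K ⟶ K) a := by rw [this]
    _ = (0 : K ⟶ K) b := rfl
    _ = (𝟙 K : K ⟶ K) b := by rw [this]
    _ = b := rfl

lemma ext_subsingleton_iff (X : ModuleCat.{u} R) (P : ProjectiveResolution X)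
    (n : ℕ) (N : ModuleCat.{u} R) :
    Subsingleton (((Ext ℤ (ModuleCat.{u} R) (n+1)).obj (Opposite.op X)).obj N) ↔
    ∀ f : P.complex.X (n+1) ⟶ N, P.complex.d (n+2) (n+1) ≫ f = 0 →
      ∃ g : P.complex.X n ⟶ N, P.complex.d (n+1) n ≫ g = f := by
  have e := P.isoExt (R := ℤ) (n+1) N
  have h1 : Subsingleton (↑(((Ext ℤ (ModuleCat.{u} R) (n+1)).obj (Opposite.op X)).obj N)) ↔
      Subsingleton (↑((P.complex.linearYonedaObj ℤ N).homology (n+1))) :=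
    Equiv.subsingleton_congr ((forget _).mapIso e).toEquiv
  rw [h1]
  rw [modcat_subsingleton_iff_isZero]
  rw [← HomologicalComplex.exactAt_iff_isZero_homology]
  rw [HomologicalComplex.exactAt_iff' _ n (n+1) (n+2) (by simp) (by simp)]
  rw [ShortComplex.moduleCat_exact_iff]
  constructor
  · intro h f hf
    exact h f hf
  · intro h f hf
    exact h f hf

variable {X : ModuleCat.{u} R}

/-- Concrete statement that `Ext^{n+1}(X, N) = 0`, via the projective resolution `P`. -/
def EE (P : ProjectiveResolution X) (n : ℕ) (N : Type u) [AddCommGroup N] [Module R N] :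
    Prop :=
  ∀ f : ↥(P.complex.X (n+1)) →ₗ[R] N,
    (∀ x, f (P.complex.d (n+2) (n+1) x) = 0) →
    ∃ g : ↥(P.complex.X n) →ₗ[R] N, ∀ x, g (P.complex.d (n+1) n x) = f x

lemma EE_iff (P : ProjectiveResolution X) (n : ℕ) (N : Type u) [AddCommGroup N]
    [Module R N] :
    Subsingleton (((Ext ℤ (ModuleCat.{u} R) (n+1)).obj (Opposite.op X)).obj
      (ModuleCat.of R N)) ↔ EE P n N := by
  rw [ext_subsingleton_iff X P n (ModuleCat.of R N)]
  constructor
  · intro h f hf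
    obtain ⟨g, hg⟩ := h (show P.complex.X (n+1) ⟶ ModuleCat.of R N from ModuleCat.ofHom f)
      (by ext x; exact hf x)
    exact ⟨g.hom, fun x => ConcreteCategory.congr_hom hg x⟩
  · intro h f hf
    obtain ⟨g, hg⟩ := h f.hom (fun x => by simpa using ConcreteCategory.congr_hom hf x)
    exact ⟨ModuleCat.ofHom g, by ext x; exact hg x⟩


variable (P : ProjectiveResolution X) (n : ℕ)

lemma EE_of_subsingleton (N : Type u) [AddCommGroup N] [Module R N] [Subsingleton N] :
    EE P n N :=
  fun f _ => ⟨0, fun x => Subsingleton.elim _ _⟩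

lemma EE_congr {N N' : Type u} [AddCommGroup N] [Module R N] [AddCommGroup N']
    [Module R N'] (e : N ≃ₗ[R] N') (h : EE P n N) : EE P n N' := by
  intro f hf
  obtain ⟨g, hg⟩ := h (e.symm.toLinearMap ∘ₗ f) (fun x => by simp [hf x])
  exact ⟨e.toLinearMap ∘ₗ g, fun x => by simp [hg x]⟩

/-- lift a map from a member of the resolution through a surjection -/
lemma EE_factor {B C : Type u} [AddCommGroup B] [Module R B] [AddCommGroup C] [Module R C]
    (π : B →ₗ[R] C) (hπ : Function.Surjective π) (i : ℕ)
    (f : ↥(P.complex.X i) →ₗ[R] C) :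
    ∃ f' : ↥(P.complex.X i) →ₗ[R] B, ∀ x, π (f' x) = f x := by
  have hepi : Epi (show ModuleCat.of R B ⟶ ModuleCat.of R C from ModuleCat.ofHom π) :=
    (ModuleCat.epi_iff_surjective _).mpr hπ
  refine ⟨(Projective.factorThru (show P.complex.X i ⟶ ModuleCat.of R C from ModuleCat.ofHom f)
    (show ModuleCat.of R B ⟶ ModuleCat.of R C from ModuleCat.ofHom π)).hom, fun x => ?_⟩
  exact ConcreteCategory.congr_hom (Projective.factorThru_comp
    (show P.complex.X i ⟶ ModuleCat.of R C from ModuleCat.ofHom f)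
    (show ModuleCat.of R B ⟶ ModuleCat.of R C from ModuleCat.ofHom π)) x

lemma d_d (i j k : ℕ) (x : ↥(P.complex.X i)) :
    P.complex.d j k (P.complex.d i j x) = 0 := by
  have h := P.complex.d_comp_d i j k
  calc P.complex.d j k (P.complex.d i j x) = (P.complex.d i j ≫ P.complex.d j k) x := rfl
  _ = (0 : P.complex.X i ⟶ P.complex.X k) x := by rw [h]
  _ = 0 := rfl

section SES
variable {A B C : Type u} [AddCommGroup A] [Module R A] [AddCommGroup B] [Module R B]
  [AddCommGroup C] [Module R C]
  (ι : A →ₗ[R] B) (π : B →ₗ[R] C) (hι : Function.Injective ι)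
  (hπ : Function.Surjective π) (hex : LinearMap.range ι = LinearMap.ker π)

include hι hπ hex

/-- Given `Ext^{n+1}(X, A) = 0`, an `n`-cocycle valued in `C` lifts to an
`n`-cocycle valued in `B`. -/
lemma EE_lift_cocycle (hA : EE P n A)
    (f : ↥(P.complex.X n) →ₗ[R] C) (hf : ∀ x, f (P.complex.d (n+1) n x) = 0) :
    ∃ f' : ↥(P.complex.X n) →ₗ[R] B,
      (∀ x, f' (P.complex.d (n+1) n x) = 0) ∧ ∀ x, π (f' x) = f x := by
  obtain ⟨f₀, hf₀⟩ := EE_factor P π hπ n f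
  -- `f₀ ∘ d` lands in `ker π = range ι`
  have hker : ∀ x : ↥(P.complex.X (n+1)),
      f₀ (P.complex.d (n+1) n x) ∈ LinearMap.range ι := by
    intro x
    rw [hex, LinearMap.mem_ker, hf₀, hf]
  -- factor through `ι`
  set u : ↥(P.complex.X (n+1)) →ₗ[R] A :=
    (LinearEquiv.ofInjective ι hι).symm.toLinearMap ∘ₗ
      (f₀ ∘ₗ (P.complex.d (n+1) n).hom).codRestrict
        (LinearMap.range ι) hker with hu
  have hιu : ∀ x, ι (u x) = f₀ (P.complex.d (n+1) n x) := by
    intro x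
    have : ∀ y : LinearMap.range ι, ι ((LinearEquiv.ofInjective ι hι).symm y) = y := by
      intro y
      conv_rhs => rw [← (LinearEquiv.ofInjective ι hι).apply_symm_apply y]
      rfl
    exact this _
  have hu0 : ∀ x, u (P.complex.d (n+2) (n+1) x) = 0 := by
    intro x
    apply hι
    rw [hιu, map_zero, d_d P (n+2) (n+1) n x]
    exact map_zero f₀
  obtain ⟨v, hv⟩ := hA u hu0
  refine ⟨f₀ - ι ∘ₗ v, fun x => ?_, fun x => ?_⟩
  · simp only [LinearMap.sub_apply, LinearMap.comp_apply, hv, hιu, sub_self]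
  · have : π (ι (v x)) = 0 := by
      have : ι (v x) ∈ LinearMap.ker π := hex ▸ LinearMap.mem_range_self ι (v x)
      exact this
    simp [this, hf₀]

lemma EE_ses (hA : EE P n A) (hC : EE P n C) : EE P n B := by
  intro f hf
  -- push to C
  obtain ⟨g, hg⟩ := hC (π ∘ₗ f) (fun x => by simp [hf x])
  -- lift g through π
  obtain ⟨g', hg'⟩ := EE_factor P π hπ n g
  -- f - g' ∘ d lands in range ι
  have hker : ∀ x, f x - g' (P.complex.d (n+1) n x) ∈ LinearMap.range ι := by
    intro x
    simp only [hex, LinearMap.mem_ker, map_sub, hg', hg, LinearMap.comp_apply, sub_self]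
  set h : ↥(P.complex.X (n+1)) →ₗ[R] A :=
    (LinearEquiv.ofInjective ι hι).symm.toLinearMap ∘ₗ
      (f - g' ∘ₗ (P.complex.d (n+1) n).hom).codRestrict
        (LinearMap.range ι) hker with hh
  have hιh : ∀ x, ι (h x) = f x - g' (P.complex.d (n+1) n x) := by
    intro x
    have : ∀ y : LinearMap.range ι, ι ((LinearEquiv.ofInjective ι hι).symm y) = y := by
      intro y
      conv_rhs => rw [← (LinearEquiv.ofInjective ι hι).apply_symm_apply y]
      rfl
    exact this _
  have hh0 : ∀ x, h (P.complex.d (n+2) (n+1) x) = 0 := by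
    intro x
    apply hι
    rw [hιh, map_zero, d_d P (n+2) (n+1) n x]
    simp [hf x]
  obtain ⟨k, hk⟩ := hA h hh0
  refine ⟨ι ∘ₗ k + g', fun x => ?_⟩
  have := hιh x
  rw [← hk x] at this
  simp only [LinearMap.add_apply, LinearMap.comp_apply]
  rw [this]; abel
end SES
/-- `N` is a subquotient of `M`: image of a submodule of `M`. -/
def SQ (R : Type u) [Ring R] (M : Type u) [AddCommGroup M] [Module R M] (N : Type u) [AddCommGroup N]
    [Module R N] : Prop :=
  ∃ (S : Submodule R M) (f : ↥S →ₗ[R] N), Function.Surjective f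

variable {M : Type u} [AddCommGroup M] [Module R M]

lemma SQ_self : SQ R M M :=
  ⟨⊤, (⊤ : Submodule R M).subtype, fun m => ⟨⟨m, trivial⟩, rfl⟩⟩

lemma SQ_quot {N : Type u} [AddCommGroup N] [Module R N] (h : SQ R M N)
    (N' : Submodule R N) : SQ R M (N ⧸ N') := by
  obtain ⟨S, f, hf⟩ := h
  exact ⟨S, N'.mkQ ∘ₗ f, (N'.mkQ_surjective).comp hf⟩

lemma SQ_sub {N : Type u} [AddCommGroup N] [Module R N] (h : SQ R M N)
    (N' : Submodule R N) : SQ R M ↥N' := by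
  obtain ⟨S, f, hf⟩ := h
  refine ⟨Submodule.map S.subtype (Submodule.comap f N'),
    (f.restrict (p := Submodule.comap f N') (q := N') (fun x hx => hx)) ∘ₗ
      (Submodule.equivMapOfInjective S.subtype S.injective_subtype
        (Submodule.comap f N')).symm.toLinearMap, ?_⟩
  rintro ⟨y, hy⟩
  obtain ⟨x, rfl⟩ := hf y
  refine ⟨(Submodule.equivMapOfInjective S.subtype S.injective_subtype
      (Submodule.comap f N')) ⟨x, hy⟩, ?_⟩
  rw [LinearMap.comp_apply]
  erw [LinearEquiv.symm_apply_apply]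
  rfl

lemma SQ_equiv {N N' : Type u} [AddCommGroup N] [Module R N] [AddCommGroup N']
    [Module R N'] (h : SQ R M N) (e : N ≃ₗ[R] N') : SQ R M N' := by
  obtain ⟨S, f, hf⟩ := h
  exact ⟨S, e.toLinearMap ∘ₗ f, e.surjective.comp hf⟩

/-- convert `SQ` to the `S ⧸ comap S.subtype T` form -/
lemma SQ_to_subquotient {L : Type u} [AddCommGroup L] [Module R L] (h : SQ R M L) :
    ∃ S T : Submodule R M, T ≤ S ∧
      Nonempty (L ≃ₗ[R] (↥S ⧸ Submodule.comap S.subtype T)) := by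
  obtain ⟨S, f, hf⟩ := h
  refine ⟨S, Submodule.map S.subtype (LinearMap.ker f), Submodule.map_subtype_le _ _, ⟨?_⟩⟩
  have hcomap : Submodule.comap S.subtype (Submodule.map S.subtype (LinearMap.ker f)) =
      LinearMap.ker f := Submodule.comap_map_eq_of_injective S.injective_subtype _
  exact (f.quotKerEquivOfSurjective hf).symm.trans
    (Submodule.quotEquivOfEq _ _ hcomap.symm)

lemma EE_of_isFiniteLength (P : ProjectiveResolution X) (n : ℕ)
    {M : Type u} [AddCommGroup M] [Module R M]
    (hsimple : ∀ (L : Type u) [AddCommGroup L] [Module R L], IsSimpleModule R L →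
      SQ R M L → EE P n L) :
    ∀ (N : Type u) [AddCommGroup N] [Module R N], IsFiniteLength R N → SQ R M N →
      EE P n N := by
  intro N _ _ hN
  induction hN with
  | of_subsingleton => intro _; exact EE_of_subsingleton P n _
  | @of_simple_quotient N _ _ N' hsimp hfl ih =>
    intro hSQ
    exact EE_ses P n N'.subtype N'.mkQ N'.injective_subtype N'.mkQ_surjective
      (by rw [Submodule.range_subtype, Submodule.ker_mkQ]) (ih (SQ_sub hSQ N'))
      (hsimple _ hsimp (SQ_quot hSQ N'))

end

/-- Let `R` be a ring, `d ≥ 1`, `U` an `R`-module and `M` an `R`-module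
admitting a descending chain of submodules `M = V 0 ⊇ V 1 ⊇ ⋯` such that every quotient
`M ⧸ V r` has finite length and the canonical map from `M` to the inverse limit of the
`M ⧸ V r` is an isomorphism (encoded as injectivity plus surjectivity onto compatible
sequences).  If `Ext^d(U, L) = 0` for every simple module `L` which is a subquotient of `M`,
then `Ext^d(U, M) = 0`. -/
theorem stmt0 (R : Type u) [Ring R] (d : ℕ) (hd : 1 ≤ d)
    (U : Type u) [AddCommGroup U] [Module R U]
    (M : Type u) [AddCommGroup M] [Module R M]
    (V : ℕ → Submodule R M) (hV0 : V 0 = ⊤) (hVanti : ∀ r s : ℕ, r ≤ s → V s ≤ V r)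
    (hfl : ∀ r : ℕ, IsFiniteLength R (M ⧸ V r))
    (hinj : ∀ m : M, (∀ r : ℕ, (Submodule.Quotient.mk m : M ⧸ V r) = 0) → m = 0)
    (hsurj : ∀ f : (r : ℕ) → M ⧸ V r,
      (∀ (r s : ℕ) (h : r ≤ s),
        Submodule.mapQ (V s) (V r) LinearMap.id (by simpa using hVanti r s h) (f s) = f r) →
      ∃ m : M, ∀ r : ℕ, (Submodule.Quotient.mk m : M ⧸ V r) = f r)
    (hext : ∀ (L : Type u) [AddCommGroup L] [Module R L], IsSimpleModule R L →
      (∃ S T : Submodule R M, T ≤ S ∧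
        Nonempty (L ≃ₗ[R] (↥S ⧸ Submodule.comap S.subtype T))) →
      Subsingleton (((Ext ℤ (ModuleCat.{u} R) d).obj
        (Opposite.op (ModuleCat.of R U))).obj (ModuleCat.of R L))) :
    Subsingleton (((Ext ℤ (ModuleCat.{u} R) d).obj
      (Opposite.op (ModuleCat.of R U))).obj (ModuleCat.of R M)) := by
  obtain ⟨n, rfl⟩ : ∃ n, d = n + 1 := ⟨d - 1, (Nat.succ_pred_eq_of_pos hd).symm⟩
  obtain ⟨P⟩ := (HasProjectiveResolution.out (Z := ModuleCat.of R U))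
  rw [EE_iff P n M]
  have hsimple : ∀ (L : Type u) [AddCommGroup L] [Module R L], IsSimpleModule R L →
      SQ R M L → EE P n L := by
    intro L _ _ hL hSQ
    exact (EE_iff P n L).mp (hext L hL (SQ_to_subquotient hSQ))
  have hFL := EE_of_isFiniteLength P n (M := M) hsimple
  have hSQq : ∀ r, SQ R M (M ⧸ V r) := fun r => SQ_quot SQ_self (V r)
  have hEq : ∀ r, EE P n (M ⧸ V r) := fun r => hFL _ (hfl r) (hSQq r)
  set Q : ∀ r : ℕ, (M ⧸ V (r+1)) →ₗ[R] (M ⧸ V r) := fun r =>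
    Submodule.mapQ (V (r+1)) (V r) LinearMap.id
      (by simpa using hVanti r (r+1) (Nat.le_succ r)) with hQ
  have hQmk : ∀ (r : ℕ) (m : M),
      Q r (Submodule.Quotient.mk m) = Submodule.Quotient.mk m := by
    intro r m; simp [hQ, Submodule.mapQ_apply]
  have hQsurj : ∀ r, Function.Surjective (Q r) := by
    intro r c
    obtain ⟨m, rfl⟩ := Submodule.Quotient.mk_surjective _ c
    exact ⟨Submodule.Quotient.mk m, hQmk r m⟩
  have hker : ∀ r, EE P n ↥(LinearMap.ker (Q r)) := by
    intro r
    have h1 := (isFiniteLength_iff_isNoetherian_isArtinian.mp (hfl (r+1)))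
    haveI := h1.1; haveI := h1.2
    refine hFL _ ?_ (SQ_sub (hSQq (r+1)) _)
    exact isFiniteLength_iff_isNoetherian_isArtinian.mpr ⟨inferInstance, inferInstance⟩
  intro f hf
  have key : ∀ (r : ℕ) (g : ↥(P.complex.X n) →ₗ[R] M ⧸ V r),
      (∀ x, g (P.complex.d (n+1) n x) = Submodule.Quotient.mk (f x)) →
      ∃ g' : ↥(P.complex.X n) →ₗ[R] M ⧸ V (r+1),
        (∀ x, g' (P.complex.d (n+1) n x) = Submodule.Quotient.mk (f x)) ∧
        ∀ x, Q r (g' x) = g x := by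
    intro r g hg
    obtain ⟨h, hh⟩ := hEq (r+1) ((V (r+1)).mkQ ∘ₗ f) (fun x => by simp [hf x])
    have e1 : ∀ x, h (P.complex.d (n+1) n x) = Submodule.Quotient.mk (f x) := by
      intro x; rw [hh x]; rfl
    set c : ↥(P.complex.X n) →ₗ[R] M ⧸ V r := (Q r) ∘ₗ h - g with hc
    have hc0 : ∀ x, c (P.complex.d (n+1) n x) = 0 := by
      intro x
      simp [hc, e1 x, hQmk, hg x]
    obtain ⟨c', hc'0, hc'⟩ := EE_lift_cocycle P n (LinearMap.ker (Q r)).subtype (Q r)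
      (Submodule.injective_subtype _) (hQsurj r) (Submodule.range_subtype _)
      (hker r) c hc0
    refine ⟨h - c', fun x => ?_, fun x => ?_⟩
    · simp [e1 x, hc'0 x]
    · have h2 : Q r (c' x) = Q r (h x) - g x := by rw [hc' x, hc]; simp
      simp [map_sub, h2]
  haveI : Subsingleton (M ⧸ V 0) := Submodule.Quotient.subsingleton_iff.mpr hV0
  let motive : ℕ → Type u := fun r => {g : ↥(P.complex.X n) →ₗ[R] M ⧸ V r //
      ∀ x, g (P.complex.d (n+1) n x) = Submodule.Quotient.mk (f x)}
  let G : ∀ r : ℕ, motive r := fun r =>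
    Nat.rec (motive := motive) ⟨0, fun x => Subsingleton.elim _ _⟩
      (fun r p => ⟨(key r p.1 p.2).choose, (key r p.1 p.2).choose_spec.1⟩) r
  have hGsucc : ∀ (r : ℕ) (x : ↥(P.complex.X n)), Q r ((G (r+1)).1 x) = (G r).1 x :=
    fun r => (key r (G r).1 (G r).2).choose_spec.2
  have hGle : ∀ (r s : ℕ) (h : r ≤ s) (x : ↥(P.complex.X n)),
      Submodule.mapQ (V s) (V r) LinearMap.id (by simpa using hVanti r s h) ((G s).1 x)
        = (G r).1 x := by
    intro r s h
    induction s, h using Nat.le_induction with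
    | base =>
      intro x
      obtain ⟨m, hm⟩ := Submodule.Quotient.mk_surjective _ ((G r).1 x)
      rw [← hm, Submodule.mapQ_apply]
      simp
    | succ s hrs ih =>
      intro x
      obtain ⟨m, hm⟩ := Submodule.Quotient.mk_surjective _ ((G (s+1)).1 x)
      have h1 : (G r).1 x = Submodule.Quotient.mk m := by
        rw [← ih x, ← hGsucc s x, ← hm, hQmk, Submodule.mapQ_apply]
        simp
      rw [← hm, h1, Submodule.mapQ_apply]
      simp
  let Λ : Submodule R (∀ r : ℕ, M ⧸ V r) :=
    { carrier := {p | ∀ (r s : ℕ) (h : r ≤ s),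
        Submodule.mapQ (V s) (V r) LinearMap.id (by simpa using hVanti r s h) (p s) = p r}
      add_mem' := fun {a b} ha hb r s h => by
        simp only [Pi.add_apply, map_add, ha r s h, hb r s h]
      zero_mem' := fun r s h => by simp
      smul_mem' := fun cc {a} ha r s h => by
        simp only [Pi.smul_apply, map_smul, ha r s h] }
  let φ : M →ₗ[R] ↥Λ := LinearMap.codRestrict Λ (LinearMap.pi fun r => (V r).mkQ)
    (fun m r s h => by simp [Submodule.mapQ_apply])
  have hφbij : Function.Bijective φ := by
    constructor
    · intro a b hab
      have h0 : ∀ r : ℕ, (V r).mkQ a = (V r).mkQ b :=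
        fun r => congrFun (congrArg Subtype.val hab) r
      have : ∀ r : ℕ, (Submodule.Quotient.mk (a - b) : M ⧸ V r) = 0 := by
        intro r
        rw [Submodule.Quotient.mk_sub]
        rw [show (Submodule.Quotient.mk a : M ⧸ V r) = (V r).mkQ a from rfl,
          show (Submodule.Quotient.mk b : M ⧸ V r) = (V r).mkQ b from rfl, h0 r, sub_self]
      exact sub_eq_zero.mp (hinj _ this)
    · rintro ⟨p, hp⟩
      obtain ⟨m, hm⟩ := hsurj p hp
      exact ⟨m, Subtype.ext (funext fun r => hm r)⟩
  let eΛ := LinearEquiv.ofBijective φ hφbij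
  let Ψ : ↥(P.complex.X n) →ₗ[R] ↥Λ := LinearMap.codRestrict Λ
    (LinearMap.pi fun r => (G r).1) (fun x r s h => hGle r s h x)
  let g : ↥(P.complex.X n) →ₗ[R] M := eΛ.symm.toLinearMap ∘ₗ Ψ
  have hg : ∀ (r : ℕ) (x : ↥(P.complex.X n)), (V r).mkQ (g x) = (G r).1 x := by
    intro r x
    have h1 : φ (g x) = Ψ x := eΛ.apply_symm_apply (Ψ x)
    exact congrFun (congrArg Subtype.val h1) r
  refine ⟨g, fun x => ?_⟩
  have hz : ∀ r : ℕ,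
      (Submodule.Quotient.mk (g (P.complex.d (n+1) n x) - f x) : M ⧸ V r) = 0 := by
    intro r
    rw [Submodule.Quotient.mk_sub,
      show (Submodule.Quotient.mk (g (P.complex.d (n+1) n x)) : M ⧸ V r)
        = (V r).mkQ (g (P.complex.d (n+1) n x)) from rfl, hg r, (G r).2 x, sub_self]
  exact sub_eq_zero.mp (hinj _ hz)
end

section
/- Let ≺ be a convex ordering on a positive system R⁺ of a finite, reduced, crystallographic root system R, and let α ∈ R⁺. If λ ∈ KP(α) is minimal, with respect to the partial order on KP(α), among the elements strictly greater than the one-part Kostant partition (α), then λ has exactly two parts: λ = (β, γ) for positive roots β, γ ∈ R⁺ with β + γ = α and β ≻ α ≻ γ. -/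
set_option maxHeartbeats 1000000
set_option linter.unusedSectionVars false

namespace Stmt3Aux

open Set

variable {ι M N : Type*} [AddCommGroup M] [Module ℝ M] [AddCommGroup N] [Module ℝ N]
  [Finite ι]

lemma neg_root_mem (P : RootPairing ι ℝ M N) (i : ι) : - P.root i ∈ Set.range P.root :=
  ⟨P.reflectionPerm i i, by rw [P.root_reflectionPerm, P.reflection_apply_self]⟩

lemma root_sub_root_mem (P : RootPairing ι ℝ M N) (hcrys : P.IsCrystallographic)
    (hred : P.IsReduced) (i j : ι)
    (hne : P.root i ≠ P.root j) (hne' : P.root i ≠ - P.root j)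
    (hp : 0 < P.pairing i j) :
    P.root i - P.root j ∈ Set.range P.root := by
  haveI := hcrys
  haveI := hred
  have hij : i ≠ j := fun h => hne (by rw [h])
  rw [← P.algebraMap_pairingIn ℤ, algebraMap_int_eq, eq_intCast] at hp
  exact P.root_sub_root_mem_of_pairingIn_pos (by exact_mod_cast hp) hij

lemma f_sum_pos (f : M →ₗ[ℝ] ℝ) (L : List M) (h : ∀ x ∈ L, 0 < f x) (hne : L ≠ []) :
    0 < f L.sum := by
  rw [map_list_sum]
  apply List.sum_pos
  · intro a ha
    obtain ⟨x, hx, rfl⟩ := List.mem_map.mp ha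
    exact h x hx
  · simpa using hne

lemma mem_ne (f : M →ₗ[ℝ] ℝ) (L : List M) (hmem : ∀ x ∈ L, 0 < f x) (hlen : 2 ≤ L.length)
    (α : M) (hsum : L.sum = α) : ∀ z ∈ L, z ≠ α := by
  haveI : DecidableEq M := Classical.decEq M
  intro z hz hzα
  have hperm := List.perm_cons_erase hz
  have h1 : f L.sum = f z + f ((L.erase z).sum) := by
    rw [hperm.sum_eq, List.sum_cons, map_add]
  have hne : L.erase z ≠ [] := by
    have := List.length_erase_of_mem hz
    intro h
    rw [h] at this
    simp at this
    omega
  have h2 : 0 < f ((L.erase z).sum) :=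
    f_sum_pos f _ (fun x hx => hmem x (List.mem_of_mem_erase hx)) hne
  rw [hsum] at h1
  rw [hzα] at h1 h2
  linarith

lemma pairwise_of_chain {Rplus : Set M} {lt : M → M → Prop}
    (htrans : ∀ a b c, a ∈ Rplus → b ∈ Rplus → c ∈ Rplus → lt a b → lt b c → lt a c) :
    ∀ (L : List M), (∀ x ∈ L, x ∈ Rplus) → L.Chain' (fun a b => b = a ∨ lt b a) →
    L.Pairwise (fun a b => b = a ∨ lt b a)
  | [], _, _ => .nil
  | a :: t, hmem, hch => by
    change List.IsChain _ (a :: t) at hch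
    rw [List.isChain_cons] at hch
    have pt := pairwise_of_chain htrans t (fun x hx => hmem x (List.mem_cons_of_mem a hx)) hch.2
    refine List.Pairwise.cons (fun b hb => ?_) pt
    cases t with
    | nil => simp at hb
    | cons h t' =>
      have hah : h = a ∨ lt h a := hch.1 h rfl
      rcases List.mem_cons.mp hb with rfl | hb'
      · exact hah
      · have hhb : b = h ∨ lt b h := (List.pairwise_cons.mp pt).1 b hb'
        rcases hhb with rfl | hbh
        · exact hah
        · rcases hah with rfl | hha
          · exact Or.inr hbh
          · refine Or.inr (htrans b h a ?_ ?_ ?_ hbh hha)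
            · exact hmem b (List.mem_cons_of_mem a hb)
            · exact hmem h (by simp)
            · exact hmem a (by simp)

lemma split_last {x : M} : ∀ {L : List M}, x ∈ L → ∃ A B, L = A ++ x :: B ∧ x ∉ B := by
  intro L
  induction L with
  | nil => simp
  | cons a t ih =>
    intro hx
    by_cases hxt : x ∈ t
    · obtain ⟨A, B, rfl, hB⟩ := ih hxt
      exact ⟨a :: A, B, rfl, hB⟩
    · have hxa : x = a := by
        rcases List.mem_cons.mp hx with h | h
        · exact h
        · exact absurd h hxt
      exact ⟨[], t, by simp [hxa], hxt⟩

lemma split_first {y : M} : ∀ {L : List M}, y ∈ L → ∃ A B, L = A ++ y :: B ∧ y ∉ A := by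
  intro L
  induction L with
  | nil => simp
  | cons a t ih =>
    intro hy
    by_cases hay : a = y
    · exact ⟨[], t, by simp [hay], by simp⟩
    · have hyt : y ∈ t := by
        rcases List.mem_cons.mp hy with h | h
        · exact absurd h.symm hay
        · exact h
      obtain ⟨A, B, rfl, hA⟩ := ih hyt
      refine ⟨a :: A, B, rfl, ?_⟩
      simp only [List.mem_cons]
      rintro (rfl | h)
      · exact hay rfl
      · exact hA h

lemma split_insert (lt : M → M → Prop) (σ : M) : ∀ (D : List M), ∃ D₁ D₂, D = D₁ ++ D₂ ∧
    (∀ d ∈ D₁, ¬ lt d σ) ∧ (∀ z ∈ D₂.head?, lt z σ) := by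
  intro D
  induction D with
  | nil => exact ⟨[], [], by simp, by simp, by simp⟩
  | cons d D ih =>
    by_cases hd : lt d σ
    · exact ⟨[], d :: D, by simp, by simp, by simpa using hd⟩
    · obtain ⟨D₁, D₂, rfl, h1, h2⟩ := ih
      exact ⟨d :: D₁, D₂, by simp, by
        intro e he
        rcases List.mem_cons.mp he with rfl | he'
        · exact hd
        · exact h1 e he', h2⟩

variable (P : RootPairing ι ℝ M N) (hcrys : P.IsCrystallographic) (hred : P.IsReduced)
  (Rplus : Set M) (f : M →ₗ[ℝ] ℝ)
  (hf : Rplus = {x | x ∈ Set.range P.root ∧ 0 < f x})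

include hf

omit [Finite ι] in
lemma mem_range (x : M) (hx : x ∈ Rplus) : x ∈ Set.range P.root := by
  rw [hf] at hx; exact hx.1

omit [Finite ι] in
lemma mem_fpos (x : M) (hx : x ∈ Rplus) : 0 < f x := by
  rw [hf] at hx; exact hx.2

include hcrys hred

/-- If `s, y` are positive roots with `⟨s, y∨⟩ > 0`, `s ≠ y` and `f (s - y) > 0`,
then `s - y` is a positive root. -/
lemma sub_mem (s y : M) (hs : s ∈ Rplus) (hy : y ∈ Rplus) (j : ι) (hj : P.root j = y)
    (hpos : 0 < P.coroot' j s) (hne : s ≠ y) (hfpos : 0 < f (s - y)) : s - y ∈ Rplus := by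
  obtain ⟨k, hk⟩ := mem_range P Rplus f hf s hs
  have hne2 : P.root k ≠ - P.root j := by
    rw [hk, hj]
    intro h
    have h1 : 0 < f s := mem_fpos P Rplus f hf s hs
    have h2 : 0 < f y := mem_fpos P Rplus f hf y hy
    rw [h, map_neg] at h1
    linarith
  have hp : 0 < P.pairing k j := by
    rwa [← P.root_coroot'_eq_pairing, hk]
  have := root_sub_root_mem P hcrys hred k j (by rw [hk, hj]; exact hne) hne2 hp
  rw [hk, hj] at this
  rw [hf]
  exact ⟨this, hfpos⟩

/-- If `x, y` are positive roots with `⟨x, y∨⟩ < 0` then `x + y` is a positive root. -/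
lemma add_mem (x y : M) (hx : x ∈ Rplus) (hy : y ∈ Rplus) (j : ι) (hj : P.root j = y)
    (hneg : P.coroot' j x < 0) : x + y ∈ Rplus := by
  obtain ⟨k, hk⟩ := mem_range P Rplus f hf x hx
  set j' := P.reflectionPerm j j with hj'def
  have hj' : P.root j' = -y := by
    rw [hj'def, P.root_reflectionPerm, P.reflection_apply_self, hj]
  have hp : 0 < P.pairing k j' := by
    rw [hj'def, RootPairing.pairing_reflectionPerm_self_right]
    have : P.pairing k j = P.coroot' j x := by rw [← P.root_coroot'_eq_pairing, hk]
    rw [this]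
    linarith
  have hfx : 0 < f x := mem_fpos P Rplus f hf x hx
  have hfy : 0 < f y := mem_fpos P Rplus f hf y hy
  have hne : P.root k ≠ P.root j' := by
    rw [hk, hj']
    intro h
    rw [h, map_neg] at hfx
    linarith
  have hne' : P.root k ≠ - P.root j' := by
    rw [hk, hj', neg_neg]
    intro h
    have : P.coroot' j x = 2 := by
      rw [h, ← hj, P.root_coroot'_eq_pairing, RootPairing.pairing_same]
    linarith
  have := root_sub_root_mem P hcrys hred k j' hne hne' hp
  rw [hk, hj', sub_neg_eq_add] at this
  rw [hf]
  refine ⟨this, ?_⟩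
  rw [map_add]
  linarith

/-- A positive root plus itself is never a positive root (reducedness). -/
lemma two_ne (x : M) (hx : x ∈ Rplus) : x + x ∉ Rplus := by
  intro h
  obtain ⟨k, hk⟩ := mem_range P Rplus f hf x hx
  obtain ⟨m, hm⟩ := mem_range P Rplus f hf (x + x) h
  have hdep : ¬ LinearIndependent ℝ ![P.root m, P.root k] := by
    rw [LinearIndependent.pair_iff]
    push_neg
    refine ⟨1, -2, ?_, by norm_num⟩
    rw [hm, hk]
    module
  have hfx : 0 < f x := mem_fpos P Rplus f hf x hx
  rcases hred.eq_or_eq_neg m k hdep with h' | h'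
  · rw [hm, hk] at h'
    have : f (x + x) = f x := by rw [h']
    rw [map_add] at this
    linarith
  · rw [hm, hk] at h'
    have : f (x + x) = f (-x) := by rw [h']
    rw [map_add, map_neg] at this
    linarith

/-- Among ≥ 2 positive roots summing to a positive root, some two sum to a positive root. -/
lemma exists_pair : ∀ n (L : List M), L.length = n → 2 ≤ L.length →
    (∀ x ∈ L, x ∈ Rplus) → L.sum ∈ Rplus →
    ∃ x y T, L.Perm (x :: y :: T) ∧ x + y ∈ Rplus := by
  haveI : DecidableEq M := Classical.decEq M
  intro n
  induction n using Nat.strong_induction_on with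
  | _ n ih =>
  intro L hlen h2 hmem hsum
  rcases L with _ | ⟨y, T⟩
  · simp at h2
  rcases T with _ | ⟨t, T'⟩
  · simp at h2
  by_cases hT' : T' = []
  · subst hT'
    refine ⟨y, t, [], List.Perm.refl _, ?_⟩
    simpa using hsum
  · -- main case: length ≥ 3
    by_contra hno
    push_neg at hno
    set Tt := t :: T' with hTt
    have hy : y ∈ Rplus := hmem y (by simp)
    obtain ⟨j, hj⟩ := mem_range P Rplus f hf y hy
    have hTmem : ∀ u ∈ Tt, u ∈ Rplus := fun u hu => hmem u (List.mem_cons_of_mem y hu)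
    have hnonneg : ∀ u ∈ Tt, 0 ≤ P.coroot' j u := by
      intro u hu
      by_contra hneg
      push_neg at hneg
      have hu' : u ∈ Rplus := hTmem u hu
      have hadd : u + y ∈ Rplus := add_mem P hcrys hred Rplus f hf u y hu' hy j hj hneg
      have hperm : (y :: Tt).Perm (u :: y :: Tt.erase u) :=
        ((List.perm_cons_erase hu).cons y).trans (List.Perm.swap u y _)
      exact hno u y (Tt.erase u) hperm hadd
    have hcyy : P.coroot' j y = 2 := by
      rw [← hj, P.root_coroot'_eq_pairing, RootPairing.pairing_same]
    have hsum' : (y :: Tt).sum = y + Tt.sum := by simp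
    have hcor : 0 < P.coroot' j ((y :: Tt).sum) := by
      rw [hsum', map_add, hcyy]
      have : 0 ≤ P.coroot' j Tt.sum := by
        rw [map_list_sum]
        apply List.sum_nonneg
        intro a ha
        obtain ⟨u, hu, rfl⟩ := List.mem_map.mp ha
        exact hnonneg u hu
      linarith
    have hTne : Tt ≠ [] := by simp [hTt]
    have hfT : 0 < f Tt.sum := f_sum_pos f Tt (fun u hu => mem_fpos P Rplus f hf u (hTmem u hu)) hTne
    have hsne : (y :: Tt).sum ≠ y := by
      intro h
      rw [hsum'] at h
      have : f (y + Tt.sum) = f y := by rw [h]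
      rw [map_add] at this
      linarith
    have hfsub : 0 < f ((y :: Tt).sum - y) := by
      rw [map_sub]
      have : f ((y :: Tt).sum) = f y + f Tt.sum := by rw [hsum', map_add]
      linarith
    have hTsum : Tt.sum ∈ Rplus := by
      have := sub_mem P hcrys hred Rplus f hf ((y :: Tt).sum) y hsum hy j hj hcor hsne hfsub
      rwa [hsum', add_sub_cancel_left] at this
    have hlt : Tt.length < n := by
      rw [← hlen]
      simp [hTt]
    obtain ⟨p, q, T'', hperm, hpq⟩ := ih Tt.length hlt Tt rfl
      (by have := List.length_pos_iff.mpr hT'; simp [hTt]; omega) hTmem hTsum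
    have hperm2 : (y :: Tt).Perm (p :: q :: y :: T'') := by
      refine (hperm.cons y).trans ?_
      refine (List.Perm.swap p y _).trans ?_
      exact List.Perm.cons p (List.Perm.swap q y _)
    exact hno p q (y :: T'') hperm2 hpq

variable (lt : M → M → Prop)
  (htrans : ∀ a b c, a ∈ Rplus → b ∈ Rplus → c ∈ Rplus → lt a b → lt b c → lt a c)
  (hirrefl : ∀ a ∈ Rplus, ¬ lt a a)
  (htrich : ∀ a b, a ∈ Rplus → b ∈ Rplus → lt a b ∨ a = b ∨ lt b a)

include htrich

/-- No list of ≥ 0 positive roots all satisfying a "merge-stable" property `Q` (failed by `α`)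
can sum to `α`. -/
lemma no_all (α : M) (hα : α ∈ Rplus) (Q : M → Prop)
    (hQ : ∀ x y, x ∈ Rplus → y ∈ Rplus → x + y ∈ Rplus → lt y x → Q x → Q y → Q (x + y))
    (hQα : ¬ Q α) :
    ∀ n (L : List M), L.length = n → (∀ x ∈ L, x ∈ Rplus) → (∀ x ∈ L, Q x) → L.sum ≠ α := by
  intro n
  induction n using Nat.strong_induction_on with
  | _ n ih =>
  intro L hlen hmem hQmem hsum
  rcases L with _ | ⟨a, T⟩
  · have : 0 < f α := mem_fpos P Rplus f hf α hα
    rw [← hsum] at this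
    simp at this
  rcases T with _ | ⟨b, T'⟩
  · apply hQα
    rw [← hsum]
    simpa using hQmem a (by simp)
  · -- length ≥ 2
    set L := a :: b :: T' with hL
    obtain ⟨x, y, T, hperm, hxy⟩ := exists_pair P hcrys hred Rplus f hf L.length L rfl
      (by simp [hL]) hmem (hsum ▸ hα)
    have hx : x ∈ Rplus := hmem x (hperm.mem_iff.mpr (by simp))
    have hy : y ∈ Rplus := hmem y (hperm.mem_iff.mpr (by simp))
    have hxny : x ≠ y := by
      rintro rfl
      exact two_ne P hcrys hred Rplus f hf x hx hxy
    -- reorganize so that lt q p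
    obtain ⟨p, q, hperm', hqp, hpq'⟩ :
        ∃ p q, L.Perm (p :: q :: T) ∧ lt q p ∧ p + q ∈ Rplus := by
      rcases htrich x y hx hy with h | h | h
      · exact ⟨y, x, hperm.trans (List.Perm.swap y x _), h, by rwa [add_comm]⟩
      · exact absurd h hxny
      · exact ⟨x, y, hperm, h, hxy⟩
    have hp : p ∈ Rplus := hmem p (hperm'.mem_iff.mpr (by simp))
    have hq : q ∈ Rplus := hmem q (hperm'.mem_iff.mpr (by simp))
    have hQp : Q p := hQmem p (hperm'.mem_iff.mpr (by simp))
    have hQq : Q q := hQmem q (hperm'.mem_iff.mpr (by simp))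
    have hQσ : Q (p + q) := hQ p q hp hq hpq' hqp hQp hQq
    have hTmem : ∀ u ∈ T, u ∈ Rplus := fun u hu =>
      hmem u (hperm'.mem_iff.mpr (by simp [hu]))
    have hTQ : ∀ u ∈ T, Q u := fun u hu =>
      hQmem u (hperm'.mem_iff.mpr (by simp [hu]))
    have hlsum : ((p + q) :: T).sum = α := by
      rw [← hsum, hperm'.sum_eq]
      simp [add_assoc]
    refine ih (T.length + 1) ?_ ((p + q) :: T) (by simp) ?_ ?_ hlsum
    · have := hperm'.length_eq
      rw [hlen] at this
      simp at this
      omega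
    · intro u hu
      rcases List.mem_cons.mp hu with rfl | hu'
      · exact hpq'
      · exact hTmem u hu'
    · intro u hu
      rcases List.mem_cons.mp hu with rfl | hu'
      · exact hQσ
      · exact hTQ u hu'


end Stmt3Aux

open Stmt3Aux



/-- A Kostant partition of `ν` (with respect to the set `Rplus` of positive roots and the
convex ordering `lt`): a list of positive roots which is non-increasing with respect to
`lt` and sums to `ν`. -/
def IsKostantPartition {M : Type*} [AddCommMonoid M]
    (Rplus : Set M) (lt : M → M → Prop) (ν : M) (lam : List M) : Prop :=
  (∀ x ∈ lam, x ∈ Rplus) ∧ lam.Chain' (fun a b => b = a ∨ lt b a) ∧ lam.sum = ν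

/-- The strict partial order on Kostant partitions: `lam ≺ mu` iff (i) the first entry where
they differ (both being defined) is smaller in `lam`, and (ii) the first entry from the end
where they differ (both being defined) is larger in `lam`. -/
def KPlt {M : Type*} (lt : M → M → Prop) (lam mu : List M) : Prop :=
  (∃ k : ℕ, (∀ r < k, lam[r]? = mu[r]?) ∧
      ∃ a b, lam[k]? = some a ∧ mu[k]? = some b ∧ lt a b) ∧
  (∃ k : ℕ, (∀ r < k, lam.reverse[r]? = mu.reverse[r]?) ∧
      ∃ a b, lam.reverse[k]? = some a ∧ mu.reverse[k]? = some b ∧ lt b a)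

/-- Let `≺` be a convex ordering on a positive system of a finite, reduced,
crystallographic root system and `α` a positive root.  If `lam ∈ KP(α)` is minimal among
the Kostant partitions of `α` strictly greater than the one-part partition `(α)`, then
`lam` has exactly two parts:  `lam = (β, γ)` with `β + γ = α` and `β ≻ α ≻ γ`. -/
theorem stmt3 {ι M N : Type*} [AddCommGroup M] [Module ℝ M] [AddCommGroup N] [Module ℝ N]
    [Finite ι] (P : RootPairing ι ℝ M N) [P.IsRootSystem]
    (hcrys : P.IsCrystallographic) (hred : P.IsReduced)
    (Rplus : Set M)
    (hpos : ∃ f : M →ₗ[ℝ] ℝ, Rplus = {x | x ∈ Set.range P.root ∧ 0 < f x})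
    (lt : M → M → Prop)
    (htrans : ∀ a b c, a ∈ Rplus → b ∈ Rplus → c ∈ Rplus → lt a b → lt b c → lt a c)
    (hirrefl : ∀ a ∈ Rplus, ¬ lt a a)
    (htrich : ∀ a b, a ∈ Rplus → b ∈ Rplus → lt a b ∨ a = b ∨ lt b a)
    (hconvex : ∀ β γ, β ∈ Rplus → γ ∈ Rplus → β + γ ∈ Rplus → lt β γ →
      lt β (β + γ) ∧ lt (β + γ) γ)
    (α : M) (hα : α ∈ Rplus)
    (lam : List M) (hlam : IsKostantPartition Rplus lt α lam)
    (hgt : KPlt lt [α] lam)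
    (hmin : ∀ mu : List M, IsKostantPartition Rplus lt α mu → KPlt lt [α] mu →
      ¬ KPlt lt mu lam) :
    ∃ β γ : M, lam = [β, γ] ∧ β ∈ Rplus ∧ γ ∈ Rplus ∧ β + γ = α ∧ lt α β ∧ lt γ α := by
  obtain ⟨f, hf⟩ := hpos
  obtain ⟨hmemL, hchainL, hsumL⟩ := hlam
  obtain ⟨⟨k₁, hpre₁, a₁, b₁, ha₁, hb₁, hab₁⟩, ⟨k₂, hpre₂, a₂, b₂, ha₂, hb₂, hab₂⟩⟩ := hgt
  -- the strict inequality conditions against [α] force k = 0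
  have hk₁ : k₁ = 0 := by
    cases k₁ with
    | zero => rfl
    | succ k => simp at ha₁
  have hk₂ : k₂ = 0 := by
    cases k₂ with
    | zero => rfl
    | succ k => simp at ha₂
  subst hk₁ hk₂
  have ha₁' : a₁ = α := by simpa using ha₁.symm
  have ha₂' : a₂ = α := by simpa using ha₂.symm
  rw [ha₁'] at hab₁
  rw [ha₂'] at hab₂
  -- b₁ is the head of lam, b₂ the last element
  have hb₁mem : b₁ ∈ lam := by
    rcases lam with _ | ⟨u, t⟩
    · simp at hb₁
    · simp at hb₁
      simp [hb₁]
  have hb₂mem : b₂ ∈ lam := by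
    have : b₂ ∈ lam.reverse := by
      rcases h : lam.reverse with _ | ⟨u, t⟩
      · rw [h] at hb₂; simp at hb₂
      · rw [h] at hb₂; simp at hb₂; simp [hb₂]
    simpa using this
  have hlam0 : lam ≠ [] := by
    rintro rfl
    simp at hb₁
  have hlam1 : lam.length ≠ 1 := by
    intro h
    rw [List.length_eq_one_iff] at h
    obtain ⟨u, rfl⟩ := h
    have h1 : u = b₁ := by simpa using hb₁
    have h2 : u = b₂ := by simpa using hb₂
    exact hirrefl α hα (htrans α u α hα (hmemL u (by simp)) hα
      (by rw [h1]; exact hab₁) (by rw [h2]; exact hab₂))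
  by_cases hl2 : lam.length = 2
  · rw [List.length_eq_two] at hl2
    obtain ⟨β, γ, rfl⟩ := hl2
    have hβ : β ∈ Rplus := hmemL β (by simp)
    have hγ : γ ∈ Rplus := hmemL γ (by simp)
    have hb₁' : b₁ = β := by simpa using hb₁.symm
    have hb₂' : b₂ = γ := by
      have : ([β, γ] : List M).reverse = [γ, β] := by simp
      rw [this] at hb₂
      simpa using hb₂.symm
    exact ⟨β, γ, rfl, hβ, hγ, by simpa using hsumL,
      by rw [← hb₁']; exact hab₁, by rw [← hb₂']; exact hab₂⟩
  · exfalso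
    have hl0 : lam.length ≠ 0 := by simpa [List.length_eq_zero_iff] using hlam0
    have hl3 : 3 ≤ lam.length := by omega
    set R : M → M → Prop := fun a b => b = a ∨ lt b a with hR
    have hpw : lam.Pairwise R := pairwise_of_chain htrans lam hmemL hchainL
    -- find a mergeable pair
    obtain ⟨x₀, y₀, T₀, hperm₀, hxy₀⟩ := exists_pair P hcrys hred Rplus f hf
      lam.length lam rfl (by omega) hmemL (hsumL ▸ hα)
    have hx₀ : x₀ ∈ Rplus := hmemL x₀ (hperm₀.mem_iff.mpr (by simp))
    have hy₀ : y₀ ∈ Rplus := hmemL y₀ (hperm₀.mem_iff.mpr (by simp))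
    have hx₀y₀ : x₀ ≠ y₀ := by
      rintro rfl
      exact two_ne P hcrys hred Rplus f hf x₀ hx₀ hxy₀
    obtain ⟨x, y, hxmem, hymem, hyx, hσmem⟩ :
        ∃ x y, x ∈ lam ∧ y ∈ lam ∧ lt y x ∧ x + y ∈ Rplus := by
      have hx₀m : x₀ ∈ lam := hperm₀.mem_iff.mpr (by simp)
      have hy₀m : y₀ ∈ lam := hperm₀.mem_iff.mpr (by simp)
      rcases htrich x₀ y₀ hx₀ hy₀ with h | h | h
      · exact ⟨y₀, x₀, hy₀m, hx₀m, h, by rwa [add_comm]⟩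
      · exact absurd h hx₀y₀
      · exact ⟨x₀, y₀, hx₀m, hy₀m, h, hxy₀⟩
    have hx : x ∈ Rplus := hmemL x hxmem
    have hy : y ∈ Rplus := hmemL y hymem
    set σ : M := x + y with hσdef
    have hσ : σ ∈ Rplus := hσmem
    have hyσ : lt y σ := by
      have := (hconvex y x hy hx (by rwa [add_comm]) hyx).1
      rwa [add_comm] at this
    have hσx : lt σ x := by
      have := (hconvex y x hy hx (by rwa [add_comm]) hyx).2
      rwa [add_comm] at this
    -- decompose lam = A ++ x :: D ++ y :: C
    obtain ⟨A, B, hAB, hxB⟩ := split_last hxmem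
    have hyB : y ∈ B := by
      have hymem' : y ∈ lam := hymem
      rw [hAB] at hymem'
      rcases List.mem_append.mp hymem' with hA | hB
      · exfalso
        have := (List.pairwise_append.mp (hAB ▸ hpw)).2.2 y hA x (by simp)
        rcases this with h | h
        · subst h; exact hirrefl x hx hyx
        · exact hirrefl y hy (htrans y x y hy hx hy hyx h)
      · rcases List.mem_cons.mp hB with h | h
        · exfalso; subst h; exact hirrefl y hy hyx
        · exact h
    obtain ⟨D, C, hDC, hyD⟩ := split_first hyB
    have hlamD : lam = A ++ x :: (D ++ y :: C) := by rw [hAB, hDC]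
    have hxD : x ∉ D := fun h => hxB (hDC ▸ List.mem_append_left _ h)
    -- extract pairwise bounds
    have hpwD : (A ++ x :: (D ++ y :: C)).Pairwise R := hlamD ▸ hpw
    have h1 := List.pairwise_append.mp hpwD
    have h2 := List.pairwise_cons.mp h1.2.1
    have h3 := List.pairwise_append.mp h2.2
    have h4 := List.pairwise_cons.mp h3.2.1
    have hax : ∀ a ∈ A, x = a ∨ lt x a := fun a ha => h1.2.2 a ha x (by simp)
    have hdx : ∀ d ∈ D, lt d x := by
      intro d hd
      rcases h2.1 d (List.mem_append_left _ hd) with h | h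
      · exact absurd (h ▸ hd) hxD
      · exact h
    have hcxle : ∀ c ∈ C, c = x ∨ lt c x := fun c hc =>
      h2.1 c (List.mem_append_right _ (List.mem_cons_of_mem y hc))
    have hyd : ∀ d ∈ D, lt y d := by
      intro d hd
      rcases h3.2.2 d hd y (by simp) with h | h
      · exact absurd (h ▸ hd) hyD
      · exact h
    have hcy : ∀ c ∈ C, c = y ∨ lt c y := fun c hc => h4.1 c hc
    have hAmem : ∀ a ∈ A, a ∈ Rplus := fun a ha => hmemL a (hlamD ▸ List.mem_append_left _ ha)
    have hDmem : ∀ d ∈ D, d ∈ Rplus := fun d hd => hmemL d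
      (hlamD ▸ List.mem_append_right _ (List.mem_cons_of_mem x (List.mem_append_left _ hd)))
    have hCmem : ∀ c ∈ C, c ∈ Rplus := fun c hc => hmemL c
      (hlamD ▸ List.mem_append_right _
        (List.mem_cons_of_mem x (List.mem_append_right _ (List.mem_cons_of_mem y hc))))
    have hcσ : ∀ c ∈ C, lt c σ := by
      intro c hc
      rcases hcy c hc with h | h
      · exact h ▸ hyσ
      · exact htrans c y σ (hCmem c hc) hy hσ h hyσ
    have hcx : ∀ c ∈ C, lt c x := by
      intro c hc
      rcases hcy c hc with h | h
      · exact h ▸ hyx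
      · exact htrans c y x (hCmem c hc) hy hx h hyx
    -- insert σ into D
    obtain ⟨D₁, D₂, hD12, hD₁, hD₂⟩ := split_insert lt σ D
    have hD₁mem : ∀ d ∈ D₁, d ∈ Rplus := fun d hd => hDmem d (hD12 ▸ List.mem_append_left _ hd)
    have hD₂mem : ∀ d ∈ D₂, d ∈ Rplus := fun d hd => hDmem d (hD12 ▸ List.mem_append_right _ hd)
    have hpwDD : D.Pairwise R := h3.1
    have hpwD12 := List.pairwise_append.mp (hD12 ▸ hpwDD)
    have hD₂σ : ∀ b ∈ D₂, lt b σ := by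
      cases D₂ with
      | nil => simp
      | cons h t =>
        intro b hb
        have hh : lt h σ := hD₂ h (by simp)
        rcases List.mem_cons.mp hb with rfl | hb'
        · exact hh
        · rcases (List.pairwise_cons.mp hpwD12.2.1).1 b hb' with h' | h'
          · exact h' ▸ hh
          · exact htrans b h σ (hD₂mem b hb) (hD₂mem h (by simp)) hσ h' hh
    have hD₁σ : ∀ d ∈ D₁, σ = d ∨ lt σ d := by
      intro d hd
      rcases htrich d σ (hD₁mem d hd) hσ with h | h | h
      · exact absurd h (hD₁ d hd)
      · exact Or.inl h.symm
      · exact Or.inr h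
    set μ : List M := A ++ (D₁ ++ σ :: (D₂ ++ C)) with hμdef
    have hmemμ : ∀ z ∈ μ, z ∈ Rplus := by
      intro z hz
      rw [hμdef] at hz
      rcases List.mem_append.mp hz with h | h
      · exact hAmem z h
      · rcases List.mem_append.mp h with h' | h'
        · exact hD₁mem z h'
        · rcases List.mem_cons.mp h' with rfl | h''
          · exact hσ
          · rcases List.mem_append.mp h'' with h3' | h3'
            · exact hD₂mem z h3'
            · exact hCmem z h3'
    -- all elements below σ (for things after A) are < x; cross conditions
    have hrestx : ∀ b ∈ D₁ ++ σ :: (D₂ ++ C), lt b x := by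
      intro b hb
      rcases List.mem_append.mp hb with h | h
      · exact hdx b (hD12 ▸ List.mem_append_left _ h)
      · rcases List.mem_cons.mp h with rfl | h'
        · exact hσx
        · rcases List.mem_append.mp h' with h'' | h''
          · exact hdx b (hD12 ▸ List.mem_append_right _ h'')
          · exact hcx b h''
    have hrestmem : ∀ b ∈ D₁ ++ σ :: (D₂ ++ C), b ∈ Rplus := by
      intro b hb
      rcases List.mem_append.mp hb with h | h
      · exact hD₁mem b h
      · rcases List.mem_cons.mp h with rfl | h'
        · exact hσ
        · rcases List.mem_append.mp h' with h'' | h''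
          · exact hD₂mem b h''
          · exact hCmem b h''
    have hpwμ : μ.Pairwise R := by
      rw [hμdef]
      apply List.pairwise_append.mpr
      refine ⟨h1.1, ?_, ?_⟩
      · apply List.pairwise_append.mpr
        refine ⟨hpwD12.1, ?_, ?_⟩
        · apply List.pairwise_cons.mpr
          constructor
          · intro b hb
            rcases List.mem_append.mp hb with h | h
            · exact Or.inr (hD₂σ b h)
            · exact Or.inr (hcσ b h)
          · apply List.pairwise_append.mpr
            refine ⟨hpwD12.2.1, h4.2, ?_⟩
            intro d hd c hc
            rcases hcy c hc with h | h
            · exact Or.inr (h ▸ hyd d (hD12 ▸ List.mem_append_right _ hd))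
            · exact Or.inr (htrans c y d (hCmem c hc) hy (hD₂mem d hd) h
                (hyd d (hD12 ▸ List.mem_append_right _ hd)))
        · intro d hd b hb
          rcases List.mem_cons.mp hb with rfl | h
          · exact hD₁σ d hd
          · rcases List.mem_append.mp h with h' | h'
            · exact hpwD12.2.2 d hd b h'
            · -- b ∈ C, d ∈ D₁ : b ≺ y ≺ d
              have hyd' := hyd d (hD12 ▸ List.mem_append_left _ hd)
              rcases hcy b h' with h'' | h''
              · exact Or.inr (h'' ▸ hyd')
              · exact Or.inr (htrans b y d (hCmem b h') hy (hD₁mem d hd) h'' hyd')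
      · intro a ha b hb
        rcases hax a ha with h | h
        · exact Or.inr (h ▸ hrestx b hb)
        · exact Or.inr (htrans b x a (hrestmem b hb) hx (hAmem a ha) (hrestx b hb) h)
    have hsumμ : μ.sum = α := by
      have : μ.sum = lam.sum := by
        rw [hμdef, hlamD, hD12, hσdef]
        simp only [List.sum_append, List.sum_cons]
        abel
      rw [this, hsumL]
    have hlenlam : lam.length = A.length + (D₁.length + D₂.length) + C.length + 2 := by
      rw [hlamD, hD12]
      simp [List.length_append]
      omega
    have hlenμ' : μ.length = A.length + (D₁.length + D₂.length) + C.length + 1 := by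
      rw [hμdef]
      simp [List.length_append]
      omega
    have hlenμ : 2 ≤ μ.length := by omega
    have hKPμ : IsKostantPartition Rplus lt α μ := ⟨hmemμ, hpwμ.isChain, hsumμ⟩
    -- KPlt [α] μ
    have hμne : μ ≠ [] := by
      intro h
      rw [h] at hlenμ
      simp at hlenμ
    obtain ⟨h₀, tμ, hμcons⟩ := List.exists_cons_of_ne_nil hμne
    have hfposμ : ∀ z ∈ μ, 0 < f z := fun z hz => mem_fpos P Rplus f hf z (hmemμ z hz)
    have hne_all : ∀ z ∈ μ, z ≠ α := mem_ne f μ hfposμ hlenμ α hsumμ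
    have hαh₀ : lt α h₀ := by
      by_contra hcon
      have hh₀mem : h₀ ∈ μ := by rw [hμcons]; simp
      have hh₀R : h₀ ∈ Rplus := hmemμ h₀ hh₀mem
      have hh₀α : lt h₀ α := by
        rcases htrich α h₀ hα hh₀R with h | h | h
        · exact absurd h hcon
        · exact absurd h.symm (hne_all h₀ hh₀mem)
        · exact h
      have hall : ∀ z ∈ μ, lt z α := by
        intro z hz
        rw [hμcons] at hz
        rcases List.mem_cons.mp hz with rfl | hz'
        · exact hh₀α
        · have hzμ : z ∈ μ := by rw [hμcons]; exact List.mem_cons_of_mem _ hz'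
          rcases (List.pairwise_cons.mp (hμcons ▸ hpwμ)).1 z hz' with h | h
          · exact h ▸ hh₀α
          · exact htrans z h₀ α (hmemμ z hzμ) hh₀R hα h hh₀α
      refine no_all P hcrys hred Rplus f hf lt htrich α hα (fun z => lt z α) ?_
        (hirrefl α hα) μ.length μ rfl hmemμ hall hsumμ
      intro u v hu hv huv hvu hQu _
      have := (hconvex v u hv hu (by rwa [add_comm]) hvu).2
      rw [add_comm] at this
      exact htrans (u + v) u α huv hu hα this hQu
    obtain ⟨W, e, hμconcat⟩ : ∃ W e, μ = W ++ [e] := by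
      rcases μ.eq_nil_or_concat with h | ⟨W, e, h⟩
      · exact absurd h hμne
      · exact ⟨W, e, by simpa using h⟩
    have heμ : e ∈ μ := by rw [hμconcat]; simp
    have heR : e ∈ Rplus := hmemμ e heμ
    have heα : lt e α := by
      by_contra hcon
      have hαe : lt α e := by
        rcases htrich α e hα heR with h | h | h
        · exact h
        · exact absurd h.symm (hne_all e heμ)
        · exact absurd h hcon
      have hall : ∀ z ∈ μ, lt α z := by
        intro z hz
        rw [hμconcat] at hz
        rcases List.mem_append.mp hz with hzW | hze
        · have hzμ : z ∈ μ := by rw [hμconcat]; exact List.mem_append_left _ hzW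
          rcases (List.pairwise_append.mp (hμconcat ▸ hpwμ)).2.2 z hzW e (by simp) with h | h
          · exact h ▸ hαe
          · exact htrans α e z hα heR (hmemμ z hzμ) hαe h
        · rcases List.mem_cons.mp hze with rfl | h
          · exact hαe
          · simp at h
      refine no_all P hcrys hred Rplus f hf lt htrich α hα (fun z => lt α z) ?_
        (hirrefl α hα) μ.length μ rfl hmemμ hall hsumμ
      intro u v hu hv huv hvu _ hQv
      have := (hconvex v u hv hu (by rwa [add_comm]) hvu).1
      rw [add_comm] at this
      exact htrans α v (u + v) hα hv huv hQv this
    have hKPαμ : KPlt lt [α] μ := by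
      constructor
      · exact ⟨0, by simp, α, h₀, by simp, by rw [hμcons]; simp, hαh₀⟩
      · refine ⟨0, by simp, α, e, by simp, ?_, heα⟩
        rw [hμconcat]
        simp
    -- KPlt μ lam
    have hKPμlam : KPlt lt μ lam := by
      constructor
      · -- first components differ at position A.length
        refine ⟨A.length, ?_, ?_⟩
        · intro r hr
          rw [hμdef, hlamD]
          rw [List.getElem?_append_left hr, List.getElem?_append_left hr]
        · obtain ⟨hh₁, hh₁some, hh₁x⟩ : ∃ h₁, (D₁ ++ σ :: (D₂ ++ C))[0]? = some h₁ ∧ lt h₁ x := by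
            cases D₁ with
            | nil => exact ⟨σ, by simp, hσx⟩
            | cons d t => exact ⟨d, by simp, hdx d (hD12 ▸ List.mem_append_left _ (by simp))⟩
          refine ⟨hh₁, x, ?_, ?_, hh₁x⟩
          · rw [hμdef, List.getElem?_append_right (le_refl _), Nat.sub_self]
            exact hh₁some
          · rw [hlamD, List.getElem?_append_right (le_refl _), Nat.sub_self]
            simp
      · -- reversed: differ at position C.length
        have hμrev : μ.reverse = C.reverse ++ (D₂.reverse ++ (σ :: (D₁.reverse ++ A.reverse))) := by
          rw [hμdef]
          simp
        have hlamrev : lam.reverse =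
            C.reverse ++ (y :: (D₂.reverse ++ (D₁.reverse ++ (x :: A.reverse)))) := by
          rw [hlamD, hD12]
          simp
        refine ⟨C.length, ?_, ?_⟩
        · intro r hr
          have hr' : r < C.reverse.length := by simpa using hr
          rw [hμrev, hlamrev, List.getElem?_append_left hr', List.getElem?_append_left hr']
        · obtain ⟨z, hzsome, hyz⟩ :
              ∃ z, (D₂.reverse ++ (σ :: (D₁.reverse ++ A.reverse)))[0]? = some z ∧ lt y z := by
            rcases D₂.eq_nil_or_concat with rfl | ⟨E, z, rfl⟩
            · exact ⟨σ, by simp, hyσ⟩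
            · refine ⟨z, by simp, hyd z (hD12 ▸ List.mem_append_right _ (by simp))⟩
          refine ⟨z, y, ?_, ?_, hyz⟩
          · rw [hμrev]
            rw [show C.length = C.reverse.length by simp,
              List.getElem?_append_right (le_refl _), Nat.sub_self]
            exact hzsome
          · rw [hlamrev]
            rw [show C.length = C.reverse.length by simp,
              List.getElem?_append_right (le_refl _), Nat.sub_self]
            simp
    exact hmin μ hKPμ hKPαμ hKPμlam
end

section
/- Let ≺ be a convex ordering on a positive system R⁺ of a finite, reduced, crystallographic root system R, and let α ∈ R⁺ be non-simple, i.e., α = β + γ for some β, γ ∈ R⁺. Then α admits a minimal pair: there exist positive roots β, γ ∈ R⁺ with β + γ = α and β ≻ α ≻ γ such that there is no pair (β′, γ′) of positive roots with β′ + γ′ = α and β ≻ β′ ≻ α ≻ γ′ ≻ γ. -/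
/-- A finite set on which `lt` is transitive and irreflexive has a minimal element. -/
lemma exists_min_aux {M : Type*} (Rplus : Set M) (lt : M → M → Prop)
    (htrans : ∀ a b c, a ∈ Rplus → b ∈ Rplus → c ∈ Rplus → lt a b → lt b c → lt a c)
    (hirrefl : ∀ a ∈ Rplus, ¬ lt a a) :
    ∀ s : Finset M, (∀ a ∈ s, a ∈ Rplus) → s.Nonempty →
      ∃ β ∈ s, ∀ b ∈ s, ¬ lt b β := by
  classical
  intro s
  refine Finset.induction_on s (fun _ h => absurd h (by simp)) ?_
  intro a s ha ih hsub _
  rcases s.eq_empty_or_nonempty with rfl | hs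
  · refine ⟨a, by simp, ?_⟩
    intro b hb
    simp only [Finset.mem_insert, Finset.notMem_empty, or_false] at hb
    rw [hb]
    exact hirrefl a (hsub a (by simp))
  · obtain ⟨β, hβs, hβmin⟩ := ih (fun x hx => hsub x (Finset.mem_insert_of_mem hx)) hs
    by_cases hab : lt a β
    · refine ⟨a, Finset.mem_insert_self a s, ?_⟩
      intro b hb hba
      rcases Finset.mem_insert.mp hb with h | hbs
      · rw [h] at hba
        exact hirrefl a (hsub a (Finset.mem_insert_self a s)) hba
      · exact hβmin b hbs (htrans b a β (hsub b hb) (hsub a (Finset.mem_insert_self a s))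
          (hsub β (Finset.mem_insert_of_mem hβs)) hba hab)
    · refine ⟨β, Finset.mem_insert_of_mem hβs, ?_⟩
      intro b hb hbβ
      rcases Finset.mem_insert.mp hb with h | hbs
      · rw [h] at hbβ
        exact hab hbβ
      · exact hβmin b hbs hbβ

/-- Let `≺` be a convex ordering on a positive system of a finite, reduced,
crystallographic root system, and let `α` be a non-simple positive root (i.e. `α = β + γ`
for some positive roots `β, γ`).  Then `α` admits a minimal pair: positive roots `β, γ`
with `β + γ = α` and `β ≻ α ≻ γ` such that there is no pair `(β', γ')` of positive roots
with `β' + γ' = α` and `β ≻ β' ≻ α ≻ γ' ≻ γ`. -/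
theorem stmt4 {ι M N : Type*} [AddCommGroup M] [Module ℝ M] [AddCommGroup N] [Module ℝ N]
    [Finite ι] (P : RootPairing ι ℝ M N) [P.IsRootSystem]
    (hcrys : P.IsCrystallographic) (hred : P.IsReduced)
    (Rplus : Set M)
    (hpos : ∃ f : M →ₗ[ℝ] ℝ, Rplus = {x | x ∈ Set.range P.root ∧ 0 < f x})
    (lt : M → M → Prop)
    (htrans : ∀ a b c, a ∈ Rplus → b ∈ Rplus → c ∈ Rplus → lt a b → lt b c → lt a c)
    (hirrefl : ∀ a ∈ Rplus, ¬ lt a a)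
    (htrich : ∀ a b, a ∈ Rplus → b ∈ Rplus → lt a b ∨ a = b ∨ lt b a)
    (hconvex : ∀ β γ, β ∈ Rplus → γ ∈ Rplus → β + γ ∈ Rplus → lt β γ →
      lt β (β + γ) ∧ lt (β + γ) γ)
    (α : M) (hα : α ∈ Rplus)
    (hnonsimple : ∃ β γ : M, β ∈ Rplus ∧ γ ∈ Rplus ∧ β + γ = α) :
    ∃ β γ : M, β ∈ Rplus ∧ γ ∈ Rplus ∧ β + γ = α ∧ lt α β ∧ lt γ α ∧
      ¬ ∃ β' γ' : M, β' ∈ Rplus ∧ γ' ∈ Rplus ∧ β' + γ' = α ∧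
          lt β' β ∧ lt α β' ∧ lt γ' α ∧ lt γ γ' := by
  obtain ⟨f, hf⟩ := hpos
  have hroot : ∀ x ∈ Rplus, x ∈ Set.range P.root := fun x hx => by
    rw [hf] at hx; exact hx.1
  -- no pair can have equal components, by reducedness
  have hne : ∀ β γ, β ∈ Rplus → γ ∈ Rplus → β + γ = α → β ≠ γ := by
    intro β γ hβ hγ hsum heq
    subst heq
    obtain ⟨i, hi⟩ := hroot β hβ
    obtain ⟨j, hj⟩ := hroot α hα
    have hdep : ¬ LinearIndependent ℝ ![P.root i, P.root j] := by
      rw [LinearIndependent.pair_iff]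
      push_neg
      refine ⟨2, -1, ?_, ?_⟩
      · rw [hi, hj, ← hsum]
        module
      · intro h; norm_num at h
    have hzero : P.root i ≠ 0 := P.ne_zero i
    rcases hred.eq_or_eq_neg i j hdep with h | h
    · rw [hi, hj, ← hsum] at h
      apply hzero
      rw [hi]
      have h' : β + 0 = β + β := by simpa using h
      exact (add_left_cancel h').symm
    · rw [hi, hj, ← hsum] at h
      apply hzero
      rw [hi]
      have h' := congrArg (fun x => β + β + x) h
      simp only [add_neg_cancel] at h'
      have h3 : (3 : ℝ) • β = 0 := by
        rw [show (3:ℝ) • β = β + β + β by module]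
        exact h'
      rcases smul_eq_zero.mp h3 with h'' | h''
      · norm_num at h''
      · exact h''
  -- any pair can be arranged so that the first component is above α
  have harrange : ∀ β γ, β ∈ Rplus → γ ∈ Rplus → β + γ = α →
      (lt α β ∧ lt γ α) ∨ (lt α γ ∧ lt β α) := by
    intro β γ hβ hγ hsum
    have hαR : β + γ ∈ Rplus := hsum ▸ hα
    rcases htrich β γ hβ hγ with h | h | h
    · obtain ⟨h1, h2⟩ := hconvex β γ hβ hγ hαR h
      rw [hsum] at h1 h2
      exact Or.inr ⟨h2, h1⟩
    · exact absurd h (hne β γ hβ hγ hsum)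
    · have hαR' : γ + β ∈ Rplus := by rwa [add_comm]
      obtain ⟨h1, h2⟩ := hconvex γ β hγ hβ hαR' h
      rw [add_comm, hsum] at h1 h2
      exact Or.inl ⟨h2, h1⟩
  -- the set of valid first components
  set T : Set M := {β | β ∈ Rplus ∧ lt α β ∧ ∃ γ, γ ∈ Rplus ∧ β + γ = α} with hT
  have hTfin : T.Finite := by
    apply Set.Finite.subset (Set.finite_range P.root)
    intro x hx
    exact hroot x hx.1
  have hTne : T.Nonempty := by
    obtain ⟨β, γ, hβ, hγ, hsum⟩ := hnonsimple
    rcases harrange β γ hβ hγ hsum with ⟨h1, _⟩ | ⟨h1, _⟩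
    · exact ⟨β, hβ, h1, γ, hγ, hsum⟩
    · exact ⟨γ, hγ, h1, β, hβ, by rwa [add_comm]⟩
  obtain ⟨β, hβT, hβmin⟩ := exists_min_aux Rplus lt htrans hirrefl hTfin.toFinset
    (fun a ha => (hTfin.mem_toFinset.mp ha).1)
    (by rwa [Set.Finite.toFinset_nonempty])
  rw [Set.Finite.mem_toFinset] at hβT
  obtain ⟨hβR, hαβ, γ, hγR, hsum⟩ := hβT
  have hγα : lt γ α := by
    rcases harrange β γ hβR hγR hsum with ⟨_, h⟩ | ⟨_, h⟩
    · exact h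
    · exact absurd (htrans α β α hα hβR hα hαβ h) (hirrefl α hα)
  refine ⟨β, γ, hβR, hγR, hsum, hαβ, hγα, ?_⟩
  rintro ⟨β', γ', hβ'R, hγ'R, hsum', hβ'β, hαβ', _, _⟩
  exact hβmin β' (hTfin.mem_toFinset.mpr ⟨hβ'R, hαβ', γ', hγ'R, hsum'⟩) hβ'β
end

section
/- Let R be a finite, reduced, crystallographic, irreducible root system with a Weyl-invariant positive-definite symmetric bilinear form normalized so that short roots have squared length 2, and let R⁺ be a positive system. For any α, β, γ ∈ R⁺ with β + γ = α, the following two identities hold: d_α · (p_{β,γ} − β·γ) = d_β · d_γ · (p_{β,γ} + 1) in ℤ, and [d_α] · [p_{β,γ} − β·γ] = [d_β] · [d_γ] · [p_{β,γ} + 1] in the Laurent polynomial ring ℤ[q, q⁻¹]. -/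
open LaurentPolynomial

/-- The quantum integer `[n] = (qⁿ - q⁻ⁿ)/(q - q⁻¹)` as a Laurent polynomial in `q = T`:
for `n ≥ 0` it is `qⁿ⁻¹ + qⁿ⁻³ + ⋯ + q¹⁻ⁿ`, and `[-n] = -[n]`. -/
noncomputable def qint (n : ℤ) : LaurentPolynomial ℤ :=
  if 0 ≤ n then ∑ k ∈ Finset.range n.toNat, T (n - 1 - 2 * (k : ℤ))
  else -∑ k ∈ Finset.range (-n).toNat, T (-n - 1 - 2 * (k : ℤ))

lemma qint_one : qint 1 = 1 := by
  simp [qint]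

section Helpers

set_option linter.unusedSectionVars false

variable {ι M N : Type*} [AddCommGroup M] [Module ℝ M] [AddCommGroup N] [Module ℝ N]
    [Finite ι] (P : RootPairing ι ℝ M N)
    (B : M →ₗ[ℝ] M →ₗ[ℝ] ℝ)

lemma coeff_eq (hBinv : ∀ (i : ι) (x y : M), B (P.reflection i x) (P.reflection i y) = B x y)
    (i : ι) (x : M) :
    P.coroot' i x * B (P.root i) (P.root i) = 2 * B x (P.root i) := by
  have h1 := hBinv i x (P.root i)
  rw [P.reflection_apply_self, P.reflection_apply] at h1
  simp only [map_sub, map_smul, map_neg, LinearMap.sub_apply, LinearMap.smul_apply,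
    LinearMap.neg_apply, smul_eq_mul] at h1
  linarith

/-- Integrality of `2 B x y / B y y` for roots `x`, `y`. -/
lemma pairB (hcrys : P.IsCrystallographic)
    (hBinv : ∀ (i : ι) (x y : M), B (P.reflection i x) (P.reflection i y) = B x y)
    (x y : M) (hx : x ∈ Set.range P.root) (hy : y ∈ Set.range P.root) :
    ∃ z : ℤ, (z : ℝ) * B y y = 2 * B x y := by
  obtain ⟨j, rfl⟩ := hx
  obtain ⟨i, rfl⟩ := hy
  obtain ⟨z, hz⟩ := hcrys.exists_value j i
  simp only [algebraMap_int_eq, eq_intCast] at hz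
  refine ⟨z, ?_⟩
  have := coeff_eq P B hBinv i (P.root j)
  rwa [P.root_coroot'_eq_pairing, ← hz] at this

/-- Strict Cauchy-Schwarz. -/
lemma strictCS (hBsymm : ∀ x y : M, B x y = B y x)
    (hBpos : ∀ x : M, x ≠ 0 → 0 < B x x)
    (u v : M) (huv : LinearIndependent ℝ ![u, v]) :
    (B u v) ^ 2 < B u u * B v v := by
  have hv0 : v ≠ 0 := by
    have := huv.ne_zero 1
    simpa using this
  have hvpos := hBpos v hv0
  have hw : (B v v) • u - (B u v) • v ≠ 0 := by
    intro h
    rw [sub_eq_zero] at h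
    have := (LinearIndependent.pair_iff.mp huv (B v v) (-(B u v)) (by
      rw [neg_smul, ← sub_eq_add_neg, h, sub_self])).1
    exact absurd this (ne_of_gt hvpos)
  have hpos := hBpos _ hw
  have hexp : B ((B v v) • u - (B u v) • v) ((B v v) • u - (B u v) • v)
      = B v v * (B u u * B v v - (B u v) ^ 2) := by
    simp only [map_sub, map_smul, LinearMap.sub_apply, LinearMap.smul_apply, smul_eq_mul]
    rw [hBsymm v u]
    ring
  rw [hexp] at hpos
  nlinarith [hvpos, hpos]

end Helpers

section Orbit

set_option linter.unusedSectionVars false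

variable {ι M N : Type*} [AddCommGroup M] [Module ℝ M] [AddCommGroup N] [Module ℝ N]
    [Finite ι] (P : RootPairing ι ℝ M N)
    (B : M →ₗ[ℝ] M →ₗ[ℝ] ℝ)

lemma orbit_lemma
    (hBinv : ∀ (i : ι) (x y : M), B (P.reflection i x) (P.reflection i y) = B x y)
    (hnorm : ∀ i : ι, 2 ≤ B (P.root i) (P.root i))
    (hirred : ∀ s : Set ι, s.Nonempty → sᶜ.Nonempty →
      ∃ i ∈ s, ∃ j ∈ sᶜ, B (P.root i) (P.root j) ≠ 0)
    (i0 j0 : ι) :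
    ∃ z ∈ Set.range P.root, B z z = B (P.root i0) (P.root i0) ∧ B z (P.root j0) ≠ 0 := by
  classical
  set G := Submonoid.closure (Set.range fun i => (P.reflection i : M ≃ₗ[ℝ] M)) with hG
  have hGprop : ∀ w ∈ G, (∀ j : ι, ∃ j', w (P.root j) = P.root j') ∧
      ∀ u v : M, B (w u) (w v) = B u v := by
    intro w hw
    induction hw using Submonoid.closure_induction with
    | mem s hs =>
      obtain ⟨i, rfl⟩ := hs
      exact ⟨fun j => ⟨P.reflectionPerm i j, (P.root_reflectionPerm i j).symm⟩,
        fun u v => hBinv i u v⟩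
    | one => exact ⟨fun j => ⟨j, rfl⟩, fun u v => rfl⟩
    | mul a b ha hb iha ihb =>
      refine ⟨fun j => ?_, fun u v => ?_⟩
      · obtain ⟨j', hj'⟩ := ihb.1 j
        obtain ⟨j'', hj''⟩ := iha.1 j'
        refine ⟨j'', ?_⟩
        show a (b (P.root j)) = P.root j''
        rw [hj', hj'']
      · show B (a (b u)) (a (b v)) = B u v
        rw [iha.2 (b u) (b v), ihb.2 u v]
  set O : Set M := {y | ∃ w ∈ G, w (P.root i0) = y} with hO
  set U : Submodule ℝ M := Submodule.span ℝ O with hU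
  have hOx : P.root i0 ∈ O := ⟨1, one_mem G, rfl⟩
  have hBne : ∀ i : ι, B (P.root i) (P.root i) ≠ 0 := fun i => by
    have := hnorm i; positivity
  have hUrefl : ∀ (i : ι), ∀ u ∈ U, P.reflection i u ∈ U := by
    intro i u hu
    induction hu using Submodule.span_induction with
    | mem y hy =>
      obtain ⟨w, hw, rfl⟩ := hy
      refine Submodule.subset_span ⟨P.reflection i * w, mul_mem ?_ hw, rfl⟩
      exact Submonoid.subset_closure ⟨i, rfl⟩
    | zero => simpa using U.zero_mem
    | add x y hx hy ihx ihy => simpa [map_add] using U.add_mem ihx ihy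
    | smul a x hx ihx => simpa [map_smul] using U.smul_mem a ihx
  have hUorth : ∀ j : ι, P.root j ∈ U ∨ ∀ u ∈ U, B u (P.root j) = 0 := by
    intro j
    by_cases hj : P.root j ∈ U
    · exact Or.inl hj
    · refine Or.inr fun u hu => ?_
      by_contra hne
      have h1 : P.reflection j u ∈ U := hUrefl j u hu
      have h2 : (P.coroot' j u) • P.root j ∈ U := by
        have h3 := U.sub_mem hu h1
        rwa [P.reflection_apply, sub_sub_cancel] at h3
      have hc : P.coroot' j u ≠ 0 := by
        intro h0
        have h4 := coeff_eq P B hBinv j u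
        rw [h0, zero_mul] at h4
        exact hne (by linarith)
      have h5 := U.smul_mem (P.coroot' j u)⁻¹ h2
      rw [smul_smul, inv_mul_cancel₀ hc, one_smul] at h5
      exact hj h5
  have hall : ∀ j : ι, P.root j ∈ U := by
    by_contra hno
    push_neg at hno
    obtain ⟨j1, hj1⟩ := hno
    obtain ⟨i, hi, j, hj, hBij⟩ := hirred {i | P.root i ∈ U}
      ⟨i0, Submodule.subset_span hOx⟩ ⟨j1, hj1⟩
    rcases hUorth j with h | h
    · exact hj h
    · exact hBij (h _ hi)
  have hexists : ∃ y ∈ O, B y (P.root j0) ≠ 0 := by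
    by_contra hcon
    push_neg at hcon
    have hvan : ∀ u ∈ U, B u (P.root j0) = 0 := by
      intro u hu
      induction hu using Submodule.span_induction with
      | mem y hy => exact hcon y hy
      | zero => simp
      | add x y hx hy ihx ihy => simp [ihx, ihy]
      | smul a x hx ihx => simp [ihx]
    exact hBne j0 (hvan (P.root j0) (hall j0))
  obtain ⟨y, ⟨w, hw, rfl⟩, hy⟩ := hexists
  obtain ⟨hwroot, hwB⟩ := hGprop w hw
  obtain ⟨j', hj'⟩ := hwroot i0
  exact ⟨w (P.root i0), ⟨j', hj'.symm⟩, hwB (P.root i0) (P.root i0), hy⟩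

end Orbit

section Ratio

set_option linter.unusedSectionVars false
set_option linter.unnecessarySimpa false

variable {ι M N : Type*} [AddCommGroup M] [Module ℝ M] [AddCommGroup N] [Module ℝ N]
    [Finite ι] (P : RootPairing ι ℝ M N)
    (B : M →ₗ[ℝ] M →ₗ[ℝ] ℝ)

lemma ratio_lemma (hcrys : P.IsCrystallographic) (hred : P.IsReduced)
    (hBsymm : ∀ x y : M, B x y = B y x)
    (hBpos : ∀ x : M, x ≠ 0 → 0 < B x x)
    (hBinv : ∀ (i : ι) (x y : M), B (P.reflection i x) (P.reflection i y) = B x y)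
    (hnorm : ∀ i : ι, 2 ≤ B (P.root i) (P.root i))
    (i j : ι) (hBij : B (P.root i) (P.root j) ≠ 0) :
    B (P.root i) (P.root i) = B (P.root j) (P.root j) ∨
    ∃ m n : ℤ, 1 ≤ m ∧ 1 ≤ n ∧ m * n ≤ 3 ∧
      (m : ℝ) * B (P.root j) (P.root j) = (n : ℝ) * B (P.root i) (P.root i) := by
  by_cases hdep : LinearIndependent ℝ ![P.root i, P.root j]
  · right
    obtain ⟨m, hm⟩ := pairB P B hcrys hBinv (P.root i) (P.root j) ⟨i, rfl⟩ ⟨j, rfl⟩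
    obtain ⟨n, hn⟩ := pairB P B hcrys hBinv (P.root j) (P.root i) ⟨j, rfl⟩ ⟨i, rfl⟩
    rw [hBsymm (P.root j) (P.root i)] at hn
    have hCS := strictCS B hBsymm hBpos (P.root i) (P.root j) hdep
    have hBi : (0:ℝ) < B (P.root i) (P.root i) := by linarith [hnorm i]
    have hBj : (0:ℝ) < B (P.root j) (P.root j) := by linarith [hnorm j]
    -- m n * (Bii * Bjj) = 4 (Bij)^2 < 4 Bii Bjj  ⇒  m*n < 4
    have hmn4 : (m : ℝ) * n < 4 := by
      have h1 : (m:ℝ) * n * (B (P.root j) (P.root j) * B (P.root i) (P.root i))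
          = 4 * (B (P.root i) (P.root j))^2 := by
        calc (m:ℝ) * n * (B (P.root j) (P.root j) * B (P.root i) (P.root i))
            = ((m:ℝ) * B (P.root j) (P.root j)) * ((n:ℝ) * B (P.root i) (P.root i)) := by ring
          _ = (2 * B (P.root i) (P.root j)) * (2 * B (P.root i) (P.root j)) := by rw [hm, hn]
          _ = 4 * (B (P.root i) (P.root j))^2 := by ring
      nlinarith [mul_pos hBj hBi]
    have hmn0 : (0:ℝ) < (m : ℝ) * n := by
      have h1 : (m:ℝ) * n * (B (P.root j) (P.root j) * B (P.root i) (P.root i))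
          = 4 * (B (P.root i) (P.root j))^2 := by
        calc (m:ℝ) * n * (B (P.root j) (P.root j) * B (P.root i) (P.root i))
            = ((m:ℝ) * B (P.root j) (P.root j)) * ((n:ℝ) * B (P.root i) (P.root i)) := by ring
          _ = 4 * (B (P.root i) (P.root j))^2 := by rw [hm, hn]; ring
      have h2 : (0:ℝ) < 4 * (B (P.root i) (P.root j))^2 := by positivity
      nlinarith [mul_pos hBj hBi]
    have hmn0' : (0:ℤ) < m * n := by
      have h0 : ((m * n : ℤ) : ℝ) > 0 := by push_cast; linarith
      exact_mod_cast h0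
    have hmn3 : m * n ≤ 3 := by
      have h0 : ((m * n : ℤ) : ℝ) < 4 := by push_cast; linarith
      have h4 : (m * n : ℤ) < 4 := by exact_mod_cast h0
      omega
    -- m and n have the same sign as B root i root j
    have hsame : 0 < m ∧ 0 < n ∨ m < 0 ∧ n < 0 := by
      rcases pos_and_pos_or_neg_and_neg_of_mul_pos hmn0' with h | h
      · exact Or.inl h
      · exact Or.inr h
    rcases hsame with ⟨hm1, hn1⟩ | ⟨hm1, hn1⟩
    · exact ⟨m, n, hm1, hn1, hmn3, by rw [hm, hn]⟩
    · refine ⟨-m, -n, by omega, by omega, by nlinarith [hmn3], ?_⟩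
      push_cast
      rw [neg_mul, neg_mul, hm, hn]
  · rcases hred.eq_or_eq_neg i j hdep with h | h
    · left; rw [h]
    · left; rw [h]; simp

lemma length_lemma (hcrys : P.IsCrystallographic) (hred : P.IsReduced)
    (hBsymm : ∀ x y : M, B x y = B y x)
    (hBpos : ∀ x : M, x ≠ 0 → 0 < B x x)
    (hBinv : ∀ (i : ι) (x y : M), B (P.reflection i x) (P.reflection i y) = B x y)
    (hnorm : ∀ i : ι, 2 ≤ B (P.root i) (P.root i))
    (hshort : ∃ i : ι, B (P.root i) (P.root i) = 2)
    (hirred : ∀ s : Set ι, s.Nonempty → sᶜ.Nonempty →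
      ∃ i ∈ s, ∃ j ∈ sᶜ, B (P.root i) (P.root j) ≠ 0)
    (j : ι) :
    B (P.root j) (P.root j) = 2 ∨ B (P.root j) (P.root j) = 4 ∨
      B (P.root j) (P.root j) = 6 := by
  obtain ⟨is, his⟩ := hshort
  obtain ⟨z, ⟨jz, hjz⟩, hzz, hzy⟩ := orbit_lemma P B hBinv hnorm hirred j is
  rw [← hjz] at hzz hzy
  rcases ratio_lemma P B hcrys hred hBsymm hBpos hBinv hnorm jz is hzy with h | ⟨m, n, hm, hn, hmn, heq⟩
  · left; rw [← hzz, h, his]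
  · rw [his, hzz] at heq
    -- m * 2 = n * Bjj, Bjj ≥ 2
    have hBj : (2:ℝ) ≤ B (P.root j) (P.root j) := hnorm j
    have hnR : (1:ℝ) ≤ (n:ℝ) := by exact_mod_cast hn
    have hkey : (0:ℝ) ≤ (n:ℝ) * (B (P.root j) (P.root j) - 2) :=
      mul_nonneg (by linarith) (by linarith)
    have hexp : (n:ℝ) * B (P.root j) (P.root j)
        = (n:ℝ) * 2 + (n:ℝ) * (B (P.root j) (P.root j) - 2) := by ring
    have hmge : n ≤ m := by
      have : (n:ℝ) ≤ (m:ℝ) := by linarith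
      exact_mod_cast this
    have hn1 : n = 1 := by
      by_contra hc
      have h2 : (2:ℤ) ≤ n := by omega
      have h3 : (2:ℤ) * 2 ≤ m * n := mul_le_mul (by omega) h2 (by omega) (by omega)
      omega
    subst hn1
    have hm3 : m ≤ 3 := by omega
    interval_cases m
    · left; push_cast at heq; linarith
    · right; left; push_cast at heq; linarith
    · right; right; push_cast at heq; linarith

lemma coex_lemma (hcrys : P.IsCrystallographic) (hred : P.IsReduced)
    (hBsymm : ∀ x y : M, B x y = B y x)
    (hBpos : ∀ x : M, x ≠ 0 → 0 < B x x)
    (hBinv : ∀ (i : ι) (x y : M), B (P.reflection i x) (P.reflection i y) = B x y)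
    (hnorm : ∀ i : ι, 2 ≤ B (P.root i) (P.root i))
    (hirred : ∀ s : Set ι, s.Nonempty → sᶜ.Nonempty →
      ∃ i ∈ s, ∃ j ∈ sᶜ, B (P.root i) (P.root j) ≠ 0)
    (i j : ι) (h4 : B (P.root i) (P.root i) = 4) (h6 : B (P.root j) (P.root j) = 6) :
    False := by
  obtain ⟨z, ⟨jz, hjz⟩, hzz, hzy⟩ := orbit_lemma P B hBinv hnorm hirred i j
  rw [← hjz] at hzz hzy
  rcases ratio_lemma P B hcrys hred hBsymm hBpos hBinv hnorm jz j hzy with h | ⟨m, n, hm, hn, hmn, heq⟩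
  · rw [hzz, h4, h6] at h; norm_num at h
  · rw [h6, hzz, h4] at heq
    have hZ : m * 6 = n * 4 := by exact_mod_cast heq
    have hm2 : 2 ≤ m := by omega
    have hn3 : 3 ≤ n := by omega
    nlinarith

end Ratio


set_option maxHeartbeats 4000000 in
lemma enum (dA dB dG bg p k kb kg mB mG : ℤ)
    (hA : dA = 1 ∨ dA = 2 ∨ dA = 3)
    (hB : dB = 1 ∨ dB = 2 ∨ dB = 3)
    (hG : dG = 1 ∨ dG = 2 ∨ dG = 3)
    (hsum : dA = dB + dG + bg)
    (hkb : kb * dB = bg) (hkg : kg * dG = bg)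
    (hmB : mB * dA = 2 * dB + bg) (hmG : mG * dA = 2 * dG + bg)
    (hnoBG : ¬(dB = 2 ∧ dG = 3)) (hnoGB : ¬(dB = 3 ∧ dG = 2))
    (hnoAB : ¬(dA = 2 ∧ dB = 3)) (hnoBA : ¬(dA = 3 ∧ dB = 2))
    (hnoAG : ¬(dA = 2 ∧ dG = 3)) (hnoGA : ¬(dA = 3 ∧ dG = 2))
    (hp0 : 0 ≤ p)
    (hub : dB + p ^ 2 * dG - p * bg ≤ 3)
    (hk : k * dG = bg + 2 * dG) (hkp : k - 1 ≤ p) :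
    (dA = 1 ∧ dB = 1 ∧ dG = 1 ∧ bg = -1 ∧ (p = 0 ∨ p = 1)) ∨
    (dA = 2 ∧ dB = 1 ∧ dG = 1 ∧ bg = 0 ∧ p = 1) ∨
    (dA = 3 ∧ dB = 1 ∧ dG = 1 ∧ bg = 1 ∧ p = 2) ∨
    (dA = 1 ∧ dB = 1 ∧ dG = 2 ∧ bg = -2 ∧ p = 0) ∨
    (dA = 1 ∧ dB = 2 ∧ dG = 1 ∧ bg = -2 ∧ p = 0) ∨
    (dA = 1 ∧ dB = 1 ∧ dG = 3 ∧ bg = -3 ∧ p = 0) ∨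
    (dA = 1 ∧ dB = 3 ∧ dG = 1 ∧ bg = -3 ∧ p = 0) ∨
    (dA = 2 ∧ dB = 2 ∧ dG = 2 ∧ bg = -2 ∧ p = 0) ∨
    (dA = 3 ∧ dB = 3 ∧ dG = 3 ∧ bg = -3 ∧ p = 0) := by
  have hbgle : bg ≤ 1 := by omega
  have h1G : 1 ≤ dG := by omega
  have h1B : 1 ≤ dB := by omega
  rw [pow_two] at hub
  have e1 : 0 ≤ p * p * (dG - 1) := mul_nonneg (mul_nonneg hp0 hp0) (by omega)
  have e2 : 0 ≤ p * (1 - bg) := mul_nonneg hp0 (by omega)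
  have e3 : dB + p * p * dG - p * bg = dB + (p * p - p) + p * p * (dG - 1) + p * (1 - bg) := by
    ring
  have e4 : p * p - p ≤ 2 := by linarith
  have hp2 : p ≤ 2 := by
    by_contra hcon
    have e5 : 0 ≤ (p - 3) * p := mul_nonneg (by omega) hp0
    have e6 : (p - 3) * p = p * p - 3 * p := by ring
    linarith
  clear e1 e2 e3 e4
  rcases (show p = 0 ∨ p = 1 ∨ p = 2 by omega) with rfl | rfl | rfl <;>
    rcases hB with rfl | rfl | rfl <;> rcases hG with rfl | rfl | rfl <;>
      rcases hA with rfl | rfl | rfl <;>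
  first
  | (exfalso; omega)
  | (obtain rfl : bg = -1 := by omega
     exact Or.inl ⟨rfl, rfl, rfl, rfl, Or.inl rfl⟩)
  | (obtain rfl : bg = -1 := by omega
     exact Or.inl ⟨rfl, rfl, rfl, rfl, Or.inr rfl⟩)
  | (obtain rfl : bg = 0 := by omega
     exact Or.inr (Or.inl ⟨rfl, rfl, rfl, rfl, rfl⟩))
  | (obtain rfl : bg = 1 := by omega
     exact Or.inr (Or.inr (Or.inl ⟨rfl, rfl, rfl, rfl, rfl⟩)))
  | (obtain rfl : bg = -2 := by omega
     exact Or.inr (Or.inr (Or.inr (Or.inl ⟨rfl, rfl, rfl, rfl, rfl⟩))))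
  | (obtain rfl : bg = -2 := by omega
     exact Or.inr (Or.inr (Or.inr (Or.inr (Or.inl ⟨rfl, rfl, rfl, rfl, rfl⟩)))))
  | (obtain rfl : bg = -3 := by omega
     exact Or.inr (Or.inr (Or.inr (Or.inr (Or.inr (Or.inl ⟨rfl, rfl, rfl, rfl, rfl⟩))))))
  | (obtain rfl : bg = -3 := by omega
     exact Or.inr (Or.inr (Or.inr (Or.inr (Or.inr (Or.inr (Or.inl ⟨rfl, rfl, rfl, rfl, rfl⟩)))))))
  | (obtain rfl : bg = -2 := by omega
     exact Or.inr (Or.inr (Or.inr (Or.inr (Or.inr (Or.inr (Or.inr (Or.inl ⟨rfl, rfl, rfl, rfl, rfl⟩))))))))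
  | (obtain rfl : bg = -3 := by omega
     exact Or.inr (Or.inr (Or.inr (Or.inr (Or.inr (Or.inr (Or.inr (Or.inr ⟨rfl, rfl, rfl, rfl, rfl⟩))))))))



theorem stmt5 {ι M N : Type*} [AddCommGroup M] [Module ℝ M] [AddCommGroup N] [Module ℝ N]
    [Finite ι] (P : RootPairing ι ℝ M N) [P.IsRootSystem]
    (hcrys : P.IsCrystallographic) (hred : P.IsReduced)
    (B : M →ₗ[ℝ] M →ₗ[ℝ] ℝ)
    (hBsymm : ∀ x y : M, B x y = B y x)
    (hBpos : ∀ x : M, x ≠ 0 → 0 < B x x)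
    (hBinv : ∀ (i : ι) (x y : M), B (P.reflection i x) (P.reflection i y) = B x y)
    (hnorm : ∀ i : ι, 2 ≤ B (P.root i) (P.root i))
    (hshort : ∃ i : ι, B (P.root i) (P.root i) = 2)
    (hirred : ∀ s : Set ι, s.Nonempty → sᶜ.Nonempty →
      ∃ i ∈ s, ∃ j ∈ sᶜ, B (P.root i) (P.root j) ≠ 0)
    (Rplus : Set M)
    (hpos : ∃ f : M →ₗ[ℝ] ℝ, Rplus = {x | x ∈ Set.range P.root ∧ 0 < f x})
    (α β γ : M) (hα : α ∈ Rplus) (hβ : β ∈ Rplus) (hγ : γ ∈ Rplus) (hsum : β + γ = α)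
    (p : ℤ) (hp : β - p • γ ∈ Set.range P.root)
    (hpmax : ∀ q : ℤ, β - q • γ ∈ Set.range P.root → q ≤ p)
    (dA dB dG bg : ℤ)
    (hdA : (dA : ℝ) = B α α / 2) (hdB : (dB : ℝ) = B β β / 2)
    (hdG : (dG : ℝ) = B γ γ / 2) (hbg : (bg : ℝ) = B β γ) :
    dA * (p - bg) = dB * dG * (p + 1) ∧
      qint dA * qint (p - bg) = qint dB * qint dG * qint (p + 1) := by
  obtain ⟨f, hf⟩ := hpos
  have hroot : ∀ x ∈ Rplus, x ∈ Set.range P.root := fun x hx => by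
    rw [hf] at hx; exact hx.1
  obtain ⟨iα, hiα⟩ := hroot α hα
  obtain ⟨iβ, hiβ⟩ := hroot β hβ
  obtain ⟨iγ, hiγ⟩ := hroot γ hγ
  have hBβ : B β β = 2 * (dB:ℝ) := by rw [hdB]; ring
  have hBγ : B γ γ = 2 * (dG:ℝ) := by rw [hdG]; ring
  have hBα : B α α = 2 * (dA:ℝ) := by rw [hdA]; ring
  have hexp : B α α = B β β + 2 * B β γ + B γ γ := by
    rw [← hsum]
    simp only [map_add, LinearMap.add_apply]
    rw [hBsymm γ β]; ring
  have hsumZ : dA = dB + dG + bg := by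
    have h0 : (dA:ℝ) = (dB:ℝ) + (dG:ℝ) + (bg:ℝ) := by
      have := hexp
      rw [hBα, hBβ, hBγ, ← hbg] at this
      linarith
    exact_mod_cast h0
  have hlen : ∀ x ∈ Set.range P.root, B x x = 2 ∨ B x x = 4 ∨ B x x = 6 := by
    rintro x ⟨i, rfl⟩
    exact length_lemma P B hcrys hred hBsymm hBpos hBinv hnorm hshort hirred i
  have hdisj : ∀ (d : ℤ) (x : M), (d:ℝ) = B x x / 2 → x ∈ Set.range P.root →
      d = 1 ∨ d = 2 ∨ d = 3 := by
    intro d x hd hx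
    rcases hlen x hx with h | h | h
    · left; exact_mod_cast (by rw [hd, h]; norm_num : (d:ℝ) = 1)
    · right; left; exact_mod_cast (by rw [hd, h]; norm_num : (d:ℝ) = 2)
    · right; right; exact_mod_cast (by rw [hd, h]; norm_num : (d:ℝ) = 3)
  have hA3 := hdisj dA α hdA ⟨iα, hiα⟩
  have hB3 := hdisj dB β hdB ⟨iβ, hiβ⟩
  have hG3 := hdisj dG γ hdG ⟨iγ, hiγ⟩
  have hcoex : ∀ (d d' : ℤ) (x y : M), (d:ℝ) = B x x / 2 → (d':ℝ) = B y y / 2 →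
      x ∈ Set.range P.root → y ∈ Set.range P.root → ¬(d = 2 ∧ d' = 3) := by
    rintro d d' x y hd hd' ⟨i, rfl⟩ ⟨j, rfl⟩ ⟨h2, h3⟩
    refine coex_lemma P B hcrys hred hBsymm hBpos hBinv hnorm hirred i j ?_ ?_
    · rw [h2] at hd; push_cast at hd; linarith
    · rw [h3] at hd'; push_cast at hd'; linarith
  have hαmem : α ∈ Set.range P.root := ⟨iα, hiα⟩
  have hβmem : β ∈ Set.range P.root := ⟨iβ, hiβ⟩
  have hγmem : γ ∈ Set.range P.root := ⟨iγ, hiγ⟩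
  have hnoBG := hcoex dB dG β γ hdB hdG hβmem hγmem
  have hnoGB0 := hcoex dG dB γ β hdG hdB hγmem hβmem
  have hnoGB : ¬(dB = 3 ∧ dG = 2) := fun ⟨h1, h2⟩ => hnoGB0 ⟨h2, h1⟩
  have hnoAB := hcoex dA dB α β hdA hdB hαmem hβmem
  have hnoBA := hcoex dB dA β α hdB hdA hβmem hαmem
  have hnoAG := hcoex dA dG α γ hdA hdG hαmem hγmem
  have hnoGA := hcoex dG dA γ α hdG hdA hγmem hαmem
  have hnoBA' : ¬(dA = 3 ∧ dB = 2) := fun ⟨h1, h2⟩ => hnoBA ⟨h2, h1⟩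
  have hnoGA' : ¬(dA = 3 ∧ dG = 2) := fun ⟨h1, h2⟩ => hnoGA ⟨h2, h1⟩
  have hnoAB' : ¬(dA = 2 ∧ dB = 3) := fun ⟨h1, h2⟩ => hnoAB ⟨h1, h2⟩
  -- B β α and B γ α
  have hBβα : B β α = 2 * (dB:ℝ) + (bg:ℝ) := by
    rw [← hsum, map_add, hBβ, ← hbg]
  have hBγα : B γ α = (bg:ℝ) + 2 * (dG:ℝ) := by
    rw [← hsum, map_add, hBγ, hBsymm γ β, ← hbg]
  -- integrality
  obtain ⟨kb, hkbR⟩ := pairB P B hcrys hBinv γ β hγmem hβmem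
  have hkbZ : kb * dB = bg := by
    rw [hBβ, hBsymm γ β, ← hbg] at hkbR
    exact_mod_cast (by linarith : (kb:ℝ) * (dB:ℝ) = (bg:ℝ))
  obtain ⟨kg, hkgR⟩ := pairB P B hcrys hBinv β γ hβmem hγmem
  have hkgZ : kg * dG = bg := by
    rw [hBγ, ← hbg] at hkgR
    exact_mod_cast (by linarith : (kg:ℝ) * (dG:ℝ) = (bg:ℝ))
  obtain ⟨mB, hmBR⟩ := pairB P B hcrys hBinv β α hβmem hαmem
  have hmBZ : mB * dA = 2 * dB + bg := by
    rw [hBα, hBβα] at hmBR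
    exact_mod_cast (by linarith : (mB:ℝ) * (dA:ℝ) = 2 * (dB:ℝ) + (bg:ℝ))
  obtain ⟨mG, hmGR⟩ := pairB P B hcrys hBinv γ α hγmem hαmem
  have hmGZ : mG * dA = 2 * dG + bg := by
    rw [hBα, hBγα] at hmGR
    exact_mod_cast (by linarith : (mG:ℝ) * (dA:ℝ) = 2 * (dG:ℝ) + (bg:ℝ))
  obtain ⟨k, hkR⟩ := pairB P B hcrys hBinv α γ hαmem hγmem
  have hBαγ : B α γ = (bg:ℝ) + 2 * (dG:ℝ) := by rw [hBsymm α γ, hBγα]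
  have hkZ : k * dG = bg + 2 * dG := by
    rw [hBγ, hBαγ] at hkR
    exact_mod_cast (by linarith : (k:ℝ) * (dG:ℝ) = (bg:ℝ) + 2 * (dG:ℝ))
  -- the reflection of α in γ gives a lower bound for p
  have hBγne : B γ γ ≠ 0 := by rw [← hiγ]; have := hnorm iγ; positivity
  have hcork : P.coroot' iγ α = (k:ℝ) := by
    have h1 := coeff_eq P B hBinv iγ α
    rw [hiγ] at h1
    have h2 : (k:ℝ) * B γ γ = 2 * B α γ := hkR
    have := mul_right_cancel₀ hBγne (h1.trans h2.symm)
    exact this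
  have hreflmem : α - (k:ℝ) • γ ∈ Set.range P.root := by
    refine ⟨P.reflectionPerm iγ iα, ?_⟩
    rw [P.root_reflectionPerm, hiα, P.reflection_apply, hiγ, hcork]
  have hkp : k - 1 ≤ p := by
    refine hpmax (k-1) ?_
    have hsm : β - (k-1) • γ = α - (k:ℝ) • γ := by
      rw [← hsum, ← Int.cast_smul_eq_zsmul ℝ (k-1) γ]
      push_cast
      rw [sub_smul, one_smul]
      abel
    rwa [hsm]
  have hp0 : 0 ≤ p := hpmax 0 (by simpa using hβmem)
  -- upper bound
  have hxx : B (β - p • γ) (β - p • γ)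
      = 2*(dB:ℝ) - 2*(p:ℝ)*(bg:ℝ) + (p:ℝ)^2*(2*(dG:ℝ)) := by
    rw [← Int.cast_smul_eq_zsmul ℝ p γ]
    simp only [map_sub, map_smul, LinearMap.sub_apply, LinearMap.smul_apply, smul_eq_mul]
    rw [hBsymm γ β, hBβ, hBγ, ← hbg]
    ring
  have hubZ : dB + p^2 * dG - p * bg ≤ 3 := by
    have h6 : B (β - p • γ) (β - p • γ) ≤ 6 := by
      rcases hlen _ hp with h | h | h <;> linarith
    rw [hxx] at h6
    have h7 : (dB:ℝ) + (p:ℝ)^2*(dG:ℝ) - (p:ℝ)*(bg:ℝ) ≤ 3 := by linarith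
    exact_mod_cast h7
  -- enumeration
  rcases enum dA dB dG bg p k kb kg mB mG hA3 hB3 hG3 hsumZ hkbZ hkgZ hmBZ hmGZ
      hnoBG hnoGB hnoAB' hnoBA' hnoAG hnoGA' hp0 hubZ hkZ hkp with
    ⟨rfl, rfl, rfl, rfl, (rfl | rfl)⟩ | ⟨rfl, rfl, rfl, rfl, rfl⟩ |
    ⟨rfl, rfl, rfl, rfl, rfl⟩ | ⟨rfl, rfl, rfl, rfl, rfl⟩ | ⟨rfl, rfl, rfl, rfl, rfl⟩ |
    ⟨rfl, rfl, rfl, rfl, rfl⟩ | ⟨rfl, rfl, rfl, rfl, rfl⟩ | ⟨rfl, rfl, rfl, rfl, rfl⟩ |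
    ⟨rfl, rfl, rfl, rfl, rfl⟩ <;>
  exact ⟨by norm_num, by norm_num [qint_one]⟩
end

section
/- Let R be a finite, reduced, crystallographic, irreducible root system with a Weyl-invariant positive-definite symmetric bilinear form normalized so that short roots have squared length 2, and let R⁺ be a positive system. Suppose α, β, γ ∈ R⁺ with β + γ = α. Then: p_{β,γ} = 2 if d_α = 3 and d_β = d_γ = 1; p_{β,γ} = 1 if d_α = 2 and d_β = d_γ = 1; p_{β,γ} = 1 if d_α = d_β = d_γ = 1 and R contains a root δ with d_δ = 3 (i.e., R is of type G₂); and p_{β,γ} = 0 in all other cases. Moreover, in the last case one has d_α = min(d_β, d_γ). -/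
namespace Stmt6Aux

variable {ι M N : Type*} [AddCommGroup M] [Module ℝ M] [AddCommGroup N] [Module ℝ N]
    (P : RootPairing ι ℝ M N)
    (B : M →ₗ[ℝ] M →ₗ[ℝ] ℝ)

lemma cryst (hcrys : P.IsCrystallographic) (i j : ι) : ∃ z : ℤ, (z : ℝ) = P.pairing i j := by
  obtain ⟨z, hz⟩ := hcrys.exists_value i j
  exact ⟨z, by simpa using hz⟩

/-- Invariance forces the standard relation between pairing and the form. -/
lemma pairB (hBinv : ∀ (i : ι) (x y : M), B (P.reflection i x) (P.reflection i y) = B x y)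
    (i j : ι) :
    P.pairing i j * B (P.root j) (P.root j) = 2 * B (P.root i) (P.root j) := by
  have h := hBinv j (P.root i) (P.root j)
  rw [RootPairing.reflection_apply_root, RootPairing.reflection_apply_self] at h
  simp only [map_sub, map_smul, map_neg, LinearMap.sub_apply, LinearMap.smul_apply,
    LinearMap.neg_apply, smul_eq_mul] at h
  ring_nf at h ⊢
  linarith

/-- Strict Cauchy–Schwarz for a positive definite form. -/
lemma cs_strict (hBsymm : ∀ x y : M, B x y = B y x)
    (hBpos : ∀ x : M, x ≠ 0 → 0 < B x x) (x y : M)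
    (hli : LinearIndependent ℝ ![x, y]) :
    (B x y) ^ 2 < B x x * B y y := by
  have hx : x ≠ 0 := by
    intro h
    have := LinearIndependent.pair_iff.mp hli 1 0 (by simp [h])
    simp at this
  have hxx : 0 < B x x := hBpos x hx
  set c : ℝ := B x y / B x x with hc
  have hz : y - c • x ≠ 0 := by
    intro h
    have hyc : y = c • x := by
      rw [sub_eq_zero] at h; exact h
    have := LinearIndependent.pair_iff.mp hli (-c) 1 (by rw [hyc]; module)
    simp at this
  have hpos := hBpos _ hz
  have hexp : B (y - c • x) (y - c • x)
      = B y y - 2 * c * B x y + c ^ 2 * B x x := by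
    simp only [map_sub, map_smul, LinearMap.sub_apply, LinearMap.smul_apply, smul_eq_mul]
    rw [hBsymm y x]
    ring
  rw [hexp] at hpos
  have h2 : c * B x x = B x y := by
    rw [hc, div_mul_cancel₀ _ (ne_of_gt hxx)]
  nlinarith [hpos, h2]

/-- transport a root's length class along the irreducibility graph -/
lemma transport
    (hBsymm : ∀ x y : M, B x y = B y x)
    (hBinv : ∀ (i : ι) (x y : M), B (P.reflection i x) (P.reflection i y) = B x y)
    (hnorm : ∀ i : ι, 2 ≤ B (P.root i) (P.root i))
    (hirred : ∀ s : Set ι, s.Nonempty → sᶜ.Nonempty →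
      ∃ i ∈ s, ∃ j ∈ sᶜ, B (P.root i) (P.root j) ≠ 0) (i j : ι) :
    ∃ k : ι, B (P.root k) (P.root k) = B (P.root i) (P.root i)
      ∧ B (P.root k) (P.root j) ≠ 0 := by
  have hconn : Relation.ReflTransGen (fun a b => B (P.root a) (P.root b) ≠ 0) i j := by
    by_contra hj
    set s : Set ι := {k | Relation.ReflTransGen (fun a b => B (P.root a) (P.root b) ≠ 0) i k}
    obtain ⟨a, ha, b, hb, hab⟩ := hirred s ⟨i, Relation.ReflTransGen.refl⟩ ⟨j, hj⟩
    exact hb (Relation.ReflTransGen.tail ha hab)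
  induction hconn with
  | refl => exact ⟨i, rfl, by have := hnorm i; intro h; rw [h] at this; linarith⟩
  | @tail b c hib hbc ih =>
    obtain ⟨k, hk1, hk2⟩ := ih
    by_cases hkc : B (P.root k) (P.root c) ≠ 0
    · exact ⟨k, hk1, hkc⟩
    · push_neg at hkc
      refine ⟨P.reflectionPerm b k, ?_, ?_⟩
      · rw [P.root_reflectionPerm, hBinv b (P.root k) (P.root k), hk1]
      · rw [P.root_reflectionPerm]
        have hrc : P.root c = P.reflection b (P.reflection b (P.root c)) :=
          (P.reflection_same b (P.root c)).symm
        rw [hrc, hBinv b]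
        rw [RootPairing.reflection_apply_root]
        simp only [map_sub, map_smul, LinearMap.sub_apply, LinearMap.smul_apply, smul_eq_mul]
        rw [hkc, zero_sub, neg_ne_zero]
        have hpair : P.pairing c b ≠ 0 := by
          intro h0
          have := pairB P B hBinv c b
          rw [h0, zero_mul] at this
          have hcb : B (P.root c) (P.root b) = 0 := by linarith
          rw [hBsymm] at hcb
          exact hbc hcb
        exact mul_ne_zero hpair hk2

/-- dichotomy: linearly independent or equal up to sign -/
lemma li_or (hred : P.IsReduced) (i j : ι) :
    LinearIndependent ℝ ![P.root i, P.root j] ∨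
      P.root i = P.root j ∨ P.root i = - P.root j := by
  by_cases h : LinearIndependent ℝ ![P.root i, P.root j]
  · exact Or.inl h
  · exact Or.inr (hred.eq_or_eq_neg i j h)

lemma neg_root_eq (j : ι) : P.root (P.reflectionPerm j j) = - P.root j := by
  rw [P.root_reflectionPerm, RootPairing.reflection_apply_self]

/-- All root lengths are 2, 4 or 6. -/
lemma norms236 (hcrys : P.IsCrystallographic) (hred : P.IsReduced)
    (hBsymm : ∀ x y : M, B x y = B y x)
    (hBpos : ∀ x : M, x ≠ 0 → 0 < B x x)
    (hBinv : ∀ (i : ι) (x y : M), B (P.reflection i x) (P.reflection i y) = B x y)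
    (hnorm : ∀ i : ι, 2 ≤ B (P.root i) (P.root i))
    (hshort : ∃ i : ι, B (P.root i) (P.root i) = 2)
    (hirred : ∀ s : Set ι, s.Nonempty → sᶜ.Nonempty →
      ∃ i ∈ s, ∃ j ∈ sᶜ, B (P.root i) (P.root j) ≠ 0) (j : ι) :
    B (P.root j) (P.root j) = 2 ∨ B (P.root j) (P.root j) = 4 ∨
      B (P.root j) (P.root j) = 6 := by
  obtain ⟨i0, hi0⟩ := hshort
  obtain ⟨k, hk2, hkj⟩ := transport P B hBsymm hBinv hnorm hirred i0 j
  rw [hi0] at hk2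
  rcases li_or P hred k j with hli | hdep
  · -- independent case
    have hcs := cs_strict B hBsymm hBpos (P.root k) (P.root j) hli
    rw [hk2] at hcs
    obtain ⟨z1, hz1⟩ := cryst P hcrys k j
    obtain ⟨z2, hz2⟩ := cryst P hcrys j k
    have e1 : (z1 : ℝ) * B (P.root j) (P.root j) = 2 * B (P.root k) (P.root j) := by
      rw [hz1]; exact pairB P B hBinv k j
    have e2 : (z2 : ℝ) * 2 = 2 * B (P.root k) (P.root j) := by
      have h := pairB P B hBinv j k
      rw [hk2, ← hz2] at h
      rw [hBsymm (P.root k) (P.root j)]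
      linarith
    set nj := B (P.root j) (P.root j) with hnj
    set t := B (P.root k) (P.root j) with ht
    have hnj2 : (2:ℝ) ≤ nj := hnorm j
    have htz2 : t = (z2 : ℝ) := by linarith
    have hz2ne : z2 ≠ 0 := by
      intro h; rw [h] at htz2; simp at htz2; exact hkj htz2
    rw [htz2] at hcs e1
    have hz1ne : z1 ≠ 0 := by
      intro h
      rw [h] at e1
      simp at e1
      exact hz2ne (by exact_mod_cast e1)
    have hnjpos : (0:ℝ) < nj := by linarith
    have hz2r : (z2:ℝ) ≠ 0 := Int.cast_ne_zero.mpr hz2ne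
    have hz1r : (z1:ℝ) ≠ 0 := Int.cast_ne_zero.mpr hz1ne
    have key : (z1:ℝ) * (z2:ℝ) * nj = 2 * (z2:ℝ)^2 := by
      linear_combination (z2:ℝ) * e1
    have key2 : (z1:ℝ)^2 * nj = 2 * ((z1:ℝ) * z2) := by
      linear_combination (z1:ℝ) * e1
    have hz2sqpos : (0:ℝ) < (z2:ℝ)^2 := by positivity
    have hz1sqpos : (0:ℝ) < (z1:ℝ)^2 := by positivity
    have hwpos : (0:ℝ) < (z1:ℝ) * z2 := by nlinarith [key, hz2sqpos, hnjpos]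
    have hwlt : ((z1:ℝ) * z2)^2 < 4 * ((z1:ℝ) * z2) := by nlinarith [hcs, key2, hz1sqpos]
    have hwposZ : 0 < z1 * z2 := by exact_mod_cast hwpos
    have hwltZ : (z1 * z2)^2 < 4 * (z1 * z2) := by exact_mod_cast hwlt
    have hwle3 : z1 * z2 ≤ 3 := by nlinarith
    have hz1cases : z1 = 1 ∨ z1 = -1 ∨ 4 ≤ z1^2 := by
      rcases le_or_gt 2 z1 with h | h
      · right; right; nlinarith
      rcases le_or_gt z1 (-2) with h' | h'
      · right; right; nlinarith
      have : z1 = 1 ∨ z1 = -1 := by omega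
      tauto
    rcases hz1cases with h1 | h1 | h1
    · have hnj' : nj = 2 * (z2:ℝ) := by rw [h1] at e1; push_cast at e1; linarith
      have hp : 0 < z2 := by rw [h1] at hwposZ; simpa using hwposZ
      have h3 : z2 ≤ 3 := by rw [h1] at hwle3; simpa using hwle3
      interval_cases z2 <;> rw [hnj'] <;> norm_num
    · have hnj' : nj = -2 * (z2:ℝ) := by rw [h1] at e1; push_cast at e1; linarith
      have hp : z2 < 0 := by rw [h1] at hwposZ; omega
      have h3 : -3 ≤ z2 := by rw [h1] at hwle3; omega
      interval_cases z2 <;> rw [hnj'] <;> norm_num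
    · exfalso
      have h6R : ((z1:ℝ) * z2) ≤ 3 := by exact_mod_cast hwle3
      have h4R : (4:ℝ) ≤ (z1:ℝ)^2 := by exact_mod_cast h1
      nlinarith [key2, hnj2]
  · -- dependent: same length
    left
    rcases hdep with h | h
    · rw [← h, hk2]
    · have : B (P.root j) (P.root j) = B (P.root k) (P.root k) := by
        rw [h]; simp
      rw [this, hk2]

/-- lengths 4 and 6 cannot coexist -/
lemma no46 (hcrys : P.IsCrystallographic) (hred : P.IsReduced)
    (hBsymm : ∀ x y : M, B x y = B y x)
    (hBpos : ∀ x : M, x ≠ 0 → 0 < B x x)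
    (hBinv : ∀ (i : ι) (x y : M), B (P.reflection i x) (P.reflection i y) = B x y)
    (hnorm : ∀ i : ι, 2 ≤ B (P.root i) (P.root i))
    (hirred : ∀ s : Set ι, s.Nonempty → sᶜ.Nonempty →
      ∃ i ∈ s, ∃ j ∈ sᶜ, B (P.root i) (P.root j) ≠ 0)
    (h4 : ∃ i, B (P.root i) (P.root i) = 4) (h6 : ∃ j, B (P.root j) (P.root j) = 6) :
    False := by
  obtain ⟨u, hu⟩ := h4
  obtain ⟨v, hv⟩ := h6
  obtain ⟨k, hk4, hkv⟩ := transport P B hBsymm hBinv hnorm hirred u v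
  rw [hu] at hk4
  rcases li_or P hred k v with hli | hdep
  · have hcs := cs_strict B hBsymm hBpos (P.root k) (P.root v) hli
    rw [hk4, hv] at hcs
    obtain ⟨z1, hz1⟩ := cryst P hcrys k v
    obtain ⟨z2, hz2⟩ := cryst P hcrys v k
    have e1 : (z1 : ℝ) * 6 = 2 * B (P.root k) (P.root v) := by
      rw [hz1, ← hv]; exact pairB P B hBinv k v
    have e2 : (z2 : ℝ) * 4 = 2 * B (P.root k) (P.root v) := by
      rw [hz2, ← hk4, pairB P B hBinv v k, hBsymm]
    have hz1ne : z1 ≠ 0 := by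
      intro h; rw [h] at e1; simp at e1; exact hkv e1
    have h32 : 3 * z1 = 2 * z2 := by
      have : (3 * z1 : ℝ) = 2 * z2 := by push_cast; linarith
      exact_mod_cast this
    have heven : z1 % 2 = 0 := by omega
    have habs : 2 ≤ z1 ∨ z1 ≤ -2 := by omega
    have ht : B (P.root k) (P.root v) = 3 * (z1:ℝ) := by linarith
    rw [ht] at hcs
    rcases habs with h | h
    · have : (2:ℝ) ≤ (z1:ℝ) := by exact_mod_cast h
      nlinarith
    · have : (z1:ℝ) ≤ -2 := by exact_mod_cast h
      nlinarith
  · rcases hdep with h | h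
    · rw [h, hv] at hk4; norm_num at hk4
    · have : B (P.root k) (P.root k) = B (P.root v) (P.root v) := by rw [h]; simp
      rw [hk4, hv] at this; norm_num at this

/-- two roots with negative inner product sum to a root -/
lemma sum_mem (hcrys : P.IsCrystallographic) (hred : P.IsReduced)
    (hBsymm : ∀ x y : M, B x y = B y x)
    (hBpos : ∀ x : M, x ≠ 0 → 0 < B x x)
    (hBinv : ∀ (i : ι) (x y : M), B (P.reflection i x) (P.reflection i y) = B x y)
    (hnorm : ∀ i : ι, 2 ≤ B (P.root i) (P.root i))
    (i j : ι) (hlt : B (P.root i) (P.root j) < 0)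
    (hne : P.root i ≠ - P.root j) :
    P.root i + P.root j ∈ Set.range P.root := by
  have hli : LinearIndependent ℝ ![P.root i, P.root j] := by
    rcases li_or P hred i j with h | h | h
    · exact h
    · rw [h] at hlt; have := hnorm j; linarith
    · exact absurd h hne
  have hcs := cs_strict B hBsymm hBpos (P.root i) (P.root j) hli
  obtain ⟨z1, hz1⟩ := cryst P hcrys i j
  obtain ⟨z2, hz2⟩ := cryst P hcrys j i
  have e1 : (z1 : ℝ) * B (P.root j) (P.root j) = 2 * B (P.root i) (P.root j) := by
    rw [hz1]; exact pairB P B hBinv i j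
  have e2 : (z2 : ℝ) * B (P.root i) (P.root i) = 2 * B (P.root i) (P.root j) := by
    rw [hz2, pairB P B hBinv j i, hBsymm]
  have hni := hnorm i
  have hnj := hnorm j
  have hz1neg : (z1 : ℝ) < 0 := by nlinarith
  have hz2neg : (z2 : ℝ) < 0 := by nlinarith
  have hprod : (z1 : ℝ) * z2 < 4 := by nlinarith
  have hz1Z : z1 ≤ -1 := by
    have : z1 < 0 := by exact_mod_cast hz1neg
    omega
  have hz2Z : z2 ≤ -1 := by
    have : z2 < 0 := by exact_mod_cast hz2neg
    omega
  have hprodZ : z1 * z2 < 4 := by exact_mod_cast hprod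
  have hcase : z1 = -1 ∨ z2 = -1 := by
    by_contra hcon
    push_neg at hcon
    have h1 : z1 ≤ -2 := by omega
    have h2 : z2 ≤ -2 := by omega
    nlinarith
  rcases hcase with h | h
  · refine ⟨P.reflectionPerm j i, ?_⟩
    rw [P.root_reflectionPerm, RootPairing.reflection_apply_root, ← hz1, h]
    push_cast
    module
  · refine ⟨P.reflectionPerm i j, ?_⟩
    rw [P.root_reflectionPerm, RootPairing.reflection_apply_root, ← hz2, h]
    push_cast
    module

/-- two roots with positive inner product differ by a root -/
lemma diff_mem (hcrys : P.IsCrystallographic) (hred : P.IsReduced)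
    (hBsymm : ∀ x y : M, B x y = B y x)
    (hBpos : ∀ x : M, x ≠ 0 → 0 < B x x)
    (hBinv : ∀ (i : ι) (x y : M), B (P.reflection i x) (P.reflection i y) = B x y)
    (hnorm : ∀ i : ι, 2 ≤ B (P.root i) (P.root i))
    (i j : ι) (hgt : 0 < B (P.root i) (P.root j))
    (hne : P.root i ≠ P.root j) :
    P.root i - P.root j ∈ Set.range P.root := by
  have hneg := neg_root_eq P j
  have h1 : B (P.root i) (P.root (P.reflectionPerm j j)) < 0 := by
    rw [hneg]; simp only [map_neg, LinearMap.neg_apply]; linarith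
  have h2 : P.root i ≠ - P.root (P.reflectionPerm j j) := by
    rw [hneg, neg_neg]; exact hne
  have := sum_mem P B hcrys hred hBsymm hBpos hBinv hnorm i (P.reflectionPerm j j) h1 h2
  rw [hneg] at this
  simpa [sub_eq_add_neg] using this

end Stmt6Aux

open Stmt6Aux

set_option maxHeartbeats 1600000

/-- Let `R` be a finite, reduced, crystallographic, irreducible root system
with a Weyl-invariant positive definite symmetric bilinear form `B` normalized so that
short roots have squared length `2`, and let `Rplus` be a positive system.  Suppose
`α, β, γ` are positive roots with `β + γ = α`, and write `d_α = α·α/2` etc. and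
`p = p_{β,γ}`.  Then `p = 2` if `d_α = 3` and `d_β = d_γ = 1`; `p = 1` if `d_α = 2` and
`d_β = d_γ = 1`; `p = 1` if `d_α = d_β = d_γ = 1` and `R` contains a root of squared
length `6` (type `G₂`); and otherwise `p = 0` and moreover `d_α = min d_β d_γ`. -/
theorem stmt6 {ι M N : Type*} [AddCommGroup M] [Module ℝ M] [AddCommGroup N] [Module ℝ N]
    [Finite ι] (P : RootPairing ι ℝ M N) (hspan : Submodule.span ℝ (Set.range P.root) = ⊤)
    (hcrys : P.IsCrystallographic) (hred : P.IsReduced)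
    (B : M →ₗ[ℝ] M →ₗ[ℝ] ℝ)
    (hBsymm : ∀ x y : M, B x y = B y x)
    (hBpos : ∀ x : M, x ≠ 0 → 0 < B x x)
    (hBinv : ∀ (i : ι) (x y : M), B (P.reflection i x) (P.reflection i y) = B x y)
    (hnorm : ∀ i : ι, 2 ≤ B (P.root i) (P.root i))
    (hshort : ∃ i : ι, B (P.root i) (P.root i) = 2)
    (hirred : ∀ s : Set ι, s.Nonempty → sᶜ.Nonempty →
      ∃ i ∈ s, ∃ j ∈ sᶜ, B (P.root i) (P.root j) ≠ 0)
    (Rplus : Set M)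
    (hpos : ∃ f : M →ₗ[ℝ] ℝ, Rplus = {x | x ∈ Set.range P.root ∧ 0 < f x})
    (α β γ : M) (hα : α ∈ Rplus) (hβ : β ∈ Rplus) (hγ : γ ∈ Rplus) (hsum : β + γ = α)
    (p : ℤ) (hp : β - p • γ ∈ Set.range P.root)
    (hpmax : ∀ q : ℤ, β - q • γ ∈ Set.range P.root → q ≤ p)
    (dA dB dG : ℤ)
    (hdA : (dA : ℝ) = B α α / 2) (hdB : (dB : ℝ) = B β β / 2)
    (hdG : (dG : ℝ) = B γ γ / 2) :
    ((dA = 3 ∧ dB = 1 ∧ dG = 1) → p = 2) ∧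
    ((dA = 2 ∧ dB = 1 ∧ dG = 1) → p = 1) ∧
    ((dA = 1 ∧ dB = 1 ∧ dG = 1 ∧ ∃ i : ι, B (P.root i) (P.root i) = 6) → p = 1) ∧
    ((¬ (dA = 3 ∧ dB = 1 ∧ dG = 1) ∧ ¬ (dA = 2 ∧ dB = 1 ∧ dG = 1) ∧
        ¬ (dA = 1 ∧ dB = 1 ∧ dG = 1 ∧ ∃ i : ι, B (P.root i) (P.root i) = 6)) →
      p = 0 ∧ dA = min dB dG) := by
  classical
  obtain ⟨f, hRp⟩ := hpos
  rw [hRp] at hα hβ hγ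
  obtain ⟨ia, hia⟩ := hα.1
  obtain ⟨ib, hib⟩ := hβ.1
  obtain ⟨ic, hic⟩ := hγ.1
  -- basic norm values
  have hBαα : B α α = 2 * (dA:ℝ) := by rw [hdA]; ring
  have hBββ : B β β = 2 * (dB:ℝ) := by rw [hdB]; ring
  have hBγγ : B γ γ = 2 * (dG:ℝ) := by rw [hdG]; ring
  have hb : B β γ = (dA:ℝ) - dB - dG := by
    have h := hBαα
    rw [← hsum] at h
    simp only [map_add, LinearMap.add_apply] at h
    rw [hBsymm γ β] at h
    rw [hBββ, hBγγ] at h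
    linarith
  have hbAG : B α γ = (dA:ℝ) - dB + dG := by
    rw [← hsum]
    simp only [map_add, LinearMap.add_apply]
    rw [hb, hBγγ]; ring
  -- d are at least 1
  have hdA1 : 1 ≤ dA := by
    have := hnorm ia; rw [hia, hBαα] at this
    have : (1:ℝ) ≤ (dA:ℝ) := by linarith
    exact_mod_cast this
  have hdB1 : 1 ≤ dB := by
    have := hnorm ib; rw [hib, hBββ] at this
    have : (1:ℝ) ≤ (dB:ℝ) := by linarith
    exact_mod_cast this
  have hdG1 : 1 ≤ dG := by
    have := hnorm ic; rw [hic, hBγγ] at this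
    have : (1:ℝ) ≤ (dG:ℝ) := by linarith
    exact_mod_cast this
  have hN : ∀ j : ι, B (P.root j) (P.root j) = 2 ∨ B (P.root j) (P.root j) = 4 ∨
      B (P.root j) (P.root j) = 6 :=
    norms236 P B hcrys hred hBsymm hBpos hBinv hnorm hshort hirred
  -- β and γ are linearly independent
  have hLIbg : LinearIndependent ℝ ![P.root ib, P.root ic] := by
    rcases li_or P hred ib ic with h | h | h
    · exact h
    · exfalso
      rw [hib, hic] at h
      -- β = γ so α = 2γ has squared length 8dG ≥ 8
      have hα2 : α = (2:ℝ) • γ := by rw [← hsum, h]; module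
      have : B α α = 4 * (2 * (dG:ℝ)) := by
        rw [hα2]; simp only [map_smul, LinearMap.smul_apply, smul_eq_mul]
        rw [hBγγ]; ring
      rcases hN ia with hh | hh | hh <;> rw [hia, this] at hh <;>
        (have : (1:ℝ) ≤ (dG:ℝ) := by exact_mod_cast hdG1) <;> linarith
    · exfalso
      rw [hib, hic] at h
      have hα0 : α = 0 := by rw [← hsum, h]; abel
      have := hnorm ia
      rw [hia, hα0] at this
      simp at this
      linarith
  -- Cauchy-Schwarz for β, γ
  have hcsbg : ((dA:ℝ) - dB - dG)^2 < (2*(dB:ℝ)) * (2*(dG:ℝ)) := by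
    have := cs_strict B hBsymm hBpos (P.root ib) (P.root ic) hLIbg
    rw [hib, hic, hb, hBββ, hBγγ] at this
    exact this
  have hcsZ : (dA - dB - dG)^2 < 4 * dB * dG := by
    have : (((dA - dB - dG)^2 : ℤ) : ℝ) < ((4 * dB * dG : ℤ) : ℝ) := by push_cast; nlinarith
    exact_mod_cast this
  -- Cartan integers
  obtain ⟨zBG, hzBG⟩ := cryst P hcrys ib ic
  obtain ⟨zGB, hzGB⟩ := cryst P hcrys ic ib
  obtain ⟨zAG, hzAG⟩ := cryst P hcrys ia ic
  have hzBGe : zBG * dG = dA - dB - dG := by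
    have h := pairB P B hBinv ib ic
    rw [hib, hic, ← hzBG, hBγγ, hb] at h
    have : ((zBG * dG : ℤ) : ℝ) = ((dA - dB - dG : ℤ) : ℝ) := by push_cast; linarith
    exact_mod_cast this
  have hzGBe : zGB * dB = dA - dB - dG := by
    have h := pairB P B hBinv ic ib
    rw [hic, hib, ← hzGB, hBββ, hBsymm γ β, hb] at h
    have : ((zGB * dB : ℤ) : ℝ) = ((dA - dB - dG : ℤ) : ℝ) := by push_cast; linarith
    exact_mod_cast this
  have hzAGe : zAG * dG = dA - dB + dG := by
    have h := pairB P B hBinv ia ic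
    rw [hia, hic, hBγγ, ← hzAG, hbAG] at h
    have : ((zAG * dG : ℤ) : ℝ) = ((dA - dB + dG : ℤ) : ℝ) := by push_cast; linarith
    exact_mod_cast this
  have hzBG3 : zBG ≤ 3 := by
    by_contra hcon
    push_neg at hcon
    have hA : 4 ≤ zBG := by omega
    have he : (dA - dB - dG)^2 = (zBG * zGB) * (dG * dB) := by
      calc (dA - dB - dG)^2 = (zBG * dG) * (zGB * dB) := by rw [hzBGe, hzGBe]; ring
        _ = (zBG * zGB) * (dG * dB) := by ring
    have h1 : 0 < dA - dB - dG := by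
      rw [← hzBGe]
      nlinarith
    have h2 : 1 ≤ zGB := by
      by_contra h2c
      push_neg at h2c
      have hle : zGB ≤ 0 := by omega
      have : zGB * dB ≤ 0 := by
        have := mul_nonneg (by omega : (0:ℤ) ≤ -zGB) (by omega : (0:ℤ) ≤ dB)
        nlinarith
      omega
    have h4 : 4 ≤ zBG * zGB := by nlinarith
    have hpos : 0 < dG * dB := by nlinarith
    have h5 : 4 * (dG * dB) ≤ (zBG * zGB) * (dG * dB) :=
      mul_le_mul_of_nonneg_right h4 (le_of_lt hpos)
    have hcs2 : (dA - dB - dG)^2 < 4 * (dG * dB) := by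
      rw [show (4:ℤ) * (dG * dB) = 4 * dB * dG by ring]; exact hcsZ
    linarith [he, h5, hcs2]
  -- conversion of integer smul
  have hconv : ∀ t : ℤ, β - t • γ = β - ((t:ℝ)) • γ := by
    intro t; rw [Int.cast_smul_eq_zsmul]
  -- squared length of β - tγ
  have hval : ∀ t : ℝ, B (β - t • γ) (β - t • γ)
      = 2*(dB:ℝ) - 2*t*((dA:ℝ)-dB-dG) + t^2*(2*(dG:ℝ)) := by
    intro t
    simp only [map_sub, map_smul, LinearMap.sub_apply, LinearMap.smul_apply, smul_eq_mul]
    rw [hBsymm γ β, hb, hBββ, hBγγ]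
    ring
  -- descent
  have hdown : ∀ q : ℤ, 2 ≤ q → β - q • γ ∈ Set.range P.root →
      β - (q-1) • γ ∈ Set.range P.root := by
    intro q hq hmem
    obtain ⟨kx, hkx⟩ := hmem
    have hBx : B (P.root kx) (P.root ic) = ((dA:ℝ)-dB-dG) - (q:ℝ)*(2*(dG:ℝ)) := by
      rw [hkx, hconv, hic]
      simp only [map_sub, map_smul, LinearMap.sub_apply, LinearMap.smul_apply, smul_eq_mul]
      rw [hb, hBγγ]
    have hneg : B (P.root kx) (P.root ic) < 0 := by
      rw [hBx]
      have h1 : ((dA:ℝ)-dB-dG) = (zBG:ℝ) * (dG:ℝ) := by exact_mod_cast hzBGe.symm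
      have h2 : (zBG:ℝ) ≤ 3 := by exact_mod_cast hzBG3
      have h3 : (2:ℝ) ≤ (q:ℝ) := by exact_mod_cast hq
      have h4 : (1:ℝ) ≤ (dG:ℝ) := by exact_mod_cast hdG1
      have h7 : ((zBG:ℝ) - 2*q) * dG = (zBG:ℝ)*(dG:ℝ) - (q:ℝ)*(2*(dG:ℝ)) := by ring
      rw [h1, ← h7]
      have h5 : (zBG:ℝ) - 2*q ≤ -1 := by linarith
      have h6 : ((zBG:ℝ) - 2*q) * dG ≤ (-1) * dG :=
        mul_le_mul_of_nonneg_right h5 (by linarith)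
      linarith
    have hne : P.root kx ≠ - P.root ic := by
      rw [hkx, hic, hconv]
      intro h
      have h0 : β - ((q:ℝ) - 1) • γ = 0 := by
        rw [sub_smul, one_smul]
        rw [sub_eq_iff_eq_add] at h ⊢
        rw [h]; abel
      have := (LinearIndependent.pair_iff.mp hLIbg 1 (-((q:ℝ)-1))
        (by rw [hib, hic]; rw [one_smul, neg_smul]; rw [← sub_eq_add_neg]; exact h0)).1
      norm_num at this
    have hsummem := sum_mem P B hcrys hred hBsymm hBpos hBinv hnorm kx ic hneg hne
    rw [hkx, hic] at hsummem
    have : β - q • γ + γ = β - (q-1) • γ := by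
      rw [hconv, hconv]; push_cast; rw [sub_smul, one_smul]; abel
    rwa [this] at hsummem
  -- chain: everything between 1 and p is a root
  have hchain : ∀ t : ℤ, 1 ≤ t → t ≤ p → β - t • γ ∈ Set.range P.root := by
    have key : ∀ n : ℕ, ∀ t : ℤ, 1 ≤ t → t + n = p → β - t • γ ∈ Set.range P.root := by
      intro n
      induction n with
      | zero => intro t h1 h2; rw [show t = p by omega]; exact hp
      | succ m ih =>
        intro t h1 h2
        have hmem := ih (t+1) (by omega) (by omega)
        have := hdown (t+1) (by omega) hmem
        simpa using this
    intro t h1 h2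
    exact key (p - t).toNat t h1 (by omega)
  have hub : ∀ t : ℤ, 1 ≤ t → β - t • γ ∉ Set.range P.root → p ≤ t - 1 := by
    intro t h1 hmem
    by_contra hcon
    push_neg at hcon
    exact hmem (hchain t h1 (by omega))
  have hp0 : 0 ≤ p := by
    have := hpmax 0 (by rw [zero_smul, sub_zero]; exact ⟨ib, hib⟩)
    exact this
  -- world dichotomy
  have hworld : (∀ i : ι, B (P.root i) (P.root i) = 2 ∨ B (P.root i) (P.root i) = 4) ∨
      ((∃ j : ι, B (P.root j) (P.root j) = 6) ∧
        (∀ i : ι, B (P.root i) (P.root i) = 2 ∨ B (P.root i) (P.root i) = 6)) := by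
    by_cases h6 : ∃ j : ι, B (P.root j) (P.root j) = 6
    · right
      refine ⟨h6, fun i => ?_⟩
      rcases hN i with h | h | h
      · exact Or.inl h
      · exact (no46 P B hcrys hred hBsymm hBpos hBinv hnorm hirred ⟨i, h⟩ h6).elim
      · exact Or.inr h
    · left
      intro i
      rcases hN i with h | h | h
      · exact Or.inl h
      · exact Or.inr h
      · exact absurd ⟨i, h⟩ h6
  -- reflection of α in γ
  have hreflAG : α - (zAG:ℝ) • γ ∈ Set.range P.root :=
    ⟨P.reflectionPerm ic ia, by
      rw [P.root_reflectionPerm, RootPairing.reflection_apply_root, hia, hic, ← hzAG]⟩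
  have hone : β - (1:ℤ) • γ = β - γ := by
    rw [hconv]; push_cast; rw [one_smul]
  refine ⟨?_, ?_, ?_, ?_⟩
  · -- case 1 : dA = 3, dB = dG = 1, G₂ long root situation
    rintro ⟨ha3, hb1, hg1⟩
    have hbBG : B β γ = 1 := by rw [hb, ha3, hb1, hg1]; norm_num
    have hzag3 : zAG = 3 := by rw [ha3, hb1, hg1] at hzAGe; omega
    -- β - 2γ is a root
    have hm2 : β - (2:ℤ) • γ ∈ Set.range P.root := by
      have heq : α - (zAG:ℝ) • γ = β - (2:ℤ) • γ := by
        rw [hzag3, ← hsum, hconv]; push_cast; module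
      rw [← heq]; exact hreflAG
    -- β - γ is a root
    have hm1 : β - (1:ℤ) • γ ∈ Set.range P.root := by
      have hne : P.root ib ≠ P.root ic := by
        rw [hib, hic]
        intro h
        rw [h, hBγγ, hg1] at hbBG
        norm_num at hbBG
      have hgt : 0 < B (P.root ib) (P.root ic) := by rw [hib, hic, hbBG]; norm_num
      have hd := diff_mem P B hcrys hred hBsymm hBpos hBinv hnorm ib ic hgt hne
      rw [hib, hic] at hd
      rwa [hone]
    -- β - 3γ is not a root
    have hm3 : β - (3:ℤ) • γ ∉ Set.range P.root := by
      rintro ⟨k, hk⟩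
      have h2 : P.root k = β - ((3:ℤ):ℝ) • γ := by rw [hk]; exact hconv 3
      have hkval := hval ((3:ℤ):ℝ)
      rw [← h2, ha3, hb1, hg1] at hkval
      rcases hN k with h | h | h <;> rw [h] at hkval <;> push_cast at hkval <;>
        norm_num at hkval
    have hge := hpmax 2 hm2
    have hle := hub 3 (by norm_num) hm3
    omega
  · -- case 2 : dA = 2, dB = dG = 1
    rintro ⟨ha2, hb1, hg1⟩
    have hzag2 : zAG = 2 := by rw [ha2, hb1, hg1] at hzAGe; omega
    have hm1 : β - (1:ℤ) • γ ∈ Set.range P.root := by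
      have heq : α - (zAG:ℝ) • γ = β - (1:ℤ) • γ := by
        rw [hzag2, ← hsum, hconv]; push_cast; module
      rw [← heq]; exact hreflAG
    have hm2 : β - (2:ℤ) • γ ∉ Set.range P.root := by
      rintro ⟨k, hk⟩
      have h2 : P.root k = β - ((2:ℤ):ℝ) • γ := by rw [hk]; exact hconv 2
      have hkval := hval ((2:ℤ):ℝ)
      rw [← h2, ha2, hb1, hg1] at hkval
      rcases hN k with h | h | h <;> rw [h] at hkval <;> push_cast at hkval <;>
        norm_num at hkval
    have hge := hpmax 1 hm1
    have hle := hub 2 (by norm_num) hm2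
    omega
  · -- case 3 : all short, G₂ present
    rintro ⟨ha1, hb1, hg1, h6⟩
    have hbBG : B β γ = -1 := by rw [hb, ha1, hb1, hg1]; norm_num
    have hBγγ2 : B γ γ = 2 := by rw [hBγγ, hg1]; norm_num
    have hBββ2 : B β β = 2 := by rw [hBββ, hb1]; norm_num
    have hBαα2 : B α α = 2 := by rw [hBαα, ha1]; norm_num
    -- find a long root δ with B δ γ = 3
    obtain ⟨i6, hi6⟩ := h6
    obtain ⟨k, hk6, hkc⟩ := transport P B hBsymm hBinv hnorm hirred i6 ic
    rw [hi6] at hk6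
    rw [hic] at hkc
    have hLIkc : LinearIndependent ℝ ![P.root k, P.root ic] := by
      rcases li_or P hred k ic with h | h | h
      · exact h
      · exfalso; rw [h, hic, hBγγ2] at hk6; norm_num at hk6
      · exfalso
        have : B (P.root k) (P.root k) = B (P.root ic) (P.root ic) := by
          rw [h]; simp
        rw [hk6, hic, hBγγ2] at this; norm_num at this
    have hcs := cs_strict B hBsymm hBpos (P.root k) (P.root ic) hLIkc
    rw [hk6, hic, hBγγ2] at hcs
    obtain ⟨z2, hz2⟩ := cryst P hcrys ic k
    have e2 : (z2:ℝ) * 6 = 2 * B (P.root k) γ := by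
      have h := pairB P B hBinv ic k
      rw [hic, ← hz2, hk6, hBsymm γ (P.root k)] at h
      exact h
    have ht3 : B (P.root k) γ = 3 * (z2:ℝ) := by linarith
    have hz2ne : z2 ≠ 0 := by
      intro h; rw [h] at ht3; norm_num at ht3; exact hkc ht3
    have hz2sq : z2 = 1 ∨ z2 = -1 := by
      have h9' : 9 * (z2:ℝ)^2 < 12 := by rw [ht3] at hcs; nlinarith [hcs]
      have hb1' : -1 ≤ z2 ∧ z2 ≤ 1 := by
        constructor <;> (by_contra hcon; push_neg at hcon)
        · have : (z2:ℝ) ≤ -2 := by exact_mod_cast (by omega : z2 ≤ -2)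
          nlinarith
        · have : (2:ℝ) ≤ (z2:ℝ) := by exact_mod_cast (by omega : 2 ≤ z2)
          nlinarith
      omega
    have hdelta : ∃ k' : ι, B (P.root k') (P.root k') = 6 ∧ B (P.root k') γ = 3 := by
      rcases hz2sq with h | h
      · exact ⟨k, hk6, by rw [ht3, h]; norm_num⟩
      · refine ⟨P.reflectionPerm k k, ?_, ?_⟩
        · rw [neg_root_eq]
          simp only [map_neg, LinearMap.neg_apply, neg_neg]
          exact hk6
        · rw [neg_root_eq]
          simp only [map_neg, LinearMap.neg_apply]
          rw [ht3, h]; norm_num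
    obtain ⟨k', hk'6, hk'g⟩ := hdelta
    -- c = B δ β ∈ {-3, 0, 3}
    have hLIkb : LinearIndependent ℝ ![P.root k', P.root ib] := by
      rcases li_or P hred k' ib with h | h | h
      · exact h
      · exfalso; rw [h, hib, hBββ2] at hk'6; norm_num at hk'6
      · exfalso
        have : B (P.root k') (P.root k') = B (P.root ib) (P.root ib) := by rw [h]; simp
        rw [hk'6, hib, hBββ2] at this; norm_num at this
    have hcsb := cs_strict B hBsymm hBpos (P.root k') (P.root ib) hLIkb
    rw [hk'6, hib, hBββ2] at hcsb
    obtain ⟨z4, hz4⟩ := cryst P hcrys ib k'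
    have e4 : (z4:ℝ) * 6 = 2 * B (P.root k') β := by
      have h := pairB P B hBinv ib k'
      rw [hib, ← hz4, hk'6, hBsymm β (P.root k')] at h
      exact h
    have hc3 : B (P.root k') β = 3 * (z4:ℝ) := by linarith
    have hz4sq : z4 = 1 ∨ z4 = 0 ∨ z4 = -1 := by
      have h9' : 9 * (z4:ℝ)^2 < 12 := by rw [hc3] at hcsb; nlinarith [hcsb]
      have hb1' : -1 ≤ z4 ∧ z4 ≤ 1 := by
        constructor <;> (by_contra hcon; push_neg at hcon)
        · have : (z4:ℝ) ≤ -2 := by exact_mod_cast (by omega : z4 ≤ -2)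
          nlinarith
        · have : (2:ℝ) ≤ (z4:ℝ) := by exact_mod_cast (by omega : 2 ≤ z4)
          nlinarith
      omega
    -- in every case, β - γ is a root
    have hm1 : β - (1:ℤ) • γ ∈ Set.range P.root := by
      rw [hone]
      rcases hz4sq with hz | hz | hz
      · -- c = 3 : impossible
        exfalso
        have hcb : B (P.root k') β = 3 := by rw [hc3, hz]; norm_num
        have hca : B (P.root k') α = 6 := by
          rw [← hsum]
          simp only [map_add]
          rw [hcb, hk'g]; norm_num
        have hLIka : LinearIndependent ℝ ![P.root k', P.root ia] := by
          rcases li_or P hred k' ia with h | h | h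
          · exact h
          · exfalso; rw [h, hia, hBαα2] at hk'6; norm_num at hk'6
          · exfalso
            have : B (P.root k') (P.root k') = B (P.root ia) (P.root ia) := by rw [h]; simp
            rw [hk'6, hia, hBαα2] at this; norm_num at this
        have hcsa := cs_strict B hBsymm hBpos (P.root k') (P.root ia) hLIka
        rw [hk'6, hia, hBαα2, hca] at hcsa
        norm_num at hcsa
      · -- c = 0 : δ = β + 2γ, and β - γ = s_γ δ
        have hcb : B (P.root k') β = 0 := by rw [hc3, hz]; norm_num
        have hveq : P.root k' = β + (2:ℝ) • γ := by
          have hvv : B (P.root k' - (β + (2:ℝ) • γ)) (P.root k' - (β + (2:ℝ) • γ)) = 0 := by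
            simp only [map_sub, map_add, map_smul, LinearMap.sub_apply, LinearMap.add_apply,
              LinearMap.smul_apply, smul_eq_mul]
            rw [hBsymm β (P.root k'), hBsymm γ (P.root k'), hBsymm γ β]
            rw [hk'6, hcb, hk'g, hBββ2, hBγγ2, hbBG]
            ring
          by_contra hne
          have hne0 : P.root k' - (β + (2:ℝ) • γ) ≠ 0 := fun h => hne (by
            rw [sub_eq_zero] at h; exact h)
          exact absurd hvv (ne_of_gt (hBpos _ hne0))
        obtain ⟨z5, hz5⟩ := cryst P hcrys k' ic
        have e5 : (z5:ℝ) * 2 = 2 * B (P.root k') γ := by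
          have h := pairB P B hBinv k' ic
          rw [hic, ← hz5, hBγγ2] at h
          exact h
        have hz5v : (z5:ℝ) = 3 := by rw [hk'g] at e5; linarith
        refine ⟨P.reflectionPerm ic k', ?_⟩
        rw [P.root_reflectionPerm, RootPairing.reflection_apply_root, hic, ← hz5, hz5v, hveq]
        module
      · -- c = -3 : δ = γ - β, so β - γ = -δ
        have hcb : B (P.root k') β = -3 := by rw [hc3, hz]; norm_num
        have hveq : P.root k' = γ - β := by
          have hvv : B (P.root k' - (γ - β)) (P.root k' - (γ - β)) = 0 := by
            simp only [map_sub, LinearMap.sub_apply]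
            rw [hBsymm β (P.root k'), hBsymm γ (P.root k'), hBsymm γ β]
            rw [hk'6, hcb, hk'g, hBββ2, hBγγ2, hbBG]
            ring
          by_contra hne
          have hne0 : P.root k' - (γ - β) ≠ 0 := fun h => hne (by
            rw [sub_eq_zero] at h; exact h)
          exact absurd hvv (ne_of_gt (hBpos _ hne0))
        refine ⟨P.reflectionPerm k' k', ?_⟩
        rw [neg_root_eq, hveq]
        abel
    have hm2 : β - (2:ℤ) • γ ∉ Set.range P.root := by
      rintro ⟨k0, hk0⟩
      have h2 : P.root k0 = β - ((2:ℤ):ℝ) • γ := by rw [hk0]; exact hconv 2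
      have hkval := hval ((2:ℤ):ℝ)
      rw [← h2, ha1, hb1, hg1] at hkval
      rcases hN k0 with h | h | h <;> rw [h] at hkval <;> push_cast at hkval <;>
        norm_num at hkval
    have hge := hpmax 1 hm1
    have hle := hub 2 (by norm_num) hm2
    omega
  · -- case 4 : all the rest
    rintro ⟨n1, n2, n3⟩
    rcases hworld with hw | ⟨h6w, hw⟩
    · -- lengths 2 and 4 only
      have hdAv : dA = 1 ∨ dA = 2 := by
        rcases hw ia with h | h <;> rw [hia, hBαα] at h
        · left; exact_mod_cast (by linarith : (dA:ℝ) = 1)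
        · right; exact_mod_cast (by linarith : (dA:ℝ) = 2)
      have hdBv : dB = 1 ∨ dB = 2 := by
        rcases hw ib with h | h <;> rw [hib, hBββ] at h
        · left; exact_mod_cast (by linarith : (dB:ℝ) = 1)
        · right; exact_mod_cast (by linarith : (dB:ℝ) = 2)
      have hdGv : dG = 1 ∨ dG = 2 := by
        rcases hw ic with h | h <;> rw [hic, hBγγ] at h
        · left; exact_mod_cast (by linarith : (dG:ℝ) = 1)
        · right; exact_mod_cast (by linarith : (dG:ℝ) = 2)
      rcases hdAv with rfl | rfl <;> rcases hdBv with rfl | rfl <;> rcases hdGv with rfl | rfl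
      · (refine ⟨?_, by omega⟩
         have hple : p ≤ 0 := by
           by_contra hcp
           push_neg at hcp
           obtain ⟨k, hk⟩ := hchain 1 (by omega) (by omega)
           have h2 : P.root k = β - ((1:ℤ):ℝ) • γ := by rw [hk]; exact hconv 1
           have hkval := hval ((1:ℤ):ℝ)
           rw [← h2] at hkval
           rcases hw k with h | h <;> rw [h] at hkval <;> push_cast at hkval <;>
             norm_num at hkval
         omega)
      · (refine ⟨?_, by omega⟩
         have hple : p ≤ 0 := by
           by_contra hcp
           push_neg at hcp
           obtain ⟨k, hk⟩ := hchain 1 (by omega) (by omega)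
           have h2 : P.root k = β - ((1:ℤ):ℝ) • γ := by rw [hk]; exact hconv 1
           have hkval := hval ((1:ℤ):ℝ)
           rw [← h2] at hkval
           rcases hw k with h | h <;> rw [h] at hkval <;> push_cast at hkval <;>
             norm_num at hkval
         omega)
      · (refine ⟨?_, by omega⟩
         have hple : p ≤ 0 := by
           by_contra hcp
           push_neg at hcp
           obtain ⟨k, hk⟩ := hchain 1 (by omega) (by omega)
           have h2 : P.root k = β - ((1:ℤ):ℝ) • γ := by rw [hk]; exact hconv 1
           have hkval := hval ((1:ℤ):ℝ)
           rw [← h2] at hkval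
           rcases hw k with h | h <;> rw [h] at hkval <;> push_cast at hkval <;>
             norm_num at hkval
         omega)
      · omega
      · exact absurd ⟨rfl, rfl, rfl⟩ n2
      · omega
      · omega
      · (refine ⟨?_, by omega⟩
         have hple : p ≤ 0 := by
           by_contra hcp
           push_neg at hcp
           obtain ⟨k, hk⟩ := hchain 1 (by omega) (by omega)
           have h2 : P.root k = β - ((1:ℤ):ℝ) • γ := by rw [hk]; exact hconv 1
           have hkval := hval ((1:ℤ):ℝ)
           rw [← h2] at hkval
           rcases hw k with h | h <;> rw [h] at hkval <;> push_cast at hkval <;>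
             norm_num at hkval
         omega)
    · -- lengths 2 and 6 only
      have hdAv : dA = 1 ∨ dA = 3 := by
        rcases hw ia with h | h <;> rw [hia, hBαα] at h
        · left; exact_mod_cast (by linarith : (dA:ℝ) = 1)
        · right; exact_mod_cast (by linarith : (dA:ℝ) = 3)
      have hdBv : dB = 1 ∨ dB = 3 := by
        rcases hw ib with h | h <;> rw [hib, hBββ] at h
        · left; exact_mod_cast (by linarith : (dB:ℝ) = 1)
        · right; exact_mod_cast (by linarith : (dB:ℝ) = 3)
      have hdGv : dG = 1 ∨ dG = 3 := by
        rcases hw ic with h | h <;> rw [hic, hBγγ] at h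
        · left; exact_mod_cast (by linarith : (dG:ℝ) = 1)
        · right; exact_mod_cast (by linarith : (dG:ℝ) = 3)
      rcases hdAv with rfl | rfl <;> rcases hdBv with rfl | rfl <;> rcases hdGv with rfl | rfl
      · exact absurd ⟨rfl, rfl, rfl, h6w⟩ n3
      · (refine ⟨?_, by omega⟩
         have hple : p ≤ 0 := by
           by_contra hcp
           push_neg at hcp
           obtain ⟨k, hk⟩ := hchain 1 (by omega) (by omega)
           have h2 : P.root k = β - ((1:ℤ):ℝ) • γ := by rw [hk]; exact hconv 1
           have hkval := hval ((1:ℤ):ℝ)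
           rw [← h2] at hkval
           rcases hw k with h | h <;> rw [h] at hkval <;> push_cast at hkval <;>
             norm_num at hkval
         omega)
      · (refine ⟨?_, by omega⟩
         have hple : p ≤ 0 := by
           by_contra hcp
           push_neg at hcp
           obtain ⟨k, hk⟩ := hchain 1 (by omega) (by omega)
           have h2 : P.root k = β - ((1:ℤ):ℝ) • γ := by rw [hk]; exact hconv 1
           have hkval := hval ((1:ℤ):ℝ)
           rw [← h2] at hkval
           rcases hw k with h | h <;> rw [h] at hkval <;> push_cast at hkval <;>
             norm_num at hkval
         omega)
      · omega
      · exact absurd ⟨rfl, rfl, rfl⟩ n1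
      · omega
      · omega
      · (refine ⟨?_, by omega⟩
         have hple : p ≤ 0 := by
           by_contra hcp
           push_neg at hcp
           obtain ⟨k, hk⟩ := hchain 1 (by omega) (by omega)
           have h2 : P.root k = β - ((1:ℤ):ℝ) • γ := by rw [hk]; exact hconv 1
           have hkval := hval ((1:ℤ):ℝ)
           rw [← h2] at hkval
           rcases hw k with h | h <;> rw [h] at hkval <;> push_cast at hkval <;>
             norm_num at hkval
         omega)
end

section
/- Let R be a finite, reduced, crystallographic, irreducible root system with a Weyl-invariant positive-definite symmetric bilinear form normalized so that short roots have squared length 2, and let R⁺ be a positive system. For any β, γ ∈ R⁺ with β + γ ∈ R⁺, one has p_{β,γ} > β·γ (that is, p_{β,γ} − β·γ is a strictly positive integer). -/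
open Set

section helpers

variable {ι M N : Type*} [AddCommGroup M] [Module ℝ M] [AddCommGroup N] [Module ℝ N]
    [Finite ι] (P : RootPairing ι ℝ M N) (B : M →ₗ[ℝ] M →ₗ[ℝ] ℝ)

/-- pairing formula: pairing i j * |a_j|² = 2 (a_i · a_j) -/
lemma stmt7_pairB (hBsymm : ∀ x y : M, B x y = B y x)
    (hBinv : ∀ (i : ι) (x y : M), B (P.reflection i x) (P.reflection i y) = B x y) (i j : ι) :
    P.pairing i j * B (P.root j) (P.root j) = 2 * B (P.root i) (P.root j) := by
  have h := hBinv j (P.root i) (P.root j)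
  rw [RootPairing.reflection_apply_root, RootPairing.reflection_apply_self] at h
  simp only [map_sub, map_smul, map_neg, LinearMap.sub_apply, LinearMap.smul_apply,
    LinearMap.neg_apply, smul_eq_mul] at h
  have hs := hBsymm (P.root i) (P.root j)
  linarith [h]

/-- strict Cauchy-Schwarz -/
lemma stmt7_cs (hBsymm : ∀ x y : M, B x y = B y x)
    (hBpos : ∀ x : M, x ≠ 0 → 0 < B x x) (x y : M) (hy : y ≠ 0)
    (hxy : ∀ t : ℝ, x ≠ t • y) : (B x y)^2 < B x x * B y y := by
  have hyy := hBpos y hy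
  set t : ℝ := B x y / B y y with ht
  have hv : x - t • y ≠ 0 := by
    intro h
    exact hxy t (by rw [sub_eq_zero] at h; exact h)
  have h := hBpos _ hv
  simp only [map_sub, map_smul, LinearMap.sub_apply, LinearMap.smul_apply, smul_eq_mul] at h
  have htm : t * B y y = B x y := div_mul_cancel₀ _ (ne_of_gt hyy)
  have hs := hBsymm x y
  have h0 : (B x) y - t * (B y) y = 0 := by rw [← htm]; ring
  rw [h0, mul_zero, sub_zero] at h
  have key : (B x y)^2 = t * B x y * B y y := by rw [← htm]; ring
  rw [← hs] at h
  nlinarith [mul_pos h hyy, key]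

/-- proportional roots are equal or opposite -/
lemma stmt7_prop (hred : P.IsReduced) (i j : ι) (t : ℝ) (h : P.root i = t • P.root j) :
    P.root i = P.root j ∨ P.root i = - P.root j := by
  haveI := hred
  refine RootPairing.IsReduced.eq_or_eq_neg (P := P) i j (fun hli => ?_)
  have := (linearIndependent_fin2.mp hli).2 t
  simp only [Matrix.cons_val_one, Matrix.head_cons, Matrix.cons_val_zero] at this
  exact this h.symm

lemma stmt7_crys (hcrys : P.IsCrystallographic) (i j : ι) : ∃ z : ℤ, (z : ℝ) = P.pairing i j := by
  haveI := hcrys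
  obtain ⟨s, hs⟩ := RootPairing.exists_value (P := P) (S := ℤ) i j
  exact ⟨s, by rw [← hs]; simp⟩

end helpers

section glob
variable {ι M N : Type*} [AddCommGroup M] [Module ℝ M] [AddCommGroup N] [Module ℝ N]
    [Finite ι] (P : RootPairing ι ℝ M N) (B : M →ₗ[ℝ] M →ₗ[ℝ] ℝ)

/-- every root is non-orthogonal to some short root -/
lemma stmt7_short (hBsymm : ∀ x y : M, B x y = B y x)
    (hBpos : ∀ x : M, x ≠ 0 → 0 < B x x)
    (hBinv : ∀ (i : ι) (x y : M), B (P.reflection i x) (P.reflection i y) = B x y)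
    (hshort : ∃ i : ι, B (P.root i) (P.root i) = 2)
    (hirred : ∀ s : Set ι, s.Nonempty → sᶜ.Nonempty →
      ∃ i ∈ s, ∃ j ∈ sᶜ, B (P.root i) (P.root j) ≠ 0) (k : ι) :
    ∃ i, B (P.root i) (P.root i) = 2 ∧ B (P.root i) (P.root k) ≠ 0 := by
  by_contra hcon
  push_neg at hcon
  set S : Set M := {x | ∃ i, B (P.root i) (P.root i) = 2 ∧ P.root i = x} with hS
  set V : Submodule ℝ M := Submodule.span ℝ S with hV
  have horth : ∀ y : M, (∀ i, B (P.root i) (P.root i) = 2 → B (P.root i) y = 0) →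
      ∀ x ∈ V, B x y = 0 := by
    intro y hy x hx
    induction hx using Submodule.span_induction with
    | mem z hz => obtain ⟨i, hi2, rfl⟩ := hz; exact hy i hi2
    | zero => simp
    | add a b _ _ ha hb => simp [ha, hb]
    | smul r a _ ha => simp [ha]
  have hdich : ∀ j, P.root j ∈ V ∨ ∀ x ∈ V, B x (P.root j) = 0 := by
    intro j
    by_cases hj : ∀ i, B (P.root i) (P.root i) = 2 → B (P.root i) (P.root j) = 0
    · exact Or.inr (horth _ hj)
    · left
      push_neg at hj
      obtain ⟨i, hi2, hij⟩ := hj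
      have hpf := stmt7_pairB P B hBsymm hBinv i j
      have hjj : (0:ℝ) < B (P.root j) (P.root j) := hBpos _ (P.ne_zero j)
      have hp0 : P.pairing i j ≠ 0 := by
        intro h0; rw [h0, zero_mul] at hpf; exact hij (by linarith)
      have hrj : P.root j = (P.pairing i j)⁻¹ • (P.root i - P.root (P.reflectionPerm j i)) := by
        rw [P.root_reflectionPerm j i, RootPairing.reflection_apply_root]
        rw [sub_sub_cancel, smul_smul, inv_mul_cancel₀ hp0, one_smul]
      rw [hrj]
      refine V.smul_mem _ (V.sub_mem (Submodule.subset_span ⟨i, hi2, rfl⟩)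
        (Submodule.subset_span ⟨P.reflectionPerm j i, ?_, rfl⟩))
      rw [P.root_reflectionPerm j i, hBinv j]
      exact hi2
  have hkV : P.root k ∉ V := by
    intro hk
    have h0 : B (P.root k) (P.root k) = 0 := by
      refine horth (P.root k) (fun i hi => hcon i hi) _ hk
    exact absurd h0 (ne_of_gt (hBpos _ (P.ne_zero k)))
  obtain ⟨i₀, hi₀⟩ := hshort
  obtain ⟨i, hi, j, hj, hBij⟩ := hirred {j | P.root j ∈ V}
    ⟨i₀, Submodule.subset_span ⟨i₀, hi₀, rfl⟩⟩ ⟨k, hkV⟩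
  rcases hdich j with hc | hc
  · exact hj hc
  · exact hBij (hc _ hi)

end glob

lemma stmt7_int_pm (m : ℤ) (h0 : m ≠ 0) (h1 : m^2 ≤ 1) : m = 1 ∨ m = -1 := by
  have h3 : -1 ≤ m := by nlinarith [sq_nonneg (m+1)]
  have h4 : m ≤ 1 := by nlinarith [sq_nonneg (m-1)]
  omega

section key
variable {ι M N : Type*} [AddCommGroup M] [Module ℝ M] [AddCommGroup N] [Module ℝ N]
    [Finite ι] (P : RootPairing ι ℝ M N) (B : M →ₗ[ℝ] M →ₗ[ℝ] ℝ)

lemma stmt7_key (hcrys : P.IsCrystallographic) (hred : P.IsReduced)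
    (hBsymm : ∀ x y : M, B x y = B y x)
    (hBpos : ∀ x : M, x ≠ 0 → 0 < B x x)
    (hBinv : ∀ (i : ι) (x y : M), B (P.reflection i x) (P.reflection i y) = B x y)
    (hnorm : ∀ i : ι, 2 ≤ B (P.root i) (P.root i))
    (hshort : ∃ i : ι, B (P.root i) (P.root i) = 2)
    (hirred : ∀ s : Set ι, s.Nonempty → sᶜ.Nonempty →
      ∃ i ∈ s, ∃ j ∈ sᶜ, B (P.root i) (P.root j) ≠ 0)
    (β γ : M) (ib ig iδ : ι)
    (hib : P.root ib = β) (hig : P.root ig = γ) (hiδ : P.root iδ = β + γ)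
    (c : ℤ) (hc : (c:ℝ) = P.pairing ib ig) (hc1 : 0 < c)
    (hγ0 : γ ≠ 0) (hβ0 : β ≠ 0) (hδ0 : β + γ ≠ 0)
    (hG : (0:ℝ) < B γ γ) (hG2 : (2:ℝ) ≤ B γ γ)
    (hβγ : (c:ℝ) * B γ γ = 2 * B β γ)
    (hBδγ : B (β+γ) γ = B β γ + B γ γ)
    (hpid : P.pairing iδ ig = (c:ℝ) + 2)
    (hγkey : ∀ a b : ℝ, a ≠ b → a • γ ≠ b • γ) :
    c = 1 ∧ B γ γ = 2 := by
    have hc1' : (1:ℝ) ≤ (c:ℝ) := by exact_mod_cast hc1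
    have hδind : ∀ t : ℝ, (β+γ) ≠ t • γ := by
      intro t ht
      rcases stmt7_prop P hred iδ ig t (by rw [hiδ, hig]; exact ht) with h1 | h1 <;>
        rw [hiδ, hig] at h1
      · exact hβ0 (by rwa [add_eq_right] at h1)
      · have hb : β = (-2:ℝ) • γ := by rw [eq_sub_of_add_eq h1]; module
        rcases stmt7_prop P hred ib ig (-2) (by rw [hib, hig]; exact hb) with h4 | h4 <;>
          rw [hib, hig] at h4
        · exact hγkey 1 (-2) (by norm_num) (by rw [one_smul]; exact h4.symm.trans hb)
        · exact hγkey (-1) (-2) (by norm_num) (by rw [neg_one_smul]; exact h4.symm.trans hb)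
    have hδγCS : (B (β+γ) γ)^2 < B (β+γ) (β+γ) * B γ γ :=
      stmt7_cs B hBsymm hBpos _ _ hγ0 hδind
    have hD : (0:ℝ) < B (β+γ) (β+γ) := hBpos _ hδ0
    obtain ⟨e', he'⟩ := stmt7_crys P hcrys ig iδ
    have he'D : (e':ℝ) * B (β+γ) (β+γ) = 2 * B γ (β+γ) := by
      have h := stmt7_pairB P B hBsymm hBinv ig iδ
      rw [hig, hiδ] at h; rw [he']; exact h
    have hγδ : B γ (β+γ) = B β γ + B γ γ := by rw [hBsymm]; exact hBδγ
    have hBβγpos : (0:ℝ) < B β γ := by nlinarith [hβγ, hG]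
    have he'pos : 0 < e' := by
      have : (0:ℝ) < (e':ℝ) := by nlinarith [he'D, hD, hγδ, hG]
      exact_mod_cast this
    have hδγ2 : ((c:ℝ)+2) * B γ γ = 2 * B (β+γ) γ := by
      rw [← hpid]
      have h := stmt7_pairB P B hBsymm hBinv iδ ig
      rw [hiδ, hig] at h; exact h
    have hsymδγ : B (β+γ) γ = B γ (β+γ) := hBsymm _ _
    have hprod : ((c:ℝ)+2) * (e':ℝ) < 4 := by
      nlinarith [hδγ2, he'D, hδγCS, hD, hG, hsymδγ]
    have hprodZ : (c+2) * e' < 4 := by exact_mod_cast hprod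
    have h3 : c + 2 ≤ (c+2) * e' := le_mul_of_one_le_right (by omega) (by omega)
    have hc2 : c = 1 := by omega
    have he1 : e' = 1 := by
      have h4 : (1+2) * e' < 4 := by rw [← hc2]; exact hprodZ
      omega
    have hcR : (c:ℝ) = 1 := by exact_mod_cast hc2
    have he'R : (e':ℝ) = 1 := by exact_mod_cast he1
    have hDG : B (β+γ) (β+γ) = 3 * B γ γ := by
      rw [he'R] at he'D; rw [hcR] at hβγ; linarith [hγδ]
    -- global bound : some short root not orthogonal to β+γ
    obtain ⟨is, his2, hisδ⟩ := stmt7_short P B hBsymm hBpos hBinv hshort hirred iδ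
    rw [hiδ] at hisδ
    obtain ⟨n, hn⟩ := stmt7_crys P hcrys iδ is
    have hnval : (n:ℝ) = B (β+γ) (P.root is) := by
      have h := stmt7_pairB P B hBsymm hBinv iδ is
      rw [hiδ, his2] at h; rw [hn]; linarith
    obtain ⟨m, hm⟩ := stmt7_crys P hcrys is iδ
    have hmD : (m:ℝ) * B (β+γ) (β+γ) = 2 * B (P.root is) (β+γ) := by
      have h := stmt7_pairB P B hBsymm hBinv is iδ
      rw [hiδ] at h; rw [hm]; exact h
    have hisind : ∀ t : ℝ, P.root is ≠ t • (β+γ) := by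
      intro t ht
      rcases stmt7_prop P hred is iδ t (by rw [hiδ]; exact ht) with h | h <;> rw [hiδ] at h
      · rw [h] at his2; linarith [hDG, hG2]
      · rw [h] at his2
        simp only [map_neg, LinearMap.neg_apply, neg_neg] at his2
        linarith [hDG, hG2]
    have hCS2 : (B (P.root is) (β+γ))^2 < 2 * B (β+γ) (β+γ) := by
      have h := stmt7_cs B hBsymm hBpos (P.root is) (β+γ) hδ0 hisind
      rw [his2] at h; linarith
    have hnsym : (n:ℝ) = B (P.root is) (β+γ) := by rw [hnval, hBsymm]
    have hn0 : n ≠ 0 := by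
      intro h; rw [h] at hnval; exact hisδ (by rw [← hBsymm]; exact hnval.symm ▸ (by norm_num))
    have hnD : (n:ℝ)^2 < 2 * B (β+γ) (β+γ) := by rw [hnsym]; exact hCS2
    have hsq : (m:ℝ)^2 * (B (β+γ) (β+γ))^2 = 4 * (B (P.root is) (β+γ))^2 := by
      linear_combination (((m:ℝ) * B (β+γ) (β+γ)) + 2 * B (P.root is) (β+γ)) * hmD
    have hm2R : (m:ℝ)^2 * B (β+γ) (β+γ) < 8 := by
      by_contra h8
      push_neg at h8
      have h9 : 8 * B (β+γ) (β+γ) ≤ (m:ℝ)^2 * B (β+γ) (β+γ) * B (β+γ) (β+γ) :=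
        mul_le_mul_of_nonneg_right h8 hD.le
      linarith [hsq, hCS2, h9]
    have hD6' : (6:ℝ) ≤ B (β+γ) (β+γ) := by linarith [hDG, hG2]
    have hm2lt : (m:ℝ)^2 < 2 := by
      by_contra h8
      push_neg at h8
      have h9 : (2:ℝ)*6 ≤ (m:ℝ)^2 * B (β+γ) (β+γ) :=
        mul_le_mul h8 hD6' (by norm_num) (by positivity)
      linarith [hm2R]
    have hm2Z : m^2 ≤ 1 := by
      have h5 : m^2 < 2 := by exact_mod_cast hm2lt
      linarith
    have hmne : m = 1 ∨ m = -1 := by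
      have hm0 : m ≠ 0 := by
        intro h; rw [h] at hmD
        simp only [Int.cast_zero, zero_mul] at hmD
        exact hisδ (by linarith)
      exact stmt7_int_pm m hm0 hm2Z
    have hD6 : B (β+γ) (β+γ) ≤ 6 := by
      rcases hmne with hm1 | hm1 <;> rw [hm1] at hmD <;> push_cast at hmD
      · have hDn : B (β+γ) (β+γ) = 2 * (n:ℝ) := by rw [hnsym]; linarith
        have hnlt : (n:ℝ) < 4 := by
          by_contra h8
          push_neg at h8
          have h9 : 4*(n:ℝ) ≤ (n:ℝ)*(n:ℝ) := mul_le_mul_of_nonneg_right h8 (by linarith)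
          linarith [hnD, hDn, h9]
        have hn3 : n ≤ 3 := by
          have : n < 4 := by exact_mod_cast hnlt
          omega
        have : (n:ℝ) ≤ 3 := by exact_mod_cast hn3
        linarith
      · have hDn : B (β+γ) (β+γ) = -2 * (n:ℝ) := by rw [hnsym]; linarith
        have hnlt : -4 < (n:ℝ) := by
          by_contra h8
          push_neg at h8
          have h9 : 4*(-(n:ℝ)) ≤ (-(n:ℝ))*(-(n:ℝ)) :=
            mul_le_mul_of_nonneg_right (by linarith) (by linarith)
          linarith [hnD, hDn, h9]
        have hn3 : -3 ≤ n := by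
          have : -4 < n := by exact_mod_cast hnlt
          omega
        have : (-3:ℝ) ≤ (n:ℝ) := by exact_mod_cast hn3
        linarith
    have hGe : B γ γ = 2 := by linarith [hDG, hG2, hD6]
    exact ⟨hc2, hGe⟩

end key

/-- Let `R` be a finite, reduced, crystallographic, irreducible root system
with a Weyl-invariant positive definite symmetric bilinear form `B` normalized so that
short roots have squared length `2`, and let `Rplus` be a positive system.  For positive
roots `β, γ` with `β + γ` again a positive root, one has `p_{β,γ} > β·γ`. -/
theorem stmt7 {ι M N : Type*} [AddCommGroup M] [Module ℝ M] [AddCommGroup N] [Module ℝ N]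
    [Finite ι] (P : RootPairing ι ℝ M N) [P.IsRootSystem]
    (hcrys : P.IsCrystallographic) (hred : P.IsReduced)
    (B : M →ₗ[ℝ] M →ₗ[ℝ] ℝ)
    (hBsymm : ∀ x y : M, B x y = B y x)
    (hBpos : ∀ x : M, x ≠ 0 → 0 < B x x)
    (hBinv : ∀ (i : ι) (x y : M), B (P.reflection i x) (P.reflection i y) = B x y)
    (hnorm : ∀ i : ι, 2 ≤ B (P.root i) (P.root i))
    (hshort : ∃ i : ι, B (P.root i) (P.root i) = 2)
    (hirred : ∀ s : Set ι, s.Nonempty → sᶜ.Nonempty →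
      ∃ i ∈ s, ∃ j ∈ sᶜ, B (P.root i) (P.root j) ≠ 0)
    (Rplus : Set M)
    (hpos : ∃ f : M →ₗ[ℝ] ℝ, Rplus = {x | x ∈ Set.range P.root ∧ 0 < f x})
    (β γ : M) (hβ : β ∈ Rplus) (hγ : γ ∈ Rplus) (hsum : β + γ ∈ Rplus)
    (p : ℤ) (hp : β - p • γ ∈ Set.range P.root)
    (hpmax : ∀ q : ℤ, β - q • γ ∈ Set.range P.root → q ≤ p)
    (bg : ℤ) (hbg : (bg : ℝ) = B β γ) :
    bg < p := by
  obtain ⟨f, hf⟩ := hpos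
  rw [hf] at hβ hγ hsum
  obtain ⟨ib, hib⟩ := hβ.1
  obtain ⟨ig, hig⟩ := hγ.1
  obtain ⟨iδ, hiδ⟩ := hsum.1
  have hγ0 : γ ≠ 0 := hig ▸ P.ne_zero ig
  have hβ0 : β ≠ 0 := hib ▸ P.ne_zero ib
  have hδ0 : β + γ ≠ 0 := hiδ ▸ P.ne_zero iδ
  have hG : (0:ℝ) < B γ γ := hBpos γ hγ0
  have hG2 : (2:ℝ) ≤ B γ γ := by rw [← hig]; exact hnorm ig
  obtain ⟨c, hc⟩ := stmt7_crys P hcrys ib ig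
  have hβγ : (c:ℝ) * B γ γ = 2 * B β γ := by
    have h := stmt7_pairB P B hBsymm hBinv ib ig
    rw [hib, hig] at h; rw [hc]; exact h
  have hBδγ : B (β+γ) γ = B β γ + B γ γ := by simp
  have hpid : P.pairing iδ ig = (c:ℝ) + 2 := by
    have h1 := stmt7_pairB P B hBsymm hBinv iδ ig
    rw [hiδ, hig] at h1
    have h2 : P.pairing iδ ig * B γ γ = ((c:ℝ)+2) * B γ γ := by
      linear_combination h1 + 2*hBδγ - hβγ
    exact mul_right_cancel₀ (ne_of_gt hG) h2
  have hmem : β - (c+1) • γ ∈ Set.range P.root := by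
    refine ⟨P.reflectionPerm ig iδ, ?_⟩
    rw [P.root_reflectionPerm, RootPairing.reflection_apply_root, hpid, hiδ, hig]
    rw [← Int.cast_smul_eq_zsmul ℝ]
    push_cast
    module
  have hcp : c + 1 ≤ p := hpmax _ hmem
  have hγkey : ∀ a b : ℝ, a ≠ b → a • γ ≠ b • γ := by
    intro a b hab h
    apply hγ0
    have h0 : (a - b) • γ = 0 := by rw [sub_smul, h, sub_self]
    rcases smul_eq_zero.mp h0 with h' | h'
    · exact absurd (sub_eq_zero.mp h') hab
    · exact h'
  suffices hbc : bg ≤ c by omega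
  rcases le_or_gt c 0 with hc0 | hc1
  · have hc0' : (c:ℝ) ≤ 0 := by exact_mod_cast hc0
    have : (bg:ℝ) ≤ (c:ℝ) := by rw [hbg]; nlinarith [hβγ, hG2, hc0']
    exact_mod_cast this
  · -- c ≥ 1
    obtain ⟨hc2, hGe⟩ := stmt7_key P B hcrys hred hBsymm hBpos hBinv hnorm hshort hirred
      β γ ib ig iδ hib hig hiδ c hc hc1 hγ0 hβ0 hδ0 hG hG2 hβγ hBδγ hpid hγkey
    have hcR : (c:ℝ) = 1 := by exact_mod_cast hc2
    have hbg1 : (bg:ℝ) = 1 := by rw [hbg]; rw [hcR, hGe] at hβγ; linarith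
    have : bg = 1 := by exact_mod_cast hbg1
    omega
end

section
/- Fix a finite set I and a symmetric function a : I × I → ℤ. For all words 𝒊 of length m and 𝒋 of length n over I, the quantum shuffle product in the free ℤ[q,q⁻¹]-module on words satisfies bar(𝒊 ∘ 𝒋) = q^{|𝒊|·|𝒋|} · (𝒋 ∘ 𝒊), where |𝒊|·|𝒋| := Σ_{s=1}^{m} Σ_{t=1}^{n} a(i_s, j_t). -/
open LaurentPolynomial

/-- The action of a permutation `w` on a word `k`: the `t`-th letter of `w(k)` is the
`w⁻¹(t)`-th letter of `k`. -/
def permWord {I : Type*} (k : List I) (w : Equiv.Perm (Fin k.length)) : List I :=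
  List.ofFn fun t => k.get (w⁻¹ t)

/-- `deg(w; k) := -∑_{s < t, w(s) > w(t)} a (k_s) (k_t)`. -/
noncomputable def shuffleDeg {I : Type*} (a : I → I → ℤ) (k : List I)
    (w : Equiv.Perm (Fin k.length)) : ℤ :=
  -∑ st ∈ Finset.univ.filter
      (fun st : Fin k.length × Fin k.length => st.1 < st.2 ∧ w st.2 < w st.1),
    a (k.get st.1) (k.get st.2)

/-- `w` is an `(m, N-m)`-shuffle: it is increasing on `{0, …, m-1}` and on `{m, …, N-1}`. -/
def IsShuffle (m : ℕ) {N : ℕ} (w : Equiv.Perm (Fin N)) : Prop :=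
  (∀ s t : Fin N, s < t → (t : ℕ) < m → w s < w t) ∧
  (∀ s t : Fin N, s < t → m ≤ (s : ℕ) → w s < w t)

open scoped Classical in
/-- The quantum shuffle product of the words `il` and `jl`, as an element of the free
`ℤ[q,q⁻¹]`-module on the set of words:
`il ∘ jl = ∑_w q^{deg(w; il jl)} w(il jl)`, summed over all `(m,n)`-shuffles `w`. -/
noncomputable def qshuffle {I : Type*} (a : I → I → ℤ) (il jl : List I) :
    (List I) →₀ LaurentPolynomial ℤ :=
  ∑ w : Equiv.Perm (Fin (il ++ jl).length),
    if IsShuffle il.length w then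
      Finsupp.single (permWord (il ++ jl) w) (T (shuffleDeg a (il ++ jl) w))
    else 0

section Aux

variable {I : Type*}

/-- The block rotation: move the last `m` positions to the front. -/
def rotFin (m n : ℕ) : Fin (n + m) ≃ Fin (m + n) where
  toFun u := ⟨if (u : ℕ) < n then u + m else u - n, by have := u.isLt; split <;> omega⟩
  invFun u := ⟨if (u : ℕ) < m then u + n else u - m, by have := u.isLt; split <;> omega⟩
  left_inv u := by have := u.isLt; ext; dsimp only; split_ifs <;> omega
  right_inv u := by have := u.isLt; ext; dsimp only; split_ifs <;> omega

lemma lenComm (il jl : List I) : (il ++ jl).length = (jl ++ il).length := by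
  simp [Nat.add_comm]

/-- The position correspondence between `jl ++ il` and `il ++ jl`. -/
def tauEquiv (il jl : List I) : Fin (jl ++ il).length ≃ Fin (il ++ jl).length :=
  (finCongr (List.length_append (as := jl) (bs := il))).trans
    ((rotFin il.length jl.length).trans (finCongr (List.length_append (as := il) (bs := jl)).symm))

lemma tauEquiv_val (il jl : List I) (u : Fin (jl ++ il).length) :
    ((tauEquiv il jl u : Fin (il ++ jl).length) : ℕ) =
      if (u : ℕ) < jl.length then u + il.length else u - jl.length := rfl

lemma tauEquiv_symm_val (il jl : List I) (u : Fin (il ++ jl).length) :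
    (((tauEquiv il jl).symm u : Fin (jl ++ il).length) : ℕ) =
      if (u : ℕ) < il.length then u + jl.length else u - il.length := rfl

/-- The correspondence `w ↦ w ∘ τ` between permutations. -/
def PhiPerm (il jl : List I) :
    Equiv.Perm (Fin (il ++ jl).length) ≃ Equiv.Perm (Fin (jl ++ il).length) where
  toFun w := ((tauEquiv il jl).trans w).trans (finCongr (lenComm il jl))
  invFun v := ((tauEquiv il jl).symm.trans v).trans (finCongr (lenComm il jl)).symm
  left_inv w := by
    ext x
    simp only [Equiv.trans_apply, Equiv.apply_symm_apply, Equiv.symm_apply_apply]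
  right_inv v := by
    ext x
    simp only [Equiv.trans_apply, Equiv.apply_symm_apply, Equiv.symm_apply_apply]

lemma PhiPerm_val (il jl : List I) (w : Equiv.Perm (Fin (il ++ jl).length))
    (u : Fin (jl ++ il).length) :
    ((PhiPerm il jl w u : Fin (jl ++ il).length) : ℕ) = (w (tauEquiv il jl u) : ℕ) := by
  rfl

lemma PhiPerm_lt (il jl : List I) (w : Equiv.Perm (Fin (il ++ jl).length))
    (u u' : Fin (jl ++ il).length) :
    PhiPerm il jl w u < PhiPerm il jl w u' ↔ w (tauEquiv il jl u) < w (tauEquiv il jl u') := by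
  simp only [Fin.lt_def, PhiPerm_val]

lemma PhiPerm_inv_apply (il jl : List I) (w : Equiv.Perm (Fin (il ++ jl).length))
    (t : Fin (jl ++ il).length) :
    (PhiPerm il jl w)⁻¹ t
      = (tauEquiv il jl).symm (w⁻¹ (finCongr (lenComm il jl).symm t)) := by
  rw [Equiv.Perm.inv_def, Equiv.symm_apply_eq]
  simp [PhiPerm, Equiv.Perm.inv_def]

lemma get_tau (il jl : List I) (u : Fin (jl ++ il).length) :
    (il ++ jl).get (tauEquiv il jl u) = (jl ++ il).get u := by
  rcases u with ⟨uv, hu⟩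
  have hu' : uv < jl.length + il.length := by simpa using hu
  simp only [List.get_eq_getElem]
  by_cases h : uv < jl.length
  · have hv : ((tauEquiv il jl ⟨uv, hu⟩ : Fin (il ++ jl).length) : ℕ) = uv + il.length := by
      rw [tauEquiv_val]; simp [h]
    simp only [hv]
    rw [List.getElem_append_right (by omega), List.getElem_append_left h]
    congr 1
    omega
  · have hv : ((tauEquiv il jl ⟨uv, hu⟩ : Fin (il ++ jl).length) : ℕ) = uv - jl.length := by
      rw [tauEquiv_val]; simp [h]
    simp only [hv]
    rw [List.getElem_append_left (by omega), List.getElem_append_right (by omega)]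

lemma permWord_phi (il jl : List I) (w : Equiv.Perm (Fin (il ++ jl).length)) :
    permWord (jl ++ il) (PhiPerm il jl w) = permWord (il ++ jl) w := by
  unfold permWord
  apply List.ext_getElem
  · simp [Nat.add_comm]
  · intro i h1 h2
    simp only [List.getElem_ofFn]
    rw [PhiPerm_inv_apply]
    have e := get_tau il jl ((tauEquiv il jl).symm
      (w⁻¹ (finCongr (lenComm il jl).symm ⟨i, by simpa using h1⟩)))
    rw [Equiv.apply_symm_apply] at e
    rw [← e]
    rfl

lemma isShuffle_phi (il jl : List I) (w : Equiv.Perm (Fin (il ++ jl).length)) :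
    IsShuffle il.length w ↔ IsShuffle jl.length (PhiPerm il jl w) := by
  have hlen1 : (il ++ jl).length = il.length + jl.length := by simp
  have hlen2 : (jl ++ il).length = jl.length + il.length := by simp
  constructor
  · rintro ⟨h1, h2⟩
    constructor
    · intro s t hst htn
      rw [PhiPerm_lt]
      have hsv := tauEquiv_val il jl s
      have htv := tauEquiv_val il jl t
      have hst' : (s : ℕ) < (t : ℕ) := hst
      apply h2
      · rw [Fin.lt_def, hsv, htv]
        simp only [if_pos (by omega : (s : ℕ) < jl.length), if_pos htn]
        omega
      · rw [hsv, if_pos (by omega : (s : ℕ) < jl.length)]; omega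
    · intro s t hst hns
      rw [PhiPerm_lt]
      have hsv := tauEquiv_val il jl s
      have htv := tauEquiv_val il jl t
      have hst' : (s : ℕ) < (t : ℕ) := hst
      have hs := s.isLt
      have ht := t.isLt
      apply h1
      · rw [Fin.lt_def, hsv, htv]
        simp only [if_neg (by omega : ¬ (s : ℕ) < jl.length),
          if_neg (by omega : ¬ (t : ℕ) < jl.length)]
        omega
      · rw [htv, if_neg (by omega : ¬ (t : ℕ) < jl.length)]
        omega
  · rintro ⟨h1, h2⟩
    have key : ∀ u u' : Fin (il ++ jl).length, w u < w u' ↔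
        PhiPerm il jl w ((tauEquiv il jl).symm u) < PhiPerm il jl w ((tauEquiv il jl).symm u') := by
      intro u u'
      rw [PhiPerm_lt, Equiv.apply_symm_apply, Equiv.apply_symm_apply]
    constructor
    · intro s t hst htm
      rw [key]
      have hsv := tauEquiv_symm_val il jl s
      have htv := tauEquiv_symm_val il jl t
      have hst' : (s : ℕ) < (t : ℕ) := hst
      apply h2
      · rw [Fin.lt_def, hsv, htv]
        simp only [if_pos (by omega : (s : ℕ) < il.length), if_pos htm]
        omega
      · rw [hsv, if_pos (by omega : (s : ℕ) < il.length)]; omega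
    · intro s t hst hms
      rw [key]
      have hsv := tauEquiv_symm_val il jl s
      have htv := tauEquiv_symm_val il jl t
      have hst' : (s : ℕ) < (t : ℕ) := hst
      have hs := s.isLt
      have ht := t.isLt
      apply h1
      · rw [Fin.lt_def, hsv, htv]
        simp only [if_neg (by omega : ¬ (s : ℕ) < il.length),
          if_neg (by omega : ¬ (t : ℕ) < il.length)]
        omega
      · rw [htv, if_neg (by omega : ¬ (t : ℕ) < il.length)]
        omega

/-- Inclusion of a position of `il` into `il ++ jl`. -/
def inlF (il jl : List I) (s : Fin il.length) : Fin (il ++ jl).length :=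
  ⟨s, by have := s.isLt; simp only [List.length_append]; omega⟩

/-- Inclusion of a position of `jl` into `il ++ jl`. -/
def inrF (il jl : List I) (t : Fin jl.length) : Fin (il ++ jl).length :=
  ⟨il.length + t, by have := t.isLt; simp only [List.length_append]; omega⟩

lemma get_inlF (il jl : List I) (s : Fin il.length) :
    (il ++ jl).get (inlF il jl s) = il.get s := by
  simp only [List.get_eq_getElem, inlF]
  exact List.getElem_append_left s.isLt

lemma get_inrF (il jl : List I) (t : Fin jl.length) :
    (il ++ jl).get (inrF il jl t) = jl.get t := by
  simp only [List.get_eq_getElem, inrF]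
  rw [List.getElem_append_right (by omega)]
  congr 1
  omega

lemma get_left (il jl : List I) (u : Fin (il ++ jl).length) (h : (u : ℕ) < il.length) :
    (il ++ jl).get u = il.get ⟨u, h⟩ := by
  simp only [List.get_eq_getElem]
  exact List.getElem_append_left h

lemma get_right (il jl : List I) (u : Fin (il ++ jl).length) (h : il.length ≤ (u : ℕ)) :
    (il ++ jl).get u = jl.get ⟨(u : ℕ) - il.length,
      by have := u.isLt; simp only [List.length_append] at this; omega⟩ := by
  simp only [List.get_eq_getElem]
  exact List.getElem_append_right h

lemma mixed_of_inv {il jl : List I} {w : Equiv.Perm (Fin (il ++ jl).length)}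
    (hw : IsShuffle il.length w) {s t : Fin (il ++ jl).length}
    (hst : s < t) (hts : w t < w s) : (s : ℕ) < il.length ∧ il.length ≤ (t : ℕ) := by
  constructor
  · by_contra h
    exact absurd hts (asymm (hw.2 s t hst (not_lt.1 h)))
  · by_contra h
    exact absurd hts (asymm (hw.1 s t hst (not_le.1 h)))

lemma sum_inv_eq (a : I → I → ℤ) (il jl : List I) (w : Equiv.Perm (Fin (il ++ jl).length))
    (hw : IsShuffle il.length w) :
    ∑ st ∈ Finset.univ.filter
        (fun st : Fin (il ++ jl).length × Fin (il ++ jl).length =>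
          st.1 < st.2 ∧ w st.2 < w st.1),
      a ((il ++ jl).get st.1) ((il ++ jl).get st.2)
    = ∑ p ∈ Finset.univ.filter
        (fun p : Fin il.length × Fin jl.length => w (inrF il jl p.2) < w (inlF il jl p.1)),
      a (il.get p.1) (jl.get p.2) := by
  have hlen : (il ++ jl).length = il.length + jl.length := by simp
  refine Finset.sum_bij'
    (i := fun st hst =>
      ((⟨(st.1 : ℕ), by
          have h := (Finset.mem_filter.1 hst).2
          exact (mixed_of_inv hw h.1 h.2).1⟩ : Fin il.length),
       (⟨(st.2 : ℕ) - il.length, by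
          have h := (Finset.mem_filter.1 hst).2
          have h2 := (mixed_of_inv hw h.1 h.2).2
          have := st.2.isLt
          omega⟩ : Fin jl.length)))
    (j := fun p _ => (inlF il jl p.1, inrF il jl p.2))
    ?_ ?_ ?_ ?_ ?_
  · intro st hst
    have h := (Finset.mem_filter.1 hst).2
    have hm := mixed_of_inv hw h.1 h.2
    simp only [Finset.mem_filter, Finset.mem_univ, true_and]
    have e1 : inlF il jl ⟨(st.1 : ℕ), hm.1⟩ = st.1 := Fin.ext rfl
    have e2 : inrF il jl ⟨(st.2 : ℕ) - il.length, by have := st.2.isLt; omega⟩ = st.2 :=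
      Fin.ext (by simp [inrF]; omega)
    rw [e1, e2]
    exact h.2
  · intro p hp
    have hp' := (Finset.mem_filter.1 hp).2
    simp only [Finset.mem_filter, Finset.mem_univ, true_and]
    refine ⟨?_, hp'⟩
    rw [Fin.lt_def]
    simp only [inlF, inrF]
    have := p.1.isLt
    omega
  · intro st hst
    have h := (Finset.mem_filter.1 hst).2
    have hm := mixed_of_inv hw h.1 h.2
    ext
    · rfl
    · simp only [inrF]
      have := st.2.isLt
      omega
  · intro p hp
    ext
    · rfl
    · simp only [inrF]
      omega
  · intro st hst
    have h := (Finset.mem_filter.1 hst).2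
    have hm := mixed_of_inv hw h.1 h.2
    exact congrArg₂ a (get_left il jl st.1 hm.1) (get_right il jl st.2 hm.2)

lemma tau_inr (il jl : List I) (s : Fin il.length) :
    tauEquiv il jl (inrF jl il s) = inlF il jl s := by
  apply Fin.ext
  rw [tauEquiv_val]
  have := s.isLt
  split <;> simp only [inrF, inlF] at * <;> omega

lemma tau_inl (il jl : List I) (t : Fin jl.length) :
    tauEquiv il jl (inlF jl il t) = inrF il jl t := by
  apply Fin.ext
  rw [tauEquiv_val]
  have := t.isLt
  split <;> simp only [inrF, inlF] at * <;> omega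

lemma deg_sum (a : I → I → ℤ) (hsym : ∀ i j, a i j = a j i) (il jl : List I)
    (w : Equiv.Perm (Fin (il ++ jl).length)) (hw : IsShuffle il.length w) :
    shuffleDeg a (il ++ jl) w + shuffleDeg a (jl ++ il) (PhiPerm il jl w)
      = -(∑ s : Fin il.length, ∑ t : Fin jl.length, a (il.get s) (jl.get t)) := by
  have hv : IsShuffle jl.length (PhiPerm il jl w) := (isShuffle_phi il jl w).1 hw
  unfold shuffleDeg
  rw [sum_inv_eq a il jl w hw, sum_inv_eq a jl il _ hv]
  -- reindex the second sum by swapping the product factors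
  have hswap :
      ∑ p ∈ Finset.univ.filter
          (fun p : Fin jl.length × Fin il.length =>
            PhiPerm il jl w (inrF jl il p.2) < PhiPerm il jl w (inlF jl il p.1)),
        a (jl.get p.1) (il.get p.2)
      = ∑ p ∈ Finset.univ.filter
          (fun p : Fin il.length × Fin jl.length =>
            w (inlF il jl p.1) < w (inrF il jl p.2)),
        a (il.get p.1) (jl.get p.2) := by
    refine Finset.sum_nbij' (i := fun p => (p.2, p.1)) (j := fun p => (p.2, p.1))
      ?_ ?_ (fun _ _ => rfl) (fun _ _ => rfl) ?_
    · intro p hp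
      have hp' := (Finset.mem_filter.1 hp).2
      simp only [Finset.mem_filter, Finset.mem_univ, true_and]
      rw [PhiPerm_lt, tau_inr, tau_inl] at hp'
      exact hp'
    · intro p hp
      have hp' := (Finset.mem_filter.1 hp).2
      simp only [Finset.mem_filter, Finset.mem_univ, true_and]
      rw [PhiPerm_lt, tau_inr, tau_inl]
      exact hp'
    · intro p hp
      exact hsym _ _
  rw [hswap]
  have hne : ∀ p : Fin il.length × Fin jl.length,
      w (inrF il jl p.2) ≠ w (inlF il jl p.1) := by
    intro p
    have : inrF il jl p.2 ≠ inlF il jl p.1 := by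
      intro h
      have := congrArg Fin.val h
      simp only [inrF, inlF] at this
      have := p.1.isLt
      omega
    exact fun h => this (w.injective h)
  have hfil : Finset.univ.filter
      (fun p : Fin il.length × Fin jl.length => w (inlF il jl p.1) < w (inrF il jl p.2))
      = Finset.univ.filter
      (fun p : Fin il.length × Fin jl.length => ¬ (w (inrF il jl p.2) < w (inlF il jl p.1))) := by
    apply Finset.filter_congr
    intro p _
    constructor
    · intro h; exact asymm h
    · intro h
      exact lt_of_le_of_ne (not_lt.1 h) ((hne p).symm)
  rw [hfil]
  have hsplit := Finset.sum_filter_add_sum_filter_not Finset.univ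
      (fun p : Fin il.length × Fin jl.length => w (inrF il jl p.2) < w (inlF il jl p.1))
      (fun p => a (il.get p.1) (jl.get p.2))
  have htot : ∑ p : Fin il.length × Fin jl.length, a (il.get p.1) (jl.get p.2)
      = ∑ s : Fin il.length, ∑ t : Fin jl.length, a (il.get s) (jl.get t) :=
    Fintype.sum_prod_type _
  linarith [hsplit, htot]

end Aux

/-- For a (finite) alphabet `I` and a symmetric `a : I → I → ℤ`, the
quantum shuffle product satisfies `bar (il ∘ jl) = q^{|il|·|jl|} (jl ∘ il)`, where the bar
involution fixes words and sends `q^n` to `q^{-n}`, and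
`|il|·|jl| = ∑_{s,t} a (il_s) (jl_t)`. -/
theorem stmt8 {I : Type*} [Fintype I] (a : I → I → ℤ) (hsym : ∀ i j, a i j = a j i)
    (il jl : List I) :
    Finsupp.mapRange (fun p : LaurentPolynomial ℤ => LaurentPolynomial.invert p)
        (by simp) (qshuffle a il jl) =
      (T (∑ s : Fin il.length, ∑ t : Fin jl.length, a (il.get s) (jl.get t)) : LaurentPolynomial ℤ) •
        qshuffle a jl il := by
  classical
  unfold qshuffle
  rw [Finset.smul_sum]
  have hmr : ∀ (s : Finset (Equiv.Perm (Fin (il ++ jl).length)))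
      (g : Equiv.Perm (Fin (il ++ jl).length) → (List I) →₀ LaurentPolynomial ℤ),
      Finsupp.mapRange (fun p : LaurentPolynomial ℤ => LaurentPolynomial.invert p)
          (by simp) (∑ w ∈ s, g w)
        = ∑ w ∈ s, Finsupp.mapRange (fun p : LaurentPolynomial ℤ => LaurentPolynomial.invert p)
          (by simp) (g w) := fun s g =>
    Finsupp.mapRange_finset_sum (LaurentPolynomial.invert (R := ℤ)) s g
  rw [hmr]
  refine Fintype.sum_equiv (PhiPerm il jl) _ _ fun w => ?_
  by_cases hw : IsShuffle il.length w
  · rw [if_pos hw, if_pos ((isShuffle_phi il jl w).1 hw)]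
    rw [Finsupp.mapRange_single, Finsupp.smul_single, invert_T, permWord_phi, smul_eq_mul,
      ← T_add]
    have h := deg_sum a hsym il jl w hw
    congr 1
    congr 1
    omega
  · rw [if_neg hw, if_neg (fun h => hw ((isShuffle_phi il jl w).2 h))]
    simp
end
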